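/- arXiv:1607.02753 — 5 statements merged into one kernel-verified Lean document; each statement's English description precedes it below -/
import Mathlib

section
/- Let n ≥ 1. Let f, g : ℝⁿ → [0,∞) be convex functions that are C² on a neighborhood of 0 with f(0) = 0 = g(0); for x ∈ ℝⁿ let σ_x(y) = f(y) + g(x − y), and assume Hess σ₀|_{y=0} is positive definite. Then there exist a neighborhood U of 0 in ℝⁿ and a C¹ map μ : U → ℝⁿ with μ(0) = 0 such that for every x ∈ U and every y ∈ ℝⁿ with y ≠ μ(x) one has σ_x(y) > σ_x(μ(x)) (i.e., μ(x) is the unique global minimizer of σ_x). -/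
open Set Filter Topology

section aux
variable {E : Type*} [NormedAddCommGroup E] [NormedSpace ℝ E]

/-- A critical point of a convex function is a global minimum. -/
lemma aux_convex_min {φ : E → ℝ} (hc : ConvexOn ℝ Set.univ φ) {m : E}
    (hd : HasFDerivAt φ (0 : E →L[ℝ] ℝ) m) (y : E) : φ m ≤ φ y := by
  set h : ℝ → ℝ := fun t => φ (m + t • (y - m)) with hh
  have hline : HasDerivAt (fun t : ℝ => m + t • (y - m)) (y - m) 0 :=
    by simpa using ((hasDerivAt_id (0:ℝ)).smul_const (y - m)).const_add m
  have hd' : HasFDerivAt φ (0 : E →L[ℝ] ℝ) ((fun t : ℝ => m + t • (y - m)) 0) := by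
    simpa using hd
  have hder : HasDerivAt h 0 0 := by
    have h1 := hd'.comp_hasDerivAt 0 hline
    simp only [ContinuousLinearMap.zero_apply] at h1
    exact h1
  have htend : Tendsto (slope h 0) (𝓝[>] 0) (𝓝 0) :=
    (hasDerivAt_iff_tendsto_slope.1 hder).mono_left
      (nhdsWithin_mono _ (fun t ht => ne_of_gt ht))
  have hbound : ∀ᶠ t in 𝓝[>] (0:ℝ), slope h 0 t ≤ φ y - φ m := by
    filter_upwards [Ioc_mem_nhdsGT_of_mem (left_mem_Ico.2 one_pos)] with t ht
    have hconv := hc.2 (mem_univ m) (mem_univ y) (by linarith [ht.2] : (0:ℝ) ≤ 1 - t)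
      (le_of_lt ht.1) (by ring)
    have hpt : (1 - t) • m + t • y = m + t • (y - m) := by module
    rw [hpt] at hconv
    have h0 : h 0 = φ m := by simp [hh]
    rw [slope_def_field]
    rw [h0]
    have : h t ≤ (1 - t) * φ m + t * φ y := by simpa using hconv
    rw [sub_zero, div_le_iff₀ ht.1] ; nlinarith
  have := le_of_tendsto htend hbound
  linarith
end aux

section main
variable {E : Type*} [NormedAddCommGroup E] [InnerProductSpace ℝ E]
  [FiniteDimensional ℝ E] [Nontrivial E]

set_option maxHeartbeats 1000000 in
lemma aux_main (f g : E → ℝ)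
    (hfnn : ∀ x, 0 ≤ f x) (hgnn : ∀ x, 0 ≤ g x)
    (hfconv : ConvexOn ℝ Set.univ f) (hgconv : ConvexOn ℝ Set.univ g)
    (hfC2 : ∃ V ∈ 𝓝 (0 : E), ContDiffOn ℝ 2 f V)
    (hgC2 : ∃ V ∈ 𝓝 (0 : E), ContDiffOn ℝ 2 g V)
    (hf0 : f 0 = 0) (hg0 : g 0 = 0)
    (hσpos : ∀ v : E, v ≠ 0 →
      0 < iteratedFDeriv ℝ 2 (fun y => f y + g (0 - y)) 0 ![v, v]) :
    ∃ U ∈ 𝓝 (0 : E),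
      ∃ μ : E → E,
        ContDiffOn ℝ 1 μ U ∧ μ 0 = 0 ∧
        ∀ x ∈ U, ∀ y : E, y ≠ μ x →
          f (μ x) + g (x - μ x) < f y + g (x - y) := by
  classical
  obtain ⟨Vf, hVfm, hVf⟩ := hfC2
  obtain ⟨Vg, hVgm, hVg⟩ := hgC2
  obtain ⟨rf, hrf, hrfsub⟩ := Metric.mem_nhds_iff.1 hVfm
  obtain ⟨rg, hrg, hrgsub⟩ := Metric.mem_nhds_iff.1 hVgm
  set r0 : ℝ := min rf rg with hr0def
  have hr0 : 0 < r0 := lt_min hrf hrg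
  set B : Set E := Metric.ball (0 : E) r0 with hBdef
  have hBopen : IsOpen B := Metric.isOpen_ball
  have h0B : (0 : E) ∈ B := Metric.mem_ball_self hr0
  have hfB : ContDiffOn ℝ 2 f B := hVf.mono (le_trans (Metric.ball_subset_ball (min_le_left _ _)) hrfsub)
  have hgB : ContDiffOn ℝ 2 g B := hVg.mono (le_trans (Metric.ball_subset_ball (min_le_right _ _)) hrgsub)
  -- abbreviations
  set Ff : E → (E →L[ℝ] ℝ) := fderiv ℝ f with hFfdef
  set Fg : E → (E →L[ℝ] ℝ) := fderiv ℝ g with hFgdef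
  set Hf : E → (E →L[ℝ] E →L[ℝ] ℝ) := fderiv ℝ (fderiv ℝ f) with hHfdef
  set Hg : E → (E →L[ℝ] E →L[ℝ] ℝ) := fderiv ℝ (fderiv ℝ g) with hHgdef
  -- differentiability facts on B
  have hFf1 : ContDiffOn ℝ 1 Ff B := hfB.fderiv_of_isOpen hBopen le_rfl
  have hFg1 : ContDiffOn ℝ 1 Fg B := hgB.fderiv_of_isOpen hBopen le_rfl
  have hfdiff : ∀ p ∈ B, DifferentiableAt ℝ f p := fun p hp =>
    ((hfB.differentiableOn (by norm_num)).differentiableAt (hBopen.mem_nhds hp))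
  have hgdiff : ∀ p ∈ B, DifferentiableAt ℝ g p := fun p hp =>
    ((hgB.differentiableOn (by norm_num)).differentiableAt (hBopen.mem_nhds hp))
  have hFfdiff : ∀ p ∈ B, DifferentiableAt ℝ Ff p := fun p hp =>
    ((hFf1.differentiableOn one_ne_zero).differentiableAt (hBopen.mem_nhds hp))
  have hFgdiff : ∀ p ∈ B, DifferentiableAt ℝ Fg p := fun p hp =>
    ((hFg1.differentiableOn one_ne_zero).differentiableAt (hBopen.mem_nhds hp))
  have hHfcont : ContinuousOn Hf B := hFf1.continuousOn_fderiv_of_isOpen hBopen le_rfl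
  have hHgcont : ContinuousOn Hg B := hFg1.continuousOn_fderiv_of_isOpen hBopen le_rfl
  -- gradients vanish at 0
  have hFf0 : Ff 0 = 0 := IsLocalMin.fderiv_eq_zero
    (Filter.Eventually.of_forall (fun y => by rw [hf0]; exact hfnn y))
  have hFg0 : Fg 0 = 0 := IsLocalMin.fderiv_eq_zero
    (Filter.Eventually.of_forall (fun y => by rw [hg0]; exact hgnn y))
  set Hf0 : E →L[ℝ] E →L[ℝ] ℝ := Hf 0 with hHf0def
  set Hg0 : E →L[ℝ] E →L[ℝ] ℝ := Hg 0 with hHg0def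
  set Q0 : E →L[ℝ] E →L[ℝ] ℝ := Hf0 + Hg0 with hQ0def
  -- positivity of Q0
  have hQ0pos : ∀ v : E, v ≠ 0 → 0 < Q0 v v := by
    intro v hv
    have key : iteratedFDeriv ℝ 2 (fun y => f y + g (0 - y)) 0 ![v, v] = Q0 v v := by
      rw [iteratedFDeriv_two_apply]
      have hm0 : (![v, v] : Fin 2 → E) 0 = v := rfl
      have hm1 : (![v, v] : Fin 2 → E) 1 = v := rfl
      rw [hm0, hm1]
      set N : E →L[ℝ] E := -(ContinuousLinearMap.id ℝ E) with hNdef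
      set F1 : E → (E →L[ℝ] ℝ) := fun y => Ff y + (Fg (0 - y)).comp N with hF1def
      -- first derivative of σ₀ near 0
      have hev : fderiv ℝ (fun y => f y + g (0 - y)) =ᶠ[𝓝 (0:E)] F1 := by
        filter_upwards [hBopen.mem_nhds h0B] with y hyB
        have hyB' : (0:E) - y ∈ B := by
          simpa [hBdef, Metric.mem_ball, norm_sub_rev] using hyB
        have hinner : HasFDerivAt (fun y : E => (0:E) - y) N y := by
          simpa [hNdef] using (hasFDerivAt_id y).const_sub (0:E)
        have h2 : HasFDerivAt (fun y : E => g ((0:E) - y)) ((Fg ((0:E) - y)).comp N) y :=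
          ((hgdiff _ hyB').hasFDerivAt).comp y hinner
        have h3 := ((hfdiff _ hyB).hasFDerivAt).add h2
        exact h3.fderiv
      have hfd2 : fderiv ℝ (fderiv ℝ (fun y => f y + g (0 - y))) 0 = fderiv ℝ F1 0 :=
        hev.fderiv_eq
      rw [hfd2]
      -- second derivative of F1 at 0
      set P : (E →L[ℝ] ℝ) →L[ℝ] (E →L[ℝ] ℝ) := (ContinuousLinearMap.compL ℝ E E ℝ).flip N
        with hPdef
      have hP : ∀ A : E →L[ℝ] ℝ, P A = A.comp N := fun A => rfl
      have hS : HasFDerivAt (fun y : E => (0:E) - y) N 0 := by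
        simpa [hNdef] using (hasFDerivAt_id (0:E)).const_sub (0:E)
      have hFg00 : HasFDerivAt Fg Hg0 ((0:E) - 0) := by
        simpa using (hFgdiff 0 h0B).hasFDerivAt
      have hcomp : HasFDerivAt (fun y : E => (Fg ((0:E) - y)).comp N)
          ((P.comp Hg0).comp N) 0 := by
        have := (P.hasFDerivAt.comp ((0:E) - 0) hFg00)
        have h2 := this.comp (0:E) hS
        exact h2.congr_of_eventuallyEq (Filter.Eventually.of_forall fun y => rfl)
      have hFfd : HasFDerivAt Ff Hf0 0 := (hFfdiff 0 h0B).hasFDerivAt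
      have hsum : HasFDerivAt F1 (Hf0 + (P.comp Hg0).comp N) 0 := hFfd.add hcomp
      rw [hsum.fderiv]
      simp [hP, hQ0def, hNdef, ContinuousLinearMap.comp_apply, map_neg]
    rw [← key]
    exact hσpos v hv
  -- uniform coercivity constant
  obtain ⟨c, hcpos, hcbound⟩ : ∃ c : ℝ, 0 < c ∧ ∀ w : E, c * ‖w‖ ^ 2 ≤ Q0 w w := by
    have hSne : (Metric.sphere (0:E) 1).Nonempty := NormedSpace.sphere_nonempty.2 zero_le_one
    have hScpt : IsCompact (Metric.sphere (0:E) 1) := isCompact_sphere 0 1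
    have hQcont : Continuous fun v : E => Q0 v v :=
      Q0.continuous₂.comp (continuous_id.prodMk continuous_id)
    obtain ⟨u, huS, humin⟩ := hScpt.exists_isMinOn hSne hQcont.continuousOn
    have hu1 : ‖u‖ = 1 := mem_sphere_zero_iff_norm.1 huS
    have hune : u ≠ 0 := by intro h; rw [h] at hu1; simp at hu1
    refine ⟨Q0 u u, hQ0pos u hune, fun w => ?_⟩
    rcases eq_or_ne w 0 with rfl | hw
    · simp
    · set a : ℝ := ‖w‖ with hadef
      have hapos : 0 < a := norm_pos_iff.2 hw
      set u' : E := a⁻¹ • w with hu'def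
      have hu'S : u' ∈ Metric.sphere (0:E) 1 := by
        rw [mem_sphere_zero_iff_norm, hu'def, norm_smul, norm_inv, Real.norm_eq_abs,
          abs_of_pos hapos, ← hadef]
        exact inv_mul_cancel₀ (ne_of_gt hapos)
      have hkey : Q0 w w = a ^ 2 * Q0 u' u' := by
        have hw' : w = a • u' := by
          rw [hu'def, smul_smul, mul_inv_cancel₀ (ne_of_gt hapos), one_smul]
        rw [hw']
        simp only [map_smul, ContinuousLinearMap.smul_apply, smul_eq_mul]
        ring
      have h2 : Q0 u u ≤ Q0 u' u' := humin hu'S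
      rw [hkey]
      calc Q0 u u * ‖w‖ ^ 2 = ‖w‖ ^ 2 * Q0 u u := mul_comm _ _
        _ ≤ ‖w‖ ^ 2 * Q0 u' u' := mul_le_mul_of_nonneg_left h2 (sq_nonneg _)
        _ = a ^ 2 * Q0 u' u' := by rw [hadef]
  -- radius where Hessians are close to their values at 0
  obtain ⟨r1, hr1pos, hr1le, hr1f, hr1g⟩ :
      ∃ r1 : ℝ, 0 < r1 ∧ r1 ≤ r0 ∧ (∀ p ∈ Metric.ball (0:E) r1, ‖Hf p - Hf0‖ < c/4) ∧
        (∀ p ∈ Metric.ball (0:E) r1, ‖Hg p - Hg0‖ < c/4) := by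
    have hfat : ContinuousAt Hf 0 := hHfcont.continuousAt (hBopen.mem_nhds h0B)
    have hgat : ContinuousAt Hg 0 := hHgcont.continuousAt (hBopen.mem_nhds h0B)
    have hc4 : 0 < c/4 := by linarith
    have hevf : ∀ᶠ p in 𝓝 (0:E), ‖Hf p - Hf0‖ < c/4 := by
      have h2 : ContinuousAt
          (fun p => Hf p - Hf0) 0 := by
        haveI : ContinuousSub (E →L[ℝ] E →L[ℝ] ℝ) := @IsTopologicalAddGroup.to_continuousSub (E →L[ℝ] E →L[ℝ] ℝ) _ _ _
        exact hfat.sub continuousAt_const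
      have h1 := @ContinuousAt.norm E (E →L[ℝ] E →L[ℝ] ℝ) _ _ (fun p => Hf p - Hf0) 0 h2
      refine h1 (Iio_mem_nhds ?_)
      have h4 : Hf 0 - Hf0 = 0 := sub_eq_zero_of_eq hHf0def.symm
      show ((fun x => ‖(fun p => Hf p - Hf0) x‖) 0) < c / 4
      simp only [h4]
      rw [@norm_zero (E →L[ℝ] E →L[ℝ] ℝ) _]
      exact hc4
    have hevg : ∀ᶠ p in 𝓝 (0:E), ‖Hg p - Hg0‖ < c/4 := by
      have h2 : ContinuousAt
          (fun p => Hg p - Hg0) 0 := by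
        haveI : ContinuousSub (E →L[ℝ] E →L[ℝ] ℝ) := @IsTopologicalAddGroup.to_continuousSub (E →L[ℝ] E →L[ℝ] ℝ) _ _ _
        exact hgat.sub continuousAt_const
      have h1 := @ContinuousAt.norm E (E →L[ℝ] E →L[ℝ] ℝ) _ _ (fun p => Hg p - Hg0) 0 h2
      refine h1 (Iio_mem_nhds ?_)
      have h4 : Hg 0 - Hg0 = 0 := sub_eq_zero_of_eq hHg0def.symm
      show ((fun x => ‖(fun p => Hg p - Hg0) x‖) 0) < c / 4
      simp only [h4]
      rw [@norm_zero (E →L[ℝ] E →L[ℝ] ℝ) _]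
      exact hc4
    obtain ⟨r1, hr1pos, hr1sub⟩ := Metric.mem_nhds_iff.1 ((hevf.and hevg).and (hBopen.mem_nhds h0B))
    refine ⟨min r1 r0, lt_min hr1pos hr0, min_le_right _ _, ?_, ?_⟩
    · intro p hp
      exact (hr1sub (Metric.ball_subset_ball (min_le_left _ _) hp)).1.1
    · intro p hp
      exact (hr1sub (Metric.ball_subset_ball (min_le_left _ _) hp)).1.2
  -- the implicit function
  obtain ⟨U, hUmem, μ, hμC1, hμ0, hμsmall, hcrit⟩ :
      ∃ U ∈ 𝓝 (0 : E), ∃ μ : E → E, ContDiffOn ℝ 1 μ U ∧ μ 0 = 0 ∧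
        (∀ x ∈ U, ‖μ x‖ < r1/4 ∧ ‖x‖ < r1/4) ∧
        (∀ x ∈ U, Ff (μ x) - Fg (x - μ x) = 0) := by
    -- invertibility of Q0
    haveI hfinY : FiniteDimensional ℝ (E →L[ℝ] ℝ) :=
      (InnerProductSpace.toDual ℝ E).toLinearEquiv.finiteDimensional
    have hQ0inj : Function.Injective (Q0 : E →ₗ[ℝ] (E →L[ℝ] ℝ)) := by
      intro a b hab
      by_contra hne
      have hv : a - b ≠ 0 := sub_ne_zero.2 hne
      have hpos := hQ0pos (a - b) hv
      have hz : Q0 (a - b) = 0 := by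
        rw [map_sub]
        rw [show Q0 a = Q0 b from hab]
        exact sub_self _
      rw [hz] at hpos
      simp at hpos
    have hrank : Module.finrank ℝ E = Module.finrank ℝ (E →L[ℝ] ℝ) :=
      (InnerProductSpace.toDual ℝ E).toLinearEquiv.finrank_eq
    set eB : E ≃ₗ[ℝ] (E →L[ℝ] ℝ) :=
      LinearMap.linearEquivOfInjective (Q0 : E →ₗ[ℝ] (E →L[ℝ] ℝ)) hQ0inj hrank with heBdef
    set eBL : E ≃L[ℝ] (E →L[ℝ] ℝ) := eB.toContinuousLinearEquiv with heBLdef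
    have heBL : ∀ w : E, eBL w = Q0 w := by
      intro w
      rw [heBLdef]
      rw [LinearEquiv.coe_toContinuousLinearEquiv']
      rw [heBdef]
      exact LinearMap.linearEquivOfInjective_apply hQ0inj hrank w
    -- the map Φ and its derivative
    set Φ : E × E → E × (E →L[ℝ] ℝ) := fun p => (p.1, Ff p.2 - Fg (p.1 - p.2)) with hΦdef
    have hFfat : ContDiffAt ℝ 1 Ff 0 := hFf1.contDiffAt (hBopen.mem_nhds h0B)
    have hFgat : ContDiffAt ℝ 1 Fg 0 := hFg1.contDiffAt (hBopen.mem_nhds h0B)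
    have hΦcd : ContDiffAt ℝ 1 Φ ((0:E), (0:E)) := by
      apply ContDiffAt.prodMk
      · exact contDiffAt_fst
      · apply ContDiffAt.sub
        · exact hFfat.comp ((0:E), (0:E)) contDiffAt_snd
        · have hFgat' : ContDiffAt ℝ 1 Fg ((0:E) - (0:E)) := by simpa using hFgat
          exact hFgat'.comp ((0:E), (0:E))
            ((contDiff_fst.sub contDiff_snd).contDiffAt)
    have hHfd : HasFDerivAt Ff Hf0 0 := (hFfdiff 0 h0B).hasFDerivAt
    have hHgd : HasFDerivAt Fg Hg0 0 := (hFgdiff 0 h0B).hasFDerivAt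
    set Φ' : (E × E) ≃L[ℝ] E × (E →L[ℝ] ℝ) :=
      (ContinuousLinearEquiv.refl ℝ E).skewProd eBL (-Hg0) with hΦ'def
    have hD : HasFDerivAt Φ (Φ' : (E × E) →L[ℝ] E × (E →L[ℝ] ℝ)) ((0:E), (0:E)) := by
      have hd2 : HasFDerivAt (fun p : E × E => Ff p.2)
          (Hf0.comp (ContinuousLinearMap.snd ℝ E E)) ((0:E), (0:E)) :=
        hHfd.comp ((0:E), (0:E)) hasFDerivAt_snd
      have hsub : HasFDerivAt (fun p : E × E => p.1 - p.2)
          (ContinuousLinearMap.fst ℝ E E - ContinuousLinearMap.snd ℝ E E) ((0:E), (0:E)) :=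
        hasFDerivAt_fst.sub hasFDerivAt_snd
      have hFg00 : HasFDerivAt Fg Hg0 ((0:E) - (0:E)) := by simpa using hHgd
      have hd3 : HasFDerivAt (fun p : E × E => Fg (p.1 - p.2))
          (Hg0.comp (ContinuousLinearMap.fst ℝ E E - ContinuousLinearMap.snd ℝ E E))
          ((0:E), (0:E)) := hFg00.comp ((0:E), (0:E)) hsub
      have hd4 := hasFDerivAt_fst.prodMk (hd2.sub hd3)
      have hco : (Φ' : (E × E) →L[ℝ] E × (E →L[ℝ] ℝ)) =
          (ContinuousLinearMap.fst ℝ E E).prod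
            (Hf0.comp (ContinuousLinearMap.snd ℝ E E) -
             Hg0.comp (ContinuousLinearMap.fst ℝ E E - ContinuousLinearMap.snd ℝ E E)) := by
        apply ContinuousLinearMap.ext
        intro p
        apply Prod.ext
        · rfl
        · show eBL p.2 + (-Hg0) p.1 = _
          rw [heBL]
          rw [hQ0def]
          simp only [ContinuousLinearMap.add_apply, ContinuousLinearMap.neg_apply,
            ContinuousLinearMap.prod_apply, ContinuousLinearMap.comp_apply,
            ContinuousLinearMap.sub_apply, ContinuousLinearMap.coe_fst',
            ContinuousLinearMap.coe_snd', map_sub]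
          abel
      rw [hco]
      exact hd4
    -- inverse function theorem
    have hΦ00 : Φ ((0:E), (0:E)) = ((0:E), (0 : E →L[ℝ] ℝ)) := by
      rw [hΦdef]
      simp only
      rw [show (0:E) - (0:E) = 0 by simp, hFf0, hFg0, sub_self]
    set Ψ := hΦcd.localInverse hD one_ne_zero with hΨdef
    have hΨcd : ContDiffAt ℝ 1 Ψ ((0:E), (0 : E →L[ℝ] ℝ)) := by
      rw [← hΦ00]
      exact hΦcd.to_localInverse hD one_ne_zero
    have hΨ0 : Ψ ((0:E), (0 : E →L[ℝ] ℝ)) = ((0:E), (0:E)) := by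
      rw [← hΦ00]
      exact hΦcd.localInverse_apply_image hD one_ne_zero
    have hri : ∀ᶠ z in 𝓝 ((0:E), (0 : E →L[ℝ] ℝ)), Φ (Ψ z) = z := by
      rw [← hΦ00]
      exact (hΦcd.hasStrictFDerivAt' hD one_ne_zero).eventually_right_inverse
    obtain ⟨T, hTmem, hΨT⟩ := hΨcd.contDiffOn le_rfl (by simp)
    obtain ⟨T2, hT2mem, hT2⟩ := eventually_iff_exists_mem.1 hri
    set ι : E → E × (E →L[ℝ] ℝ) := fun x => (x, 0) with hιdef
    have hιcont : Continuous ι := continuous_id.prodMk continuous_const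
    have hι0 : ι 0 = ((0:E), (0 : E →L[ℝ] ℝ)) := rfl
    have hU1 : ι ⁻¹' (T ∩ T2) ∈ 𝓝 (0:E) :=
      hιcont.continuousAt.preimage_mem_nhds (by rw [hι0]; exact inter_mem hTmem hT2mem)
    set μ : E → E := fun x => (Ψ (ι x)).2 with hμdef
    have hμcd : ContDiffOn ℝ 1 μ (ι ⁻¹' T) := by
      have hι : ContDiff ℝ 1 ι := contDiff_id.prodMk contDiff_const
      have hcomp : ContDiffOn ℝ 1 (Ψ ∘ ι) (ι ⁻¹' T) :=
        hΨT.comp hι.contDiffOn (fun z hz => hz)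
      exact contDiff_snd.comp_contDiffOn hcomp
    have hμ0 : μ 0 = 0 := by
      rw [hμdef]
      simp only
      rw [hι0, hΨ0]
    -- smallness neighbourhoods
    have hμcont : ContinuousAt μ 0 := by
      have h1 : ContinuousAt Ψ (ι 0) := by rw [hι0]; exact hΨcd.continuousAt
      exact continuousAt_snd.comp (h1.comp hιcont.continuousAt)
    have hr14 : (0:ℝ) < r1/4 := by linarith
    have hsm : {x : E | ‖μ x‖ < r1/4} ∈ 𝓝 (0:E) := by
      have h1 : ContinuousAt (fun x => ‖μ x‖) 0 := hμcont.norm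
      refine h1 (Iio_mem_nhds ?_)
      show ‖μ 0‖ < r1/4
      rw [hμ0, norm_zero]
      exact hr14
    have hx4 : {x : E | ‖x‖ < r1/4} ∈ 𝓝 (0:E) := by
      refine Filter.mem_of_superset (Metric.ball_mem_nhds 0 hr14) ?_
      intro z hz
      exact mem_ball_zero_iff.1 hz
    refine ⟨ι ⁻¹' (T ∩ T2) ∩ ({x : E | ‖μ x‖ < r1/4} ∩ {x : E | ‖x‖ < r1/4}),
      inter_mem hU1 (inter_mem hsm hx4), μ, ?_, hμ0, ?_, ?_⟩
    · exact hμcd.mono (fun z hz => (hz.1 : ι z ∈ T ∩ T2).1)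
    · intro x hx
      exact ⟨hx.2.1, hx.2.2⟩
    · intro x hx
      have hz : Φ (Ψ (ι x)) = ι x := hT2 (ι x) (hx.1 : ι x ∈ T ∩ T2).2
      have h1 : (Ψ (ι x)).1 = x := congrArg Prod.fst hz
      have h2' := congrArg Prod.snd hz
      have h2 : Ff ((Ψ (ι x)).2) - Fg ((Ψ (ι x)).1 - (Ψ (ι x)).2) = 0 := h2'
      rw [h1] at h2
      exact h2
  refine ⟨U, hUmem, μ, hμC1, hμ0, ?_⟩
  intro x hx y hy
  set m : E := μ x with hmdef
  obtain ⟨hmsmall, hxsmall⟩ := hμsmall x hx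
  have hmB : m ∈ B := by
    have : ‖m‖ < r0 := lt_of_lt_of_le (lt_of_lt_of_le hmsmall (by linarith)) hr1le
    simpa [hBdef, Metric.mem_ball] using this
  have hxmB : x - m ∈ B := by
    have : ‖x - m‖ < r0 := by
      have := norm_sub_le x m
      have h2 : ‖x - m‖ < r1/2 := by linarith
      linarith [hr1le]
    simpa [hBdef, Metric.mem_ball] using this
  -- σ_x is convex
  have hσconv : ConvexOn ℝ Set.univ (fun y => f y + g (x - y)) := by
    refine hfconv.add ⟨convex_univ, fun p _ q _ a b ha hb hab => ?_⟩
    simp only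
    have hx2 : a • x + b • x = x := by rw [← add_smul, hab, one_smul]
    have h1 : x - (a • p + b • q) = a • (x - p) + b • (x - q) := by
      rw [smul_sub, smul_sub,
        show a • x - a • p + (b • x - b • q) = (a • x + b • x) - (a • p + b • q) from by abel,
        hx2]
    rw [h1]
    exact hgconv.2 (mem_univ _) (mem_univ _) ha hb hab
  -- critical point
  have hσcrit : HasFDerivAt (fun y => f y + g (x - y)) (0 : E →L[ℝ] ℝ) m := by
    have h1 : HasFDerivAt f (Ff m) m := (hfdiff m hmB).hasFDerivAt
    have hinner : HasFDerivAt (fun y : E => x - y) (-(ContinuousLinearMap.id ℝ E)) m :=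
      (hasFDerivAt_id m).const_sub x
    have h2 : HasFDerivAt (fun y : E => g (x - y))
        ((Fg (x - m)).comp (-(ContinuousLinearMap.id ℝ E))) m :=
      ((hgdiff _ hxmB).hasFDerivAt).comp m hinner
    have h3 := h1.add h2
    have hcompeq : (Ff m) + (Fg (x - m)).comp (-(ContinuousLinearMap.id ℝ E)) = 0 := by
      have h4 := hcrit x hx
      rw [← hmdef] at h4
      ext w
      have : (Ff m) w - (Fg (x - m)) w = 0 := by
        have := congrFun (congrArg DFunLike.coe h4) w
        simpa using this
      simp only [ContinuousLinearMap.add_apply, ContinuousLinearMap.comp_apply,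
        ContinuousLinearMap.neg_apply, ContinuousLinearMap.coe_id', id_eq,
        ContinuousLinearMap.map_neg, ContinuousLinearMap.zero_apply]
      linarith
    rw [hcompeq] at h3
    exact h3
  have hge : ∀ z, f m + g (x - m) ≤ f z + g (x - z) := fun z =>
    aux_convex_min hσconv hσcrit z
  -- strictness
  by_contra hlt
  push_neg at hlt
  have heq : f y + g (x - y) = f m + g (x - m) := le_antisymm hlt (hge y)
  set v : E := y - m with hvdef
  have hvne : v ≠ 0 := sub_ne_zero.2 hy
  have hvpos : 0 < ‖v‖ := norm_pos_iff.2 hvne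
  set h : ℝ → ℝ := fun t => f (m + t • v) + g (x - (m + t • v)) with hhdef
  have hconst : ∀ t ∈ Icc (0:ℝ) 1, h t = f m + g (x - m) := by
    intro t ht
    have hle : h t ≤ f m + g (x - m) := by
      have hcv := hσconv.2 (mem_univ m) (mem_univ y)
        (show (0:ℝ) ≤ 1 - t by linarith [ht.2]) ht.1 (by ring)
      have hpt : (1 - t) • m + t • y = m + t • v := by
        rw [hvdef, smul_sub, sub_smul, one_smul]; abel
      rw [hpt] at hcv
      simp only [smul_eq_mul] at hcv
      have : h t ≤ (1 - t) * (f m + g (x - m)) + t * (f y + g (x - y)) := by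
        simpa [hhdef] using hcv
      rw [heq] at this
      linarith
    have hge' : f m + g (x - m) ≤ h t := hge (m + t • v)
    exact le_antisymm hle hge'
  set τ : ℝ := r1 / (2 * (‖v‖ + 1)) with hτdef
  have hτpos : 0 < τ := by
    apply div_pos hr1pos; positivity
  set smax : ℝ := min 1 τ with hsmaxdef
  have hsmaxpos : 0 < smax := lt_min one_pos hτpos
  set s : ℝ := smax / 2 with hsdef
  set I : Set ℝ := Ioo (0:ℝ) smax with hIdef
  have hIopen : IsOpen I := isOpen_Ioo
  have hsI : s ∈ I := ⟨by positivity, by rw [hsdef]; linarith⟩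
  have hpts : ∀ t ∈ I, (m + t • v ∈ Metric.ball (0:E) r1 ∧
      x - (m + t • v) ∈ Metric.ball (0:E) r1) := by
    intro t ht
    have htpos : 0 < t := ht.1
    have htτ : t < τ := lt_of_lt_of_le ht.2 (min_le_right _ _)
    have htv : ‖t • v‖ < r1/2 := by
      rw [norm_smul, Real.norm_eq_abs, abs_of_pos htpos]
      have h1 : t * ‖v‖ ≤ t * (‖v‖ + 1) :=
        mul_le_mul_of_nonneg_left (by linarith) htpos.le
      have h2 : t * (‖v‖ + 1) < τ * (‖v‖ + 1) :=
        mul_lt_mul_of_pos_right htτ (by positivity)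
      have h3 : τ * (‖v‖ + 1) = r1/2 := by
        rw [hτdef]; field_simp
      linarith
    constructor
    · rw [mem_ball_zero_iff]
      calc ‖m + t • v‖ ≤ ‖m‖ + ‖t • v‖ := norm_add_le _ _
        _ < r1/4 + r1/2 := by have := hmsmall; rw [← hmdef] at this; linarith
        _ < r1 := by linarith
    · rw [mem_ball_zero_iff]
      have hxm : x - (m + t • v) = (x - m) - t • v := by abel
      rw [hxm]
      calc ‖(x - m) - t • v‖ ≤ ‖x - m‖ + ‖t • v‖ := norm_sub_le _ _
        _ ≤ (‖x‖ + ‖m‖) + ‖t • v‖ := by linarith [norm_sub_le x m]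
        _ < (r1/4 + r1/4) + r1/2 := by
            have := hmsmall; rw [← hmdef] at this; linarith
        _ = r1 := by ring
  have hIconst : ∀ t ∈ I, h t = h 0 := by
    intro t ht
    have h0 : h 0 = f m + g (x - m) := by simp [hhdef]
    rw [h0]
    exact hconst t ⟨le_of_lt ht.1, le_trans (le_of_lt ht.2) (min_le_left _ _)⟩
  have hballB : Metric.ball (0:E) r1 ⊆ B := Metric.ball_subset_ball hr1le
  -- derivative formula for h on I
  set k : ℝ → ℝ := fun t => (Ff (m + t • v)) v - (Fg (x - (m + t • v))) v with hkdef
  have hderivformula : ∀ t ∈ I, HasDerivAt h (k t) t := by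
    intro t ht
    obtain ⟨hp1, hp2⟩ := hpts t ht
    have hL : HasDerivAt (fun t : ℝ => m + t • v) v t := by
      simpa using ((hasDerivAt_id t).smul_const v).const_add m
    have hf' : HasFDerivAt f (Ff (m + t • v)) (m + t • v) :=
      (hfdiff _ (hballB hp1)).hasFDerivAt
    have hd1 : HasDerivAt (fun t : ℝ => f (m + t • v)) ((Ff (m + t • v)) v) t :=
      hf'.comp_hasDerivAt t hL
    have hL2 : HasDerivAt (fun t : ℝ => x - (m + t • v)) (-v) t := hL.const_sub x
    have hg' : HasFDerivAt g (Fg (x - (m + t • v))) (x - (m + t • v)) :=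
      (hgdiff _ (hballB hp2)).hasFDerivAt
    have hd2 : HasDerivAt (fun t : ℝ => g (x - (m + t • v)))
        ((Fg (x - (m + t • v))) (-v)) t := hg'.comp_hasDerivAt t hL2
    have := hd1.add hd2
    have heqd : (Ff (m + t • v)) v + (Fg (x - (m + t • v))) (-v) = k t := by
      rw [hkdef]; simp [map_neg]; ring
    rw [heqd] at this
    exact this
  have hderiv0 : ∀ t ∈ I, deriv h t = 0 := by
    intro t ht
    have hev : h =ᶠ[𝓝 t] fun _ => h 0 := by
      filter_upwards [hIopen.mem_nhds ht] with u hu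
      exact hIconst u hu
    rw [hev.deriv_eq, deriv_const]
  have hk0 : ∀ t ∈ I, k t = 0 := by
    intro t ht
    rw [← (hderivformula t ht).deriv]
    exact hderiv0 t ht
  have hkev : k =ᶠ[𝓝 s] fun _ => (0:ℝ) := by
    filter_upwards [hIopen.mem_nhds hsI] with u hu
    exact hk0 u hu
  have hdks : deriv k s = 0 := by rw [hkev.deriv_eq, deriv_const]
  -- chain rule for k at s
  obtain ⟨hps1, hps2⟩ := hpts s hsI
  set pm : E := m + s • v with hpmdef
  set pg : E := x - (m + s • v) with hpgdef
  have hks : HasDerivAt k ((Hf pm v) v + (Hg pg v) v) s := by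
    have hL : HasDerivAt (fun t : ℝ => m + t • v) v s := by
      simpa using ((hasDerivAt_id s).smul_const v).const_add m
    have hc1 : HasDerivAt (fun t : ℝ => Ff (m + t • v)) (Hf pm v) s :=
      ((hFfdiff _ (hballB hps1)).hasFDerivAt).comp_hasDerivAt s hL
    have hc1v : HasDerivAt (fun t : ℝ => (Ff (m + t • v)) v) ((Hf pm v) v) s := by
      simpa using hc1.clm_apply (hasDerivAt_const s v)
    have hL2 : HasDerivAt (fun t : ℝ => x - (m + t • v)) (-v) s := hL.const_sub x
    have hc2 : HasDerivAt (fun t : ℝ => Fg (x - (m + t • v))) (Hg pg (-v)) s :=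
      ((hFgdiff _ (hballB hps2)).hasFDerivAt).comp_hasDerivAt s hL2
    have hc2v : HasDerivAt (fun t : ℝ => (Fg (x - (m + t • v))) v) (-((Hg pg v) v)) s := by
      have := hc2.clm_apply (hasDerivAt_const s v)
      simpa [map_neg] using this
    have := hc1v.sub hc2v
    rw [sub_neg_eq_add] at this
    exact this
  have hderivk : deriv k s = (Hf pm v) v + (Hg pg v) v := hks.deriv
  -- positivity of the second derivative
  have habs : ∀ (A : E →L[ℝ] E →L[ℝ] ℝ) (w : E), |(A w) w| ≤ ‖A‖ * ‖w‖^2 := by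
    intro A w
    calc |(A w) w| = ‖(A w) w‖ := (Real.norm_eq_abs _).symm
      _ ≤ ‖A w‖ * ‖w‖ := (A w).le_opNorm w
      _ ≤ (‖A‖ * ‖w‖) * ‖w‖ := mul_le_mul_of_nonneg_right (A.le_opNorm w) (norm_nonneg w)
      _ = ‖A‖ * ‖w‖^2 := by ring
  have hafbd : |((Hf pm - Hf0) v) v| ≤ (c/4) * ‖v‖^2 := by
    refine le_trans (habs _ v) ?_
    exact mul_le_mul_of_nonneg_right (le_of_lt (hr1f pm hps1)) (sq_nonneg _)
  have hagbd : |((Hg pg - Hg0) v) v| ≤ (c/4) * ‖v‖^2 := by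
    refine le_trans (habs _ v) ?_
    exact mul_le_mul_of_nonneg_right (le_of_lt (hr1g pg hps2)) (sq_nonneg _)
  have hsplitf : ((Hf pm - Hf0) v) v = (Hf pm v) v - (Hf0 v) v := by
    simp [ContinuousLinearMap.sub_apply]
  have hsplitg : ((Hg pg - Hg0) v) v = (Hg pg v) v - (Hg0 v) v := by
    simp [ContinuousLinearMap.sub_apply]
  have hQ0v : Q0 v v = (Hf0 v) v + (Hg0 v) v := by
    rw [hQ0def]; simp [ContinuousLinearMap.add_apply]
  have hcb := hcbound v
  rw [hQ0v] at hcb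
  rw [hsplitf] at hafbd
  rw [hsplitg] at hagbd
  have habf := (abs_le.1 hafbd).1
  have habg := (abs_le.1 hagbd).1
  have hfinal : 0 < (Hf pm v) v + (Hg pg v) v := by
    have hv2 : 0 < ‖v‖^2 := by positivity
    have hcx : 0 < c * ‖v‖^2 := mul_pos hcpos hv2
    linarith
  rw [hdks] at hderivk
  linarith

end main


/-- Lemma 2.1(a) of the paper. If `f`, `g` are nonnegative convex functions
on `ℝⁿ` that are `C²` near `0` with `f 0 = 0 = g 0`, and the Hessian of
`σ₀ : y ↦ f y + g (0 - y)` at `y = 0` is positive definite, then there are a neighborhood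
`U` of `0` and a `C¹` map `μ : U → ℝⁿ` with `μ 0 = 0` such that `μ x` is the unique global
minimizer of `σ_x : y ↦ f y + g (x - y)` for every `x ∈ U`. -/
theorem stmt0 (n : ℕ) (hn : 1 ≤ n)
    (f g : EuclideanSpace ℝ (Fin n) → ℝ)
    (hfnn : ∀ x, 0 ≤ f x) (hgnn : ∀ x, 0 ≤ g x)
    (hfconv : ConvexOn ℝ Set.univ f) (hgconv : ConvexOn ℝ Set.univ g)
    (hfC2 : ∃ V ∈ 𝓝 (0 : EuclideanSpace ℝ (Fin n)), ContDiffOn ℝ 2 f V)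
    (hgC2 : ∃ V ∈ 𝓝 (0 : EuclideanSpace ℝ (Fin n)), ContDiffOn ℝ 2 g V)
    (hf0 : f 0 = 0) (hg0 : g 0 = 0)
    (hσpos : ∀ v : EuclideanSpace ℝ (Fin n), v ≠ 0 →
      0 < iteratedFDeriv ℝ 2 (fun y => f y + g (0 - y)) 0 ![v, v]) :
    ∃ U ∈ 𝓝 (0 : EuclideanSpace ℝ (Fin n)),
      ∃ μ : EuclideanSpace ℝ (Fin n) → EuclideanSpace ℝ (Fin n),
        ContDiffOn ℝ 1 μ U ∧ μ 0 = 0 ∧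
        ∀ x ∈ U, ∀ y : EuclideanSpace ℝ (Fin n), y ≠ μ x →
          f (μ x) + g (x - μ x) < f y + g (x - y) := by
  haveI : Nontrivial (EuclideanSpace ℝ (Fin n)) := by
    refine nontrivial_of_ne (EuclideanSpace.single ⟨0, hn⟩ (1:ℝ)) 0 ?_
    intro h
    have := congrFun (congrArg (fun v : EuclideanSpace ℝ (Fin n) => (v : Fin n → ℝ)) h) ⟨0, hn⟩
    simp [EuclideanSpace.single_apply] at this
  exact aux_main f g hfnn hgnn hfconv hgconv hfC2 hgC2 hf0 hg0 hσpos
end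

section
/- Let n ≥ 1. Let f, g : ℝⁿ → [0,∞) be convex functions that are C² on a neighborhood of 0 with f(0) = 0 = g(0); for x ∈ ℝⁿ let σ_x(y) = f(y) + g(x − y), and assume Hess σ₀|_{y=0} is positive definite. Let μ be C¹ on a neighborhood U of 0 with μ(0) = 0 and such that μ(x) is the unique global minimizer of σ_x for each x ∈ U. Then the infimal convolution h = f □ g is C² near 0, and for all x near 0: h(x) = f(μ(x)) + g(x − μ(x)), ∇h(x) = ∇f(μ(x)) = ∇g(x − μ(x)), and Hess h|_x = Hess g|_{x−μ(x)} ∘ (Id − Dμ(x)) = Hess f|_{μ(x)} ∘ Dμ(x), where Dμ(x) denotes the derivative (Jacobian) of μ at x. -/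
open Set Filter Topology

noncomputable section

/-- The infimal convolution `(f □ g)(x) = ⨅ y, f y + g (x - y)`. -/
def infConv {E : Type*} [NormedAddCommGroup E] (f g : E → ℝ) (x : E) : ℝ :=
  ⨅ y : E, (f y + g (x - y))

/-- Lemma 2.1(c) of the paper. With hypotheses as in Lemma 2.1 and a `C¹`
selection `μ` of unique global minimizers of `σ_x`, the infimal convolution `h = f □ g`
is `C²` near `0` and satisfies `h x = f (μ x) + g (x - μ x)`,
`∇h x = ∇f (μ x) = ∇g (x - μ x)`, and
`Hess h|_x = Hess g|_{x-μ x} ∘ (Id - Dμ x) = Hess f|_{μ x} ∘ Dμ x` near `0`. -/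
theorem stmt2 (n : ℕ) (hn : 1 ≤ n)
    (f g : EuclideanSpace ℝ (Fin n) → ℝ)
    (hfnn : ∀ x, 0 ≤ f x) (hgnn : ∀ x, 0 ≤ g x)
    (hfconv : ConvexOn ℝ Set.univ f) (hgconv : ConvexOn ℝ Set.univ g)
    (hfC2 : ∃ V ∈ 𝓝 (0 : EuclideanSpace ℝ (Fin n)), ContDiffOn ℝ 2 f V)
    (hgC2 : ∃ V ∈ 𝓝 (0 : EuclideanSpace ℝ (Fin n)), ContDiffOn ℝ 2 g V)
    (hf0 : f 0 = 0) (hg0 : g 0 = 0)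
    (hσpos : ∀ v : EuclideanSpace ℝ (Fin n), v ≠ 0 →
      0 < iteratedFDeriv ℝ 2 (fun y => f y + g (0 - y)) 0 ![v, v])
    (U : Set (EuclideanSpace ℝ (Fin n))) (hU : U ∈ 𝓝 (0 : EuclideanSpace ℝ (Fin n)))
    (μ : EuclideanSpace ℝ (Fin n) → EuclideanSpace ℝ (Fin n))
    (hμC1 : ContDiffOn ℝ 1 μ U) (hμ0 : μ 0 = 0)
    (hμmin : ∀ x ∈ U, ∀ y : EuclideanSpace ℝ (Fin n), y ≠ μ x →
      f (μ x) + g (x - μ x) < f y + g (x - y)) :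
    (∃ V ∈ 𝓝 (0 : EuclideanSpace ℝ (Fin n)), ContDiffOn ℝ 2 (infConv f g) V) ∧
    ∃ W ∈ 𝓝 (0 : EuclideanSpace ℝ (Fin n)), ∀ x ∈ W,
      infConv f g x = f (μ x) + g (x - μ x) ∧
      fderiv ℝ (infConv f g) x = fderiv ℝ f (μ x) ∧
      fderiv ℝ (infConv f g) x = fderiv ℝ g (x - μ x) ∧
      (∀ u v : EuclideanSpace ℝ (Fin n),
        iteratedFDeriv ℝ 2 (infConv f g) x ![u, v] =
          iteratedFDeriv ℝ 2 g (x - μ x) ![u, v - fderiv ℝ μ x v] ∧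
        iteratedFDeriv ℝ 2 (infConv f g) x ![u, v] =
          iteratedFDeriv ℝ 2 f (μ x) ![u, fderiv ℝ μ x v]) := by
  obtain ⟨Vf, hVf, hfC2⟩ := hfC2
  obtain ⟨Vg, hVg, hgC2⟩ := hgC2
  have hfat : ∀ y ∈ interior Vf, ContDiffAt ℝ 2 f y := fun y hy =>
    hfC2.contDiffAt (mem_interior_iff_mem_nhds.mp hy)
  have hgat : ∀ y ∈ interior Vg, ContDiffAt ℝ 2 g y := fun y hy =>
    hgC2.contDiffAt (mem_interior_iff_mem_nhds.mp hy)
  have hμat : ∀ x ∈ interior U, ContDiffAt ℝ 1 μ x := fun x hx =>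
    hμC1.contDiffAt (mem_interior_iff_mem_nhds.mp hx)
  have h0U : (0 : EuclideanSpace ℝ (Fin n)) ∈ interior U := mem_interior_iff_mem_nhds.mpr hU
  have hμcont : ContinuousAt μ 0 := (hμat 0 h0U).continuousAt
  have h1 : μ ⁻¹' interior Vf ∈ 𝓝 (0 : EuclideanSpace ℝ (Fin n)) := by
    apply hμcont.preimage_mem_nhds
    rw [hμ0]
    exact isOpen_interior.mem_nhds (mem_interior_iff_mem_nhds.mpr hVf)
  have h2 : (fun x : EuclideanSpace ℝ (Fin n) => x - μ x) ⁻¹' interior Vg ∈ 𝓝 (0 : EuclideanSpace ℝ (Fin n)) := by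
    have hc : ContinuousAt (fun x : EuclideanSpace ℝ (Fin n) => x - μ x) 0 := continuousAt_id.sub hμcont
    apply hc.preimage_mem_nhds
    simp only [hμ0, sub_zero]
    exact isOpen_interior.mem_nhds (mem_interior_iff_mem_nhds.mpr hVg)
  obtain ⟨W, hWsub, hWopen, hW0⟩ := mem_nhds_iff.mp
    (Filter.inter_mem (Filter.inter_mem (isOpen_interior.mem_nhds h0U) h1) h2)
  -- value equality on U
  have hval : ∀ x ∈ U, infConv f g x = f (μ x) + g (x - μ x) := by
    intro x hx
    refine le_antisymm (ciInf_le ⟨0, ?_⟩ (μ x)) (le_ciInf fun y => ?_)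
    · rintro r ⟨y, rfl⟩
      exact add_nonneg (hfnn y) (hgnn _)
    · rcases eq_or_ne y (μ x) with rfl | hy
      · exact le_refl _
      · exact (hμmin x hx y hy).le
  -- first order condition
  have hfo : ∀ x ∈ W, fderiv ℝ f (μ x) = fderiv ℝ g (x - μ x) := by
    intro x hx
    obtain ⟨⟨hxU, hxf⟩, hxg⟩ := hWsub hx
    have hdf : DifferentiableAt ℝ f (μ x) := (hfat _ hxf).differentiableAt two_ne_zero
    have hdg : DifferentiableAt ℝ g (x - μ x) := (hgat _ hxg).differentiableAt two_ne_zero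
    have hsub : HasFDerivAt (fun y : EuclideanSpace ℝ (Fin n) => x - y)
        ((0 : EuclideanSpace ℝ (Fin n) →L[ℝ] EuclideanSpace ℝ (Fin n)) - ContinuousLinearMap.id ℝ (EuclideanSpace ℝ (Fin n))) (μ x) :=
      (hasFDerivAt_const x _).sub (hasFDerivAt_id _)
    have hσ : HasFDerivAt (fun y => f y + g (x - y))
        (fderiv ℝ f (μ x) + (fderiv ℝ g (x - μ x)).comp
          ((0 : EuclideanSpace ℝ (Fin n) →L[ℝ] EuclideanSpace ℝ (Fin n)) - ContinuousLinearMap.id ℝ (EuclideanSpace ℝ (Fin n)))) (μ x) :=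
      hdf.hasFDerivAt.add (hdg.hasFDerivAt.comp (μ x) hsub)
    have hmin : IsLocalMin (fun y => f y + g (x - y)) (μ x) := by
      apply Filter.Eventually.of_forall
      intro y
      rcases eq_or_ne y (μ x) with rfl | hy
      · exact le_refl _
      · exact (hμmin x (interior_subset hxU) y hy).le
    have hz := hmin.hasFDerivAt_eq_zero hσ
    ext v
    have := DFunLike.congr_fun hz v
    simp only [ContinuousLinearMap.add_apply, ContinuousLinearMap.comp_apply,
      ContinuousLinearMap.sub_apply, ContinuousLinearMap.zero_apply,
      ContinuousLinearMap.id_apply, zero_sub, ContinuousLinearMap.neg_apply,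
      map_neg, ContinuousLinearMap.zero_apply] at this
    linarith
  -- derivative of h
  have hder : ∀ x ∈ W, HasFDerivAt (infConv f g) (fderiv ℝ f (μ x)) x := by
    intro x hx
    obtain ⟨⟨hxU, hxf⟩, hxg⟩ := hWsub hx
    have hdμ : DifferentiableAt ℝ μ x := (hμat x hxU).differentiableAt one_ne_zero
    have hdf : DifferentiableAt ℝ f (μ x) := (hfat _ hxf).differentiableAt two_ne_zero
    have hdg : DifferentiableAt ℝ g (x - μ x) := (hgat _ hxg).differentiableAt two_ne_zero
    have hφ : HasFDerivAt (fun x => f (μ x) + g (x - μ x))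
        ((fderiv ℝ f (μ x)).comp (fderiv ℝ μ x)
          + (fderiv ℝ g (x - μ x)).comp (ContinuousLinearMap.id ℝ (EuclideanSpace ℝ (Fin n)) - fderiv ℝ μ x)) x :=
      (hdf.hasFDerivAt.comp x hdμ.hasFDerivAt).add
        (hdg.hasFDerivAt.comp x ((hasFDerivAt_id x).sub hdμ.hasFDerivAt))
    have heq : infConv f g =ᶠ[𝓝 x] fun x => f (μ x) + g (x - μ x) := by
      filter_upwards [isOpen_interior.mem_nhds hxU] with y hy
      exact hval y (interior_subset hy)
    have h := hφ.congr_of_eventuallyEq heq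
    convert h using 1
    rw [← hfo x hx]
    ext v
    simp [map_sub]
  -- h is C² on W
  have hC2 : ContDiffOn ℝ 2 (infConv f g) W := by
    have h21 : (2 : WithTop ℕ∞) = 1 + 1 := by norm_num
    rw [h21, contDiffOn_succ_iff_fderiv_of_isOpen hWopen]
    refine ⟨fun x hx => (hder x hx).differentiableAt.differentiableWithinAt,
      by intro h; simp at h, ?_⟩
    have hc : ContDiffOn ℝ 1 (fun x => fderiv ℝ f (μ x)) W := by
      intro x hx
      obtain ⟨⟨hxU, hxf⟩, hxg⟩ := hWsub hx
      exact (((hfat _ hxf).fderiv_right le_rfl).comp x (hμat x hxU)).contDiffWithinAt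
    exact hc.congr fun x hx => (hder x hx).fderiv
  refine ⟨⟨W, hWopen.mem_nhds hW0, hC2⟩, W, hWopen.mem_nhds hW0, fun x hx => ?_⟩
  obtain ⟨⟨hxU, hxf⟩, hxg⟩ := hWsub hx
  have hdμ : DifferentiableAt ℝ μ x := (hμat x hxU).differentiableAt one_ne_zero
  have hd1 : fderiv ℝ (infConv f g) x = fderiv ℝ f (μ x) := (hder x hx).fderiv
  refine ⟨hval x (interior_subset hxU), hd1, hd1.trans (hfo x hx), fun u v => ?_⟩
  -- second derivative formulas
  have hddf : fderiv ℝ (fderiv ℝ (infConv f g)) x =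
      (fderiv ℝ (fderiv ℝ f) (μ x)).comp (fderiv ℝ μ x) := by
    have heq : fderiv ℝ (infConv f g) =ᶠ[𝓝 x] fun y => fderiv ℝ f (μ y) := by
      filter_upwards [hWopen.mem_nhds hx] with y hy
      exact (hder y hy).fderiv
    rw [heq.fderiv_eq]
    exact ((((hfat _ hxf).fderiv_right le_rfl).differentiableAt
      one_ne_zero).hasFDerivAt.comp x hdμ.hasFDerivAt).fderiv
  have hddg : fderiv ℝ (fderiv ℝ (infConv f g)) x =
      (fderiv ℝ (fderiv ℝ g) (x - μ x)).comp (ContinuousLinearMap.id ℝ (EuclideanSpace ℝ (Fin n)) - fderiv ℝ μ x) := by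
    have heq : fderiv ℝ (infConv f g) =ᶠ[𝓝 x] fun y => fderiv ℝ g (y - μ y) := by
      filter_upwards [hWopen.mem_nhds hx] with y hy
      exact ((hder y hy).fderiv).trans (hfo y hy)
    rw [heq.fderiv_eq]
    exact ((((hgat _ hxg).fderiv_right le_rfl).differentiableAt
      one_ne_zero).hasFDerivAt.comp x ((hasFDerivAt_id x).sub hdμ.hasFDerivAt)).fderiv
  have symh : IsSymmSndFDerivAt ℝ (infConv f g) x :=
    (hC2.contDiffAt (hWopen.mem_nhds hx)).isSymmSndFDerivAt (by simp)
  have symf : IsSymmSndFDerivAt ℝ f (μ x) := (hfat _ hxf).isSymmSndFDerivAt (by simp)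
  have symg : IsSymmSndFDerivAt ℝ g (x - μ x) := (hgat _ hxg).isSymmSndFDerivAt (by simp)
  constructor
  · rw [iteratedFDeriv_two_apply, iteratedFDeriv_two_apply]
    simp only [Matrix.cons_val_zero, Matrix.cons_val_one, Matrix.head_cons]
    rw [symh u v, hddg]
    simp only [ContinuousLinearMap.comp_apply, ContinuousLinearMap.sub_apply,
      ContinuousLinearMap.id_apply]
    exact symg (v - fderiv ℝ μ x v) u
  · rw [iteratedFDeriv_two_apply, iteratedFDeriv_two_apply]
    simp only [Matrix.cons_val_zero, Matrix.cons_val_one, Matrix.head_cons]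
    rw [symh u v, hddf]
    simp only [ContinuousLinearMap.comp_apply]
    exact symf (fderiv ℝ μ x v) u
end
end

section
/- Let n ≥ 1. Let f, g : ℝⁿ → [0,∞) be convex functions that are C² on a neighborhood of 0 with f(0) = 0 = g(0); for x ∈ ℝⁿ let σ_x(y) = f(y) + g(x − y), and assume Hess σ₀|_{y=0} is positive definite. Let μ be C¹ on a neighborhood U of 0 with μ(0) = 0 and such that μ(x) is the unique global minimizer of σ_x for each x ∈ U, and let h = f □ g. If Hess h|_{x=0} is positive definite, then Hess f and Hess g are positive definite at every point of some neighborhood of 0, and the linear maps Dμ(x) and Id − Dμ(x) are invertible for all x in some neighborhood of 0. -/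
open Set Filter Topology

noncomputable section

section Aux

variable {E : Type*} [NormedAddCommGroup E] [NormedSpace ℝ E]

/-- Iterated derivatives of eventually-equal functions agree. -/
lemma iteratedFDeriv_eq_of_eventuallyEq {f₁ f : E → ℝ} {x : E} (h : f₁ =ᶠ[𝓝 x] f) (n : ℕ) :
    iteratedFDeriv ℝ n f₁ x = iteratedFDeriv ℝ n f x := by
  rw [← iteratedFDerivWithin_univ (𝕜 := ℝ) (f := f₁), ← iteratedFDerivWithin_univ]
  exact Filter.EventuallyEq.iteratedFDerivWithin_eq
    (by simpa [nhdsWithin_univ] using h) h.self_of_nhds n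

/-- 1-D second derivative test: at a local minimum, the second derivative is nonnegative. -/
lemma second_deriv_nonneg_of_isLocalMin {q q' : ℝ → ℝ} {c : ℝ}
    (hq : ∀ᶠ t in 𝓝 (0:ℝ), HasDerivAt q (q' t) t)
    (hq' : HasDerivAt q' c 0) (hmin : IsLocalMin q 0) : 0 ≤ c := by
  by_contra hc
  push_neg at hc
  have hq'0 : q' 0 = 0 := hmin.hasDerivAt_eq_zero hq.self_of_nhds
  have hslope : Tendsto (slope q' 0) (𝓝[≠] (0:ℝ)) (𝓝 c) :=
    hasDerivAt_iff_tendsto_slope.mp hq'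
  have hev : ∀ᶠ t in 𝓝[>] (0:ℝ), slope q' 0 t < c / 2 := by
    refine (hslope.mono_left (nhdsWithin_mono _ ?_)).eventually (eventually_lt_nhds (by linarith))
    intro t ht; exact ne_of_gt ht
  have hev' : ∀ᶠ t in 𝓝[>] (0:ℝ), q' t < 0 := by
    filter_upwards [hev, self_mem_nhdsWithin] with t ht ht0
    have ht0' : (0:ℝ) < t := ht0
    have : (q' t - q' 0) / (t - 0) < c / 2 := by simpa [slope_def_field, div_eq_iff] using ht
    rw [hq'0, sub_zero, sub_zero, div_lt_iff₀ ht0'] at this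
    nlinarith
  obtain ⟨ε₁, hε₁, h1⟩ : ∃ ε > (0:ℝ), ∀ t ∈ Ioc 0 ε, q' t < 0 := by
    obtain ⟨u, hu, hsub⟩ := mem_nhdsGT_iff_exists_Ioc_subset.mp hev'
    exact ⟨u, hu, fun t ht => hsub ht⟩
  obtain ⟨ε₂, hε₂, h2⟩ := Metric.eventually_nhds_iff.mp hq
  set ε := min ε₁ (ε₂ / 2) with hεdef
  have hεpos : 0 < ε := lt_min hε₁ (by linarith)
  have hderiv : ∀ t ∈ Icc (0:ℝ) ε, HasDerivAt q (q' t) t := by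
    intro t ht
    apply h2
    rw [Real.dist_eq, sub_zero, abs_of_nonneg ht.1]
    calc t ≤ ε := ht.2
    _ ≤ ε₂ / 2 := min_le_right _ _
    _ < ε₂ := by linarith
  have hanti : StrictAntiOn q (Icc (0:ℝ) ε) := by
    apply strictAntiOn_of_deriv_neg (convex_Icc _ _)
    · exact fun t ht => (hderiv t ht).continuousAt.continuousWithinAt
    · intro t ht
      rw [interior_Icc] at ht
      rw [(hderiv t ⟨le_of_lt ht.1, le_of_lt ht.2⟩).deriv]
      exact h1 t ⟨ht.1, le_trans (le_of_lt ht.2) (min_le_left _ _)⟩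
  have hlt : q ε < q 0 :=
    hanti (left_mem_Icc.mpr (le_of_lt hεpos)) (right_mem_Icc.mpr (le_of_lt hεpos)) hεpos
  -- but local min: q 0 ≤ q t near 0; restrict to a point in (0, ε]
  obtain ⟨ε₃, hε₃, h3⟩ := Metric.eventually_nhds_iff.mp hmin
  set t := min ε (ε₃ / 2) with htdef
  have htpos : 0 < t := lt_min hεpos (by linarith)
  have h4 : q 0 ≤ q t := by
    apply h3
    rw [Real.dist_eq, sub_zero, abs_of_nonneg (le_of_lt htpos)]
    calc t ≤ ε₃ / 2 := min_le_right _ _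
      _ < ε₃ := by linarith
  have h5 : q t < q 0 := hanti (left_mem_Icc.mpr (le_of_lt hεpos))
    ⟨le_of_lt htpos, min_le_left _ _⟩ htpos
  linarith

/-- If a continuous family of bilinear forms is positive definite at `0`, it is positive
definite near `0`. -/
lemma posdef_eventually {E : Type*} [NormedAddCommGroup E] [NormedSpace ℝ E]
    [FiniteDimensional ℝ E] [Nontrivial E]
    {A : E → (ContinuousMultilinearMap ℝ (fun _ : Fin 2 => E) ℝ)} (hA : ContinuousAt A 0)
    (h0 : ∀ v : E, v ≠ 0 → 0 < A 0 ![v, v]) :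
    ∀ᶠ x in 𝓝 (0 : E), ∀ v : E, v ≠ 0 → 0 < A x ![v, v] := by
  have hconts : Continuous fun v : E => A 0 ![v, v] := by
    have h1 : Continuous fun v : E => (![v, v] : Fin 2 → E) := by
      apply continuous_pi
      intro i
      fin_cases i <;> exact continuous_id
    exact (A 0).coe_continuous.comp h1
  obtain ⟨u₀, hu₀mem, hu₀min⟩ := (isCompact_sphere (0:E) 1).exists_isMinOn
    (NormedSpace.sphere_nonempty.mpr zero_le_one) hconts.continuousOn
  have hu₀norm : ‖u₀‖ = 1 := by simpa using hu₀mem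
  have hu₀ne : u₀ ≠ 0 := by intro h; rw [h] at hu₀norm; simp at hu₀norm
  set m := A 0 ![u₀, u₀] with hm
  have hmpos : 0 < m := h0 u₀ hu₀ne
  have hev : ∀ᶠ x in 𝓝 (0:E), ‖A x - A 0‖ < m := by
    have : Tendsto A (𝓝 0) (𝓝 (A 0)) := hA
    have h2 : Tendsto (fun x => ‖A x - A 0‖) (𝓝 0) (𝓝 ‖A 0 - A 0‖) :=
      ((this.sub tendsto_const_nhds).norm)
    rw [sub_self, norm_zero] at h2
    exact h2.eventually (eventually_lt_nhds hmpos)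
  filter_upwards [hev] with x hx v hv
  set u := ‖v‖⁻¹ • v with hu
  have hvnorm : 0 < ‖v‖ := norm_pos_iff.mpr hv
  have hunorm : ‖u‖ = 1 := by
    rw [hu, norm_smul, norm_inv, norm_norm, inv_mul_cancel₀ (ne_of_gt hvnorm)]
  have husphere : u ∈ Metric.sphere (0:E) 1 := by simpa using hunorm
  -- bound : A x ![u,u] > 0
  have hb : |(A x - A 0) ![u, u]| ≤ ‖A x - A 0‖ := by
    have := (A x - A 0).le_opNorm ![u, u]
    simpa [Fin.prod_univ_two, hunorm] using this
  have h3 : m ≤ A 0 ![u, u] := hu₀min husphere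
  have hupos : 0 < A x ![u, u] := by
    have h4 : (A x - A 0) ![u, u] = A x ![u, u] - A 0 ![u, u] := by simp
    have h5 : -(A x ![u,u] - A 0 ![u,u]) ≤ ‖A x - A 0‖ := by
      rw [← h4]; exact neg_le_of_neg_le (neg_le_of_abs_le hb)
    linarith [hx, h3]
  -- scale back
  have hscale : A x ![v, v] = (‖v‖ * ‖v‖) * A x ![u, u] := by
    have h6 : (![v, v] : Fin 2 → E) = fun i => ‖v‖ • (![u, u] i) := by
      funext i
      fin_cases i <;> simp [hu, smul_smul, mul_inv_cancel₀ (ne_of_gt hvnorm)]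
    rw [h6]
    have h7 := (A x).toMultilinearMap.map_smul_univ (fun _ : Fin 2 => ‖v‖) ![u, u]
    simp only [ContinuousMultilinearMap.coe_coe] at h7
    rw [h7, Fin.prod_univ_two, smul_eq_mul]
  rw [hscale]
  positivity

/-- If `φ ≥ 0` near `0`, `φ 0 = 0`, and `φ` has a second derivative at `0`, then the second
derivative is positive semidefinite. -/
lemma second_fderiv_nonneg_of_nonneg {E : Type*} [NormedAddCommGroup E] [NormedSpace ℝ E]
    {φ : E → ℝ} {φ' : E → (E →L[ℝ] ℝ)} {A : E →L[ℝ] (E →L[ℝ] ℝ)}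
    (hd : ∀ᶠ x in 𝓝 (0:E), HasFDerivAt φ (φ' x) x)
    (hd' : HasFDerivAt φ' A 0)
    (hge : ∀ᶠ x in 𝓝 (0:E), 0 ≤ φ x) (h0 : φ 0 = 0)
    (v : E) : 0 ≤ A v v := by
  have hline : Tendsto (fun t : ℝ => t • v) (𝓝 0) (𝓝 (0:E)) := by
    have hc : Continuous fun t : ℝ => t • v := continuous_id.smul continuous_const
    have := hc.tendsto 0
    simpa using this
  have hq : ∀ᶠ t in 𝓝 (0:ℝ), HasDerivAt (fun t : ℝ => φ (t • v)) (φ' (t • v) v) t := by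
    filter_upwards [hline.eventually hd] with t hdt
    have hl : HasDerivAt (fun t : ℝ => t • v) v t := by
      simpa using (hasDerivAt_id t).smul_const v
    simpa [Function.comp_def] using hdt.comp_hasDerivAt t hl
  have hq' : HasDerivAt (fun t : ℝ => φ' (t • v) v) (A v v) 0 := by
    have h1 : HasFDerivAt (fun x => φ' x v) (A.flip v) 0 := by
      have := hd'.clm_apply (hasFDerivAt_const v (0:E))
      simpa using this
    have h0' : ((0:ℝ) • v : E) = 0 := by simp
    have h2 : HasFDerivAt (fun x => φ' x v) (A.flip v) ((0:ℝ) • v) := by rw [h0']; exact h1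
    have hl0 : HasDerivAt (fun t : ℝ => t • v) v 0 := by
      simpa using (hasDerivAt_id (0:ℝ)).smul_const v
    have := h2.comp_hasDerivAt 0 hl0
    simpa [Function.comp_def] using this
  have hmin : IsLocalMin (fun t : ℝ => φ (t • v)) 0 := by
    have hq0 : φ ((0:ℝ) • v) = 0 := by simpa using h0
    filter_upwards [hline.eventually hge] with t h
    show φ ((0:ℝ) • v) ≤ φ (t • v)
    rw [hq0]
    exact h
  exact second_deriv_nonneg_of_isLocalMin hq hq' hmin

end Aux

set_option maxHeartbeats 1000000 in
/-- Lemma 2.1(d) of the paper. If moreover `Hess (f □ g)` at `0` is positive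
definite, then `Hess f` and `Hess g` are positive definite at every point near `0`, and
`Dμ x` and `Id - Dμ x` are invertible for all `x` near `0`. -/
theorem stmt3 (n : ℕ) (hn : 1 ≤ n)
    (f g : EuclideanSpace ℝ (Fin n) → ℝ)
    (hfnn : ∀ x, 0 ≤ f x) (hgnn : ∀ x, 0 ≤ g x)
    (hfconv : ConvexOn ℝ Set.univ f) (hgconv : ConvexOn ℝ Set.univ g)
    (hfC2 : ∃ V ∈ 𝓝 (0 : EuclideanSpace ℝ (Fin n)), ContDiffOn ℝ 2 f V)
    (hgC2 : ∃ V ∈ 𝓝 (0 : EuclideanSpace ℝ (Fin n)), ContDiffOn ℝ 2 g V)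
    (hf0 : f 0 = 0) (hg0 : g 0 = 0)
    (hσpos : ∀ v : EuclideanSpace ℝ (Fin n), v ≠ 0 →
      0 < iteratedFDeriv ℝ 2 (fun y => f y + g (0 - y)) 0 ![v, v])
    (U : Set (EuclideanSpace ℝ (Fin n))) (hU : U ∈ 𝓝 (0 : EuclideanSpace ℝ (Fin n)))
    (μ : EuclideanSpace ℝ (Fin n) → EuclideanSpace ℝ (Fin n))
    (hμC1 : ContDiffOn ℝ 1 μ U) (hμ0 : μ 0 = 0)
    (hμmin : ∀ x ∈ U, ∀ y : EuclideanSpace ℝ (Fin n), y ≠ μ x →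
      f (μ x) + g (x - μ x) < f y + g (x - y))
    (hhpos : ∀ v : EuclideanSpace ℝ (Fin n), v ≠ 0 →
      0 < iteratedFDeriv ℝ 2 (infConv f g) 0 ![v, v]) :
    ∃ V ∈ 𝓝 (0 : EuclideanSpace ℝ (Fin n)), ∀ x ∈ V,
      (∀ v : EuclideanSpace ℝ (Fin n), v ≠ 0 → 0 < iteratedFDeriv ℝ 2 f x ![v, v]) ∧
      (∀ v : EuclideanSpace ℝ (Fin n), v ≠ 0 → 0 < iteratedFDeriv ℝ 2 g x ![v, v]) ∧
      Function.Bijective (fderiv ℝ μ x) ∧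
      Function.Bijective (⇑(ContinuousLinearMap.id ℝ (EuclideanSpace ℝ (Fin n)) - fderiv ℝ μ x)) := by
  clear hfconv hgconv hσpos
  obtain ⟨Vf, hVf, hf2⟩ := hfC2
  obtain ⟨Vg, hVg, hg2⟩ := hgC2
  haveI : Nontrivial (EuclideanSpace ℝ (Fin n)) :=
    ⟨⟨EuclideanSpace.single ⟨0, hn⟩ 1, 0, by
      intro h
      have := congrArg (fun w : EuclideanSpace ℝ (Fin n) => w ⟨0, hn⟩) h
      simp [EuclideanSpace.single] at this⟩⟩
  have hOf : interior Vf ∈ 𝓝 (0 : EuclideanSpace ℝ (Fin n)) := interior_mem_nhds.mpr hVf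
  have hOg : interior Vg ∈ 𝓝 (0 : EuclideanSpace ℝ (Fin n)) := interior_mem_nhds.mpr hVg
  have hUint : interior U ∈ 𝓝 (0 : EuclideanSpace ℝ (Fin n)) := interior_mem_nhds.mpr hU
  have hf2' : ∀ x ∈ interior Vf, ContDiffAt ℝ 2 f x := fun x hx =>
    (hf2.mono interior_subset).contDiffAt (isOpen_interior.mem_nhds hx)
  have hg2' : ∀ x ∈ interior Vg, ContDiffAt ℝ 2 g x := fun x hx =>
    (hg2.mono interior_subset).contDiffAt (isOpen_interior.mem_nhds hx)
  have hμ1 : ∀ x ∈ interior U, ContDiffAt ℝ 1 μ x := fun x hx =>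
    (hμC1.mono interior_subset).contDiffAt (isOpen_interior.mem_nhds hx)
  have h0U : (0 : EuclideanSpace ℝ (Fin n)) ∈ interior U := mem_of_mem_nhds hUint
  have h0f : (0 : EuclideanSpace ℝ (Fin n)) ∈ interior Vf := mem_of_mem_nhds hOf
  have h0g : (0 : EuclideanSpace ℝ (Fin n)) ∈ interior Vg := mem_of_mem_nhds hOg
  have hμtendsto : Tendsto μ (𝓝 0) (𝓝 (0 : EuclideanSpace ℝ (Fin n))) := by
    have := ((hμ1 0 h0U).continuousAt).tendsto
    rwa [hμ0] at this
  have hsubtendsto : Tendsto (fun x => x - μ x) (𝓝 0) (𝓝 (0 : EuclideanSpace ℝ (Fin n))) := by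
    have := (tendsto_id.sub hμtendsto)
    simpa using this
  -- eventual memberships
  have evμf : ∀ᶠ x in 𝓝 (0 : EuclideanSpace ℝ (Fin n)), μ x ∈ interior Vf := hμtendsto hOf
  have evsg : ∀ᶠ x in 𝓝 (0 : EuclideanSpace ℝ (Fin n)), x - μ x ∈ interior Vg := hsubtendsto hOg
  have evU : ∀ᶠ x in 𝓝 (0 : EuclideanSpace ℝ (Fin n)), x ∈ U := hU
  have evUi : ∀ᶠ x in 𝓝 (0 : EuclideanSpace ℝ (Fin n)), x ∈ interior U := hUint
  have evf : ∀ᶠ x in 𝓝 (0 : EuclideanSpace ℝ (Fin n)), x ∈ interior Vf := hOf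
  have evg : ∀ᶠ x in 𝓝 (0 : EuclideanSpace ℝ (Fin n)), x ∈ interior Vg := hOg
  -- first-order condition
  have hFOC : ∀ᶠ x in 𝓝 (0 : EuclideanSpace ℝ (Fin n)),
      fderiv ℝ f (μ x) = fderiv ℝ g (x - μ x) := by
    filter_upwards [evU, evμf, evsg] with x hxU hμf hxg
    have hmin' : IsLocalMin (fun y => f y + g (x - y)) (μ x) := by
      refine Filter.Eventually.of_forall fun y => ?_
      by_cases hy : y = μ x
      · simp [hy]
      · exact le_of_lt (hμmin x hxU y hy)
    have hfd : HasFDerivAt f (fderiv ℝ f (μ x)) (μ x) :=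
      ((hf2' _ hμf).differentiableAt (by norm_num)).hasFDerivAt
    have hgd : HasFDerivAt g (fderiv ℝ g (x - μ x)) (x - μ x) :=
      ((hg2' _ hxg).differentiableAt (by norm_num)).hasFDerivAt
    have hinner : HasFDerivAt (fun y : EuclideanSpace ℝ (Fin n) => x - y)
        (-(ContinuousLinearMap.id ℝ (EuclideanSpace ℝ (Fin n)))) (μ x) := by
      simpa using (hasFDerivAt_id (μ x)).const_sub x
    have hcomp : HasFDerivAt (fun y => g (x - y))
        ((fderiv ℝ g (x - μ x)).comp (-(ContinuousLinearMap.id ℝ (EuclideanSpace ℝ (Fin n)))))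
        (μ x) := hgd.comp _ hinner
    have hzero := hmin'.hasFDerivAt_eq_zero (hfd.add hcomp)
    ext w
    have h7 := DFunLike.congr_fun hzero w
    simp only [ContinuousLinearMap.add_apply, ContinuousLinearMap.comp_apply,
      ContinuousLinearMap.neg_apply, ContinuousLinearMap.id_apply, map_neg,
      ContinuousLinearMap.zero_apply] at h7
    linarith
  -- derivative of h tilde
  have hhd : ∀ᶠ x in 𝓝 (0 : EuclideanSpace ℝ (Fin n)),
      HasFDerivAt (fun x => f (μ x) + g (x - μ x)) (fderiv ℝ g (x - μ x)) x := by
    filter_upwards [evUi, evμf, evsg, hFOC] with x hxU hμf hxg hfoc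
    have hμd : HasFDerivAt μ (fderiv ℝ μ x) x :=
      ((hμ1 x hxU).differentiableAt one_ne_zero).hasFDerivAt
    have hfd : HasFDerivAt f (fderiv ℝ f (μ x)) (μ x) :=
      ((hf2' _ hμf).differentiableAt (by norm_num)).hasFDerivAt
    have hgd : HasFDerivAt g (fderiv ℝ g (x - μ x)) (x - μ x) :=
      ((hg2' _ hxg).differentiableAt (by norm_num)).hasFDerivAt
    have h1 : HasFDerivAt (fun x => f (μ x))
        ((fderiv ℝ f (μ x)).comp (fderiv ℝ μ x)) x := hfd.comp x hμd
    have hi : HasFDerivAt (fun x : EuclideanSpace ℝ (Fin n) => x - μ x)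
        (ContinuousLinearMap.id ℝ (EuclideanSpace ℝ (Fin n)) - fderiv ℝ μ x) x :=
      (hasFDerivAt_id x).sub hμd
    have h2 : HasFDerivAt (fun x => g (x - μ x))
        ((fderiv ℝ g (x - μ x)).comp
          (ContinuousLinearMap.id ℝ (EuclideanSpace ℝ (Fin n)) - fderiv ℝ μ x)) x :=
      hgd.comp x hi
    have h3 := h1.add h2
    refine HasFDerivAt.congr_fderiv h3 ?_
    rw [hfoc]
    ext w
    simp [map_sub]
  -- infConv agrees with the explicit minimizer formula near 0
  have hbdd : ∀ x : EuclideanSpace ℝ (Fin n),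
      BddBelow (Set.range fun y => f y + g (x - y)) := fun x =>
    ⟨0, by rintro _ ⟨z, rfl⟩; exact add_nonneg (hfnn z) (hgnn _)⟩
  have hICle : ∀ x y : EuclideanSpace ℝ (Fin n), infConv f g x ≤ f y + g (x - y) :=
    fun x y => ciInf_le (hbdd x) y
  have hICeq : ∀ x ∈ U, infConv f g x = f (μ x) + g (x - μ x) := by
    intro x hx
    refine le_antisymm (hICle x (μ x)) (le_ciInf fun y => ?_)
    by_cases hy : y = μ x
    · simp [hy]
    · exact le_of_lt (hμmin x hx y hy)
  have hICev : infConv f g =ᶠ[𝓝 (0 : EuclideanSpace ℝ (Fin n))]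
      fun x => f (μ x) + g (x - μ x) := by
    filter_upwards [evU] with x hx using hICeq x hx
  -- derivative of G at 0
  have hg1 : ContDiffAt ℝ 1 (fderiv ℝ g) 0 := (hg2' 0 h0g).fderiv_right (by norm_num)
  have hf1 : ContDiffAt ℝ 1 (fderiv ℝ f) 0 := (hf2' 0 h0f).fderiv_right (by norm_num)
  have hμd0 : HasFDerivAt μ (fderiv ℝ μ 0) 0 :=
    ((hμ1 0 h0U).differentiableAt one_ne_zero).hasFDerivAt
  have hi0 : HasFDerivAt (fun x : EuclideanSpace ℝ (Fin n) => x - μ x)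
      (ContinuousLinearMap.id ℝ (EuclideanSpace ℝ (Fin n)) - fderiv ℝ μ 0) 0 :=
    (hasFDerivAt_id 0).sub hμd0
  have hsub00 : (fun x : EuclideanSpace ℝ (Fin n) => x - μ x) 0 = 0 := by simp [hμ0]
  have hGd : HasFDerivAt (fun x => fderiv ℝ g (x - μ x))
      ((fderiv ℝ (fderiv ℝ g) 0).comp
        (ContinuousLinearMap.id ℝ (EuclideanSpace ℝ (Fin n)) - fderiv ℝ μ 0)) 0 := by
    have hgd' : HasFDerivAt (fderiv ℝ g) (fderiv ℝ (fderiv ℝ g) 0)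
        ((fun x : EuclideanSpace ℝ (Fin n) => x - μ x) 0) := by
      rw [hsub00]
      exact ((hg1.differentiableAt one_ne_zero).hasFDerivAt)
    exact hgd'.comp 0 hi0
  set B : (EuclideanSpace ℝ (Fin n)) →L[ℝ] ((EuclideanSpace ℝ (Fin n)) →L[ℝ] ℝ) :=
    (fderiv ℝ (fderiv ℝ g) 0).comp
      (ContinuousLinearMap.id ℝ (EuclideanSpace ℝ (Fin n)) - fderiv ℝ μ 0) with hB
  -- second derivative of h tilde at 0
  have hfdht : fderiv ℝ (fun x => f (μ x) + g (x - μ x)) =ᶠ[𝓝 (0 : EuclideanSpace ℝ (Fin n))]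
      fun x => fderiv ℝ g (x - μ x) := by
    filter_upwards [hhd] with x hx using hx.fderiv
  have hQh : ∀ v : EuclideanSpace ℝ (Fin n), v ≠ 0 → 0 < B v v := by
    intro v hv
    have h1 := hhpos v hv
    rw [iteratedFDeriv_eq_of_eventuallyEq hICev 2, iteratedFDeriv_two_apply] at h1
    rw [hfdht.fderiv_eq, hGd.fderiv] at h1
    simpa using h1
  -- Taylor comparison: Hess f 0 ≥ Hess h 0 and Hess g 0 ≥ Hess h 0
  have hfEvd : ∀ᶠ x in 𝓝 (0 : EuclideanSpace ℝ (Fin n)), HasFDerivAt f (fderiv ℝ f x) x := by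
    filter_upwards [evf] with x hx
    exact ((hf2' x hx).differentiableAt (by norm_num)).hasFDerivAt
  have hgEvd : ∀ᶠ x in 𝓝 (0 : EuclideanSpace ℝ (Fin n)), HasFDerivAt g (fderiv ℝ g x) x := by
    filter_upwards [evg] with x hx
    exact ((hg2' x hx).differentiableAt (by norm_num)).hasFDerivAt
  have hδfd : ∀ᶠ x in 𝓝 (0 : EuclideanSpace ℝ (Fin n)),
      HasFDerivAt (fun x => f x - (f (μ x) + g (x - μ x)))
        ((fun x => fderiv ℝ f x - fderiv ℝ g (x - μ x)) x) x := by
    filter_upwards [hfEvd, hhd] with x h1 h2 using h1.sub h2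
  have hδf'd : HasFDerivAt (fun x => fderiv ℝ f x - fderiv ℝ g (x - μ x))
      (fderiv ℝ (fderiv ℝ f) 0 - B) 0 :=
    ((hf1.differentiableAt one_ne_zero).hasFDerivAt).sub hGd
  have hδfge : ∀ᶠ x in 𝓝 (0 : EuclideanSpace ℝ (Fin n)),
      0 ≤ f x - (f (μ x) + g (x - μ x)) := by
    filter_upwards [evU] with x hx
    have h1 : infConv f g x ≤ f x := by
      have := hICle x x
      simpa [hg0] using this
    rw [hICeq x hx] at h1
    linarith
  have hδf0 : f 0 - (f (μ 0) + g (0 - μ 0)) = 0 := by simp [hμ0, hf0, hg0]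
  have hQf0 : ∀ v : EuclideanSpace ℝ (Fin n), v ≠ 0 → 0 < fderiv ℝ (fderiv ℝ f) 0 v v := by
    intro v hv
    have h1 := second_fderiv_nonneg_of_nonneg hδfd hδf'd hδfge hδf0 v
    have h2 := hQh v hv
    simp only [ContinuousLinearMap.sub_apply] at h1
    linarith
  have hδgd : ∀ᶠ x in 𝓝 (0 : EuclideanSpace ℝ (Fin n)),
      HasFDerivAt (fun x => g x - (f (μ x) + g (x - μ x)))
        ((fun x => fderiv ℝ g x - fderiv ℝ g (x - μ x)) x) x := by
    filter_upwards [hgEvd, hhd] with x h1 h2 using h1.sub h2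
  have hδg'd : HasFDerivAt (fun x => fderiv ℝ g x - fderiv ℝ g (x - μ x))
      (fderiv ℝ (fderiv ℝ g) 0 - B) 0 :=
    ((hg1.differentiableAt one_ne_zero).hasFDerivAt).sub hGd
  have hδgge : ∀ᶠ x in 𝓝 (0 : EuclideanSpace ℝ (Fin n)),
      0 ≤ g x - (f (μ x) + g (x - μ x)) := by
    filter_upwards [evU] with x hx
    have h1 : infConv f g x ≤ g x := by
      have := hICle x 0
      simpa [hf0] using this
    rw [hICeq x hx] at h1
    linarith
  have hδg0 : g 0 - (f (μ 0) + g (0 - μ 0)) = 0 := by simp [hμ0, hf0, hg0]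
  have hQg0 : ∀ v : EuclideanSpace ℝ (Fin n), v ≠ 0 → 0 < fderiv ℝ (fderiv ℝ g) 0 v v := by
    intro v hv
    have h1 := second_fderiv_nonneg_of_nonneg hδgd hδg'd hδgge hδg0 v
    have h2 := hQh v hv
    simp only [ContinuousLinearMap.sub_apply] at h1
    linarith
  have hitf0 : ∀ v : EuclideanSpace ℝ (Fin n), v ≠ 0 →
      0 < iteratedFDeriv ℝ 2 f 0 ![v, v] := by
    intro v hv
    rw [iteratedFDeriv_two_apply]
    simpa using hQf0 v hv
  have hitg0 : ∀ v : EuclideanSpace ℝ (Fin n), v ≠ 0 →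
      0 < iteratedFDeriv ℝ 2 g 0 ![v, v] := by
    intro v hv
    rw [iteratedFDeriv_two_apply]
    simpa using hQg0 v hv
  -- positive definiteness on a neighborhood
  have hAfc : ContinuousAt (iteratedFDeriv ℝ 2 f) 0 := by
    have h1 : ContinuousOn (iteratedFDerivWithin ℝ 2 f (interior Vf)) (interior Vf) :=
      (hf2.mono interior_subset).continuousOn_iteratedFDerivWithin (by norm_num)
        isOpen_interior.uniqueDiffOn
    have h2 : ContinuousOn (iteratedFDeriv ℝ 2 f) (interior Vf) :=
      h1.congr fun x hx => (iteratedFDerivWithin_of_isOpen 2 isOpen_interior hx).symm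
    exact h2.continuousAt hOf
  have hAgc : ContinuousAt (iteratedFDeriv ℝ 2 g) 0 := by
    have h1 : ContinuousOn (iteratedFDerivWithin ℝ 2 g (interior Vg)) (interior Vg) :=
      (hg2.mono interior_subset).continuousOn_iteratedFDerivWithin (by norm_num)
        isOpen_interior.uniqueDiffOn
    have h2 : ContinuousOn (iteratedFDeriv ℝ 2 g) (interior Vg) :=
      h1.congr fun x hx => (iteratedFDerivWithin_of_isOpen 2 isOpen_interior hx).symm
    exact h2.continuousAt hOg
  have hfposev : ∀ᶠ x in 𝓝 (0 : EuclideanSpace ℝ (Fin n)),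
      ∀ v : EuclideanSpace ℝ (Fin n), v ≠ 0 → 0 < iteratedFDeriv ℝ 2 f x ![v, v] :=
    posdef_eventually hAfc hitf0
  have hgposev : ∀ᶠ x in 𝓝 (0 : EuclideanSpace ℝ (Fin n)),
      ∀ v : EuclideanSpace ℝ (Fin n), v ≠ 0 → 0 < iteratedFDeriv ℝ 2 g x ![v, v] :=
    posdef_eventually hAgc hitg0
  -- invertibility of Dμ and I - Dμ
  have evμSf : ∀ᶠ x in 𝓝 (0 : EuclideanSpace ℝ (Fin n)),
      ∀ v : EuclideanSpace ℝ (Fin n), v ≠ 0 → 0 < iteratedFDeriv ℝ 2 f (μ x) ![v, v] :=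
    hμtendsto.eventually hfposev
  have evsSg : ∀ᶠ x in 𝓝 (0 : EuclideanSpace ℝ (Fin n)),
      ∀ v : EuclideanSpace ℝ (Fin n), v ≠ 0 → 0 < iteratedFDeriv ℝ 2 g (x - μ x) ![v, v] :=
    hsubtendsto.eventually hgposev
  have hFOCint : ∀ᶠ x in 𝓝 (0 : EuclideanSpace ℝ (Fin n)),
      x ∈ interior {x | fderiv ℝ f (μ x) = fderiv ℝ g (x - μ x)} :=
    interior_mem_nhds.mpr hFOC
  have hbijev : ∀ᶠ x in 𝓝 (0 : EuclideanSpace ℝ (Fin n)),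
      Function.Bijective (fderiv ℝ μ x) ∧
      Function.Bijective (⇑(ContinuousLinearMap.id ℝ (EuclideanSpace ℝ (Fin n)) - fderiv ℝ μ x)) := by
    filter_upwards [hFOCint, evUi, evμf, evsg, evμSf, evsSg] with x hxFOC hxU hμf hxg hposf hposg
    have hμd : HasFDerivAt μ (fderiv ℝ μ x) x :=
      ((hμ1 x hxU).differentiableAt one_ne_zero).hasFDerivAt
    have hf1x : ContDiffAt ℝ 1 (fderiv ℝ f) (μ x) := (hf2' _ hμf).fderiv_right (by norm_num)
    have hg1x : ContDiffAt ℝ 1 (fderiv ℝ g) (x - μ x) := (hg2' _ hxg).fderiv_right (by norm_num)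
    have hF1 : HasFDerivAt (fun x => fderiv ℝ f (μ x))
        ((fderiv ℝ (fderiv ℝ f) (μ x)).comp (fderiv ℝ μ x)) x :=
      ((hf1x.differentiableAt one_ne_zero).hasFDerivAt).comp x hμd
    have hix : HasFDerivAt (fun x : EuclideanSpace ℝ (Fin n) => x - μ x)
        (ContinuousLinearMap.id ℝ (EuclideanSpace ℝ (Fin n)) - fderiv ℝ μ x) x :=
      (hasFDerivAt_id x).sub hμd
    have hF2 : HasFDerivAt (fun x => fderiv ℝ g (x - μ x))
        ((fderiv ℝ (fderiv ℝ g) (x - μ x)).comp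
          (ContinuousLinearMap.id ℝ (EuclideanSpace ℝ (Fin n)) - fderiv ℝ μ x)) x :=
      ((hg1x.differentiableAt one_ne_zero).hasFDerivAt).comp x hix
    have heqfun : (fun x => fderiv ℝ f (μ x)) =ᶠ[𝓝 x]
        (fun x => fderiv ℝ g (x - μ x)) := by
      filter_upwards [isOpen_interior.mem_nhds hxFOC] with y hy
      exact (interior_subset hy :
        y ∈ {x | fderiv ℝ f (μ x) = fderiv ℝ g (x - μ x)})
    have heq : (fderiv ℝ (fderiv ℝ f) (μ x)).comp (fderiv ℝ μ x)
        = (fderiv ℝ (fderiv ℝ g) (x - μ x)).comp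
          (ContinuousLinearMap.id ℝ (EuclideanSpace ℝ (Fin n)) - fderiv ℝ μ x) := by
      rw [← hF1.fderiv, ← hF2.fderiv]
      exact heqfun.fderiv_eq
    have hker1 : ∀ w : EuclideanSpace ℝ (Fin n), fderiv ℝ μ x w = 0 → w = 0 := by
      intro w hw
      by_contra hwne
      have h1 := DFunLike.congr_fun heq w
      simp only [ContinuousLinearMap.comp_apply, ContinuousLinearMap.sub_apply,
        ContinuousLinearMap.id_apply, hw, map_zero, sub_zero] at h1
      have h2 := hposg w hwne
      rw [iteratedFDeriv_two_apply] at h2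
      simp only [Matrix.cons_val_zero, Matrix.cons_val_one, Matrix.head_cons] at h2
      have h3 := DFunLike.congr_fun h1 w
      simp only [ContinuousLinearMap.zero_apply] at h3
      linarith
    have hker2 : ∀ w : EuclideanSpace ℝ (Fin n), w - fderiv ℝ μ x w = 0 → w = 0 := by
      intro w hw
      by_contra hwne
      have h1 := DFunLike.congr_fun heq w
      simp only [ContinuousLinearMap.comp_apply, ContinuousLinearMap.sub_apply,
        ContinuousLinearMap.id_apply, hw, map_zero] at h1
      have hμw : fderiv ℝ μ x w = w := by
        have := sub_eq_zero.mp hw; exact this.symm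
      rw [hμw] at h1
      have h2 := hposf w hwne
      rw [iteratedFDeriv_two_apply] at h2
      simp only [Matrix.cons_val_zero, Matrix.cons_val_one, Matrix.head_cons] at h2
      have h3 := DFunLike.congr_fun h1 w
      simp only [ContinuousLinearMap.zero_apply] at h3
      linarith
    have hinj1 : Function.Injective ⇑(fderiv ℝ μ x) := by
      intro a b hab
      have := hker1 (a - b) (by rw [map_sub, hab, sub_self])
      exact sub_eq_zero.mp this
    have hinj2 : Function.Injective
        ⇑(ContinuousLinearMap.id ℝ (EuclideanSpace ℝ (Fin n)) - fderiv ℝ μ x) := by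
      intro a b hab
      simp only [ContinuousLinearMap.sub_apply, ContinuousLinearMap.id_apply] at hab
      have h4 : (a - b) - fderiv ℝ μ x (a - b) = 0 := by
        rw [map_sub]
        have h5 : a - fderiv ℝ μ x a = b - fderiv ℝ μ x b := hab
        abel_nf
        abel_nf at h5
        linear_combination (norm := abel_nf) h5
      have := hker2 (a - b) h4
      exact sub_eq_zero.mp this
    refine ⟨⟨hinj1, ?_⟩, ⟨hinj2, ?_⟩⟩
    · exact LinearMap.injective_iff_surjective.mp hinj1
    · exact LinearMap.injective_iff_surjective.mp hinj2
  -- conclusion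
  have hfinal : ∀ᶠ x in 𝓝 (0 : EuclideanSpace ℝ (Fin n)),
      (∀ v : EuclideanSpace ℝ (Fin n), v ≠ 0 → 0 < iteratedFDeriv ℝ 2 f x ![v, v]) ∧
      (∀ v : EuclideanSpace ℝ (Fin n), v ≠ 0 → 0 < iteratedFDeriv ℝ 2 g x ![v, v]) ∧
      Function.Bijective (fderiv ℝ μ x) ∧
      Function.Bijective
        (⇑(ContinuousLinearMap.id ℝ (EuclideanSpace ℝ (Fin n)) - fderiv ℝ μ x)) := by
    filter_upwards [hfposev, hgposev, hbijev] with x h1 h2 h3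
    exact ⟨h1, h2, h3.1, h3.2⟩
  exact ⟨_, hfinal, fun x hx => hx⟩
end
end

section
/- Let n ≥ 1. Let f, g : ℝⁿ → [0,∞) be convex functions that are C² on a neighborhood of 0 with f(0) = 0 = g(0); for x ∈ ℝⁿ let σ_x(y) = f(y) + g(x − y). Let μ be C¹ on a neighborhood U of 0 with μ(0) = 0 and such that μ(x) is the unique global minimizer of σ_x for each x ∈ U, and let h = f □ g. If Hess f|_{x=0} is positive definite, then there is a neighborhood V of 0 such that Id − Dμ(x) is invertible for all x ∈ V, and for every x ∈ V the following are equivalent: (1) Hess h|_x is positive definite; (2) Hess g|_{x−μ(x)} is positive definite; (3) Dμ(x) is invertible. -/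
open Set Filter Topology

noncomputable section

set_option maxHeartbeats 2000000

lemma psd_ker {E : Type*} [NormedAddCommGroup E] [NormedSpace ℝ E]
    (B : E →L[ℝ] E →L[ℝ] ℝ) (hB0 : ∀ v, 0 ≤ B v v) (hBs : ∀ v w, B v w = B w v)
    {v : E} (hv : B v v = 0) : B v = 0 := by
  ext w
  have e : ∀ t : ℝ, 0 ≤ 2 * t * (B v w) + t ^ 2 * (B w w) := by
    intro t
    have h := hB0 (v + t • w)
    simp only [map_add, map_smul, ContinuousLinearMap.add_apply, ContinuousLinearMap.smul_apply,
      smul_eq_mul] at h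
    rw [hBs w v] at h
    nlinarith [h]
  set b := B v w with hbdef
  set c := B w w with hcdef
  have hw : 0 ≤ c := hB0 w
  have h1 : (0:ℝ) < 1 + c := by linarith
  have h1' : (1 + c) ≠ 0 := ne_of_gt h1
  set t := -b / (1 + c) with htdef
  have hbt : b = -(t * (1 + c)) := by
    rw [htdef]; field_simp
  have ht := e t
  rw [hbt] at ht
  have hts : t ^ 2 * (2 + c) ≤ 0 := by nlinarith [ht]
  have ht2 : t ^ 2 ≤ 0 := by nlinarith [hts, sq_nonneg t]
  have : t ^ 2 = 0 := le_antisymm ht2 (sq_nonneg t)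
  have ht0 : t = 0 := pow_eq_zero_iff (n := 2) (by norm_num) |>.mp this
  have : b = 0 := by rw [hbt, ht0]; ring
  simpa [hbdef] using this

lemma inj_of_ker {E F : Type*} [NormedAddCommGroup E] [NormedSpace ℝ E]
    [NormedAddCommGroup F] [NormedSpace ℝ F]
    (M : E →L[ℝ] F) (h : ∀ v, M v = 0 → v = 0) : Function.Injective ⇑M := by
  intro a b hab
  have : M (a - b) = 0 := by rw [map_sub, hab, sub_self]
  have := h _ this
  exact sub_eq_zero.mp this

lemma endgame {E : Type*} [NormedAddCommGroup E] [NormedSpace ℝ E] [FiniteDimensional ℝ E]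
    (A B : E →L[ℝ] E →L[ℝ] ℝ) (M : E →L[ℝ] E)
    (hA : ∀ v, v ≠ 0 → 0 < A v v) (hB0 : ∀ v, 0 ≤ B v v) (hBs : ∀ v w, B v w = B w v)
    (key : ∀ v, A (M v) = B (v - M v)) :
    Function.Bijective ⇑(ContinuousLinearMap.id ℝ E - M) ∧
    ((∀ v, v ≠ 0 → 0 < A (M v) v) ↔ (∀ v, v ≠ 0 → 0 < B v v)) ∧
    ((∀ v, v ≠ 0 → 0 < A (M v) v) ↔ Function.Bijective ⇑M) := by
  have hA0 : ∀ v, 0 ≤ A v v := by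
    intro v
    rcases eq_or_ne v 0 with rfl | hv
    · simp
    · exact (hA v hv).le
  have bij_of_inj : ∀ (T : E →L[ℝ] E), Function.Injective ⇑T → Function.Bijective ⇑T := by
    intro T hT
    have h2 := (LinearMap.injective_iff_surjective (f := (T : E →ₗ[ℝ] E))).mp hT
    exact ⟨hT, h2⟩
  -- from B v v = 0 deduce M v = 0
  have hker : ∀ v, B v v = 0 → M v = 0 := by
    intro v hv
    have hBv := psd_ker B hB0 hBs hv
    have h1 : A (M v) = - B (M v) := by
      have := key v
      rw [map_sub, hBv] at this
      simpa using this
    have h2 : A (M v) (M v) = - B (M v) (M v) := by rw [h1]; simp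
    have h3 : A (M v) (M v) = 0 := le_antisymm (by have := hB0 (M v); linarith) (hA0 (M v))
    by_contra hMv
    exact absurd h3 (ne_of_gt (hA _ hMv))
  -- B posdef → M injective
  have inj_of_B : (∀ v, v ≠ 0 → 0 < B v v) → Function.Injective ⇑M := by
    intro hB
    apply inj_of_ker
    intro v hv
    by_contra hv0
    have h := key v
    rw [hv, sub_zero, map_zero] at h
    have : B v v = 0 := by rw [← h]; simp
    exact absurd this (ne_of_gt (hB v hv0))
  -- H posdef → B posdef
  have B_of_H : (∀ v, v ≠ 0 → 0 < A (M v) v) → (∀ v, v ≠ 0 → 0 < B v v) := by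
    intro hH v hv
    rcases lt_or_eq_of_le (hB0 v) with h | h
    · exact h
    have hMv := hker v h.symm
    have : A (M v) v = 0 := by rw [hMv]; simp
    exact absurd this (ne_of_gt (hH v hv))
  -- B posdef → H posdef
  have H_of_B : (∀ v, v ≠ 0 → 0 < B v v) → (∀ v, v ≠ 0 → 0 < A (M v) v) := by
    intro hB v hv
    have hMv : M v ≠ 0 := by
      intro h0
      exact hv ((inj_of_B hB).eq_iff.mp (by rw [h0, map_zero]) : v = 0)
    have e1 : A (M v) v = A (M v) (M v) + A (M v) (v - M v) := by
      rw [map_sub]; ring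
    have e2 : A (M v) (v - M v) = B (v - M v) (v - M v) := by rw [key v]
    have := hB0 (v - M v)
    calc 0 < A (M v) (M v) := hA _ hMv
      _ ≤ A (M v) (M v) + B (v - M v) (v - M v) := by linarith
      _ = A (M v) v := by rw [e1, e2]
  refine ⟨?_, ?_, ?_⟩
  · apply bij_of_inj
    apply inj_of_ker
    intro v hv
    have hsub : v - M v = 0 := by simpa using hv
    have hMv : M v = v := (sub_eq_zero.mp hsub).symm
    have hAv : A v = 0 := by
      have h := key v
      rw [hMv, sub_self, map_zero] at h
      exact h
    by_contra h0
    exact absurd (by rw [hAv]; simp : A v v = 0) (ne_of_gt (hA v h0))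
  · exact ⟨B_of_H, H_of_B⟩
  · constructor
    · intro hH
      exact bij_of_inj M (inj_of_B (B_of_H hH))
    · intro hM
      apply H_of_B
      intro v hv
      rcases lt_or_eq_of_le (hB0 v) with h | h
      · exact h
      have hMv := hker v h.symm
      have : v = 0 := hM.injective (by rw [hMv, map_zero])
      exact absurd this hv

/-- Second derivative of a convex function is positive semidefinite. -/
lemma convex_snd_nonneg {E : Type*} [NormedAddCommGroup E] [NormedSpace ℝ E]
    (g : E → ℝ) (hg : ConvexOn ℝ Set.univ g) {Og : Set E} (hOg : IsOpen Og)
    (hgC2 : ContDiffOn ℝ 2 g Og) {p : E} (hp : p ∈ Og) (v : E) :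
    0 ≤ fderiv ℝ (fderiv ℝ g) p v v := by
  have hgat : ∀ q ∈ Og, ContDiffAt ℝ 2 g q := fun q hq =>
    (hgC2 q hq).contDiffAt (hOg.mem_nhds hq)
  have hgd : ∀ q ∈ Og, HasFDerivAt g (fderiv ℝ g q) q := fun q hq =>
    ((hgat q hq).differentiableAt (by norm_num)).hasFDerivAt
  have hG' : HasFDerivAt (fderiv ℝ g) (fderiv ℝ (fderiv ℝ g) p) p := by
    have h1 : ContDiffAt ℝ 1 (fderiv ℝ g) p := (hgat p hp).fderiv_right (by norm_num)
    exact (h1.differentiableAt (by norm_num)).hasFDerivAt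
  set B := fderiv ℝ (fderiv ℝ g) p with hBdef
  -- the line through p in direction v
  set c : ℝ → E := fun t => p + t • v with hcdef
  have hcc : Continuous c := by fun_prop
  have hcd : ∀ t : ℝ, HasDerivAt c v t := by
    intro t
    have h := ((hasDerivAt_id t).smul_const v).const_add p
    simpa [hcdef] using h
  obtain ⟨ε, hε, hball⟩ := Metric.isOpen_iff.mp (hOg.preimage hcc) 0 (by simp [hcdef, hp])
  set φ : ℝ → ℝ := fun t => g (c t) with hφdef
  set ψ : ℝ → ℝ := fun t => fderiv ℝ g (c t) v with hψdef
  have hφconv : ConvexOn ℝ Set.univ φ := by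
    have := hg.comp_affineMap (AffineMap.lineMap p (p + v))
    have he : φ = g ∘ (AffineMap.lineMap p (p + v)) := by
      funext t
      simp [hφdef, hcdef, AffineMap.lineMap_apply, add_comm]
    rw [he]
    simpa using this
  have hφd : ∀ t ∈ Metric.ball (0:ℝ) ε, HasDerivAt φ (ψ t) t := by
    intro t ht
    exact (hgd (c t) (hball ht)).comp_hasDerivAt t (hcd t)
  -- ψ is monotone-ish around 0
  have hmono : ∀ t ∈ Metric.ball (0:ℝ) ε, (0 < t → ψ 0 ≤ ψ t) ∧ (t < 0 → ψ t ≤ ψ 0) := by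
    intro t ht
    have h0 : (0:ℝ) ∈ Metric.ball (0:ℝ) ε := by simpa using hε
    constructor
    · intro htpos
      have h1 := hφconv.le_slope_of_hasDerivAt (mem_univ 0) (mem_univ t) htpos (hφd 0 h0)
      have h2 := hφconv.slope_le_of_hasDerivAt (mem_univ 0) (mem_univ t) htpos (hφd t ht)
      linarith
    · intro htneg
      have h1 := hφconv.le_slope_of_hasDerivAt (mem_univ t) (mem_univ 0) htneg (hφd t ht)
      have h2 := hφconv.slope_le_of_hasDerivAt (mem_univ t) (mem_univ 0) htneg (hφd 0 h0)
      linarith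
  -- ψ has derivative B v v at 0
  have hψd : HasDerivAt ψ (B v v) 0 := by
    have hc0 : c 0 = p := by simp [hcdef]
    have hG'' : HasFDerivAt (fderiv ℝ g) B (c 0) := by rw [hc0]; exact hG'
    have h1 : HasDerivAt (fun t => fderiv ℝ g (c t)) (B v) 0 :=
      hG''.comp_hasDerivAt 0 (hcd 0)
    have h2 := (ContinuousLinearMap.apply ℝ ℝ v).hasFDerivAt.comp_hasDerivAt 0 h1
    exact h2
  -- conclude via slopes
  have hslope := hasDerivAt_iff_tendsto_slope.mp hψd
  refine ge_of_tendsto hslope ?_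
  have hmem : Metric.ball (0:ℝ) ε \ {0} ∈ 𝓝[≠] (0:ℝ) :=
    diff_mem_nhdsWithin_compl (Metric.ball_mem_nhds 0 hε) {0}
  filter_upwards [hmem] with t ht
  obtain ⟨htb, ht0⟩ := ht
  have ht0' : t ≠ 0 := ht0
  rw [slope_def_field]
  rcases lt_or_gt_of_ne ht0' with h | h
  · have h2 := (hmono t htb).2 h
    exact div_nonneg_of_nonpos (by linarith) (by linarith)
  · have h2 := (hmono t htb).1 h
    exact div_nonneg (by linarith) (by linarith)

lemma posdef_modulus {E : Type*} [NormedAddCommGroup E] [NormedSpace ℝ E]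
    [FiniteDimensional ℝ E] [Nontrivial E]
    (A : E →L[ℝ] E →L[ℝ] ℝ) (hA : ∀ v, v ≠ 0 → 0 < A v v) :
    ∃ c > 0, ∀ v, c * ‖v‖ ^ 2 ≤ A v v := by
  have hQc : Continuous fun v : E => A v v := by fun_prop
  have hne : (Metric.sphere (0:E) 1).Nonempty := NormedSpace.sphere_nonempty.mpr zero_le_one
  obtain ⟨v₀, hv₀, hmin⟩ := (isCompact_sphere (0:E) 1).exists_isMinOn hne hQc.continuousOn
  have hv₀n : ‖v₀‖ = 1 := mem_sphere_zero_iff_norm.mp hv₀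
  have hv₀0 : v₀ ≠ 0 := by intro h; rw [h] at hv₀n; simp at hv₀n
  refine ⟨A v₀ v₀, hA v₀ hv₀0, ?_⟩
  intro v
  rcases eq_or_ne v 0 with rfl | hv
  · simp
  have hnv : (0:ℝ) < ‖v‖ := norm_pos_iff.mpr hv
  have hu : (‖v‖⁻¹ • v) ∈ Metric.sphere (0:E) 1 := by
    simp [norm_smul, abs_of_pos (inv_pos.mpr hnv), inv_mul_cancel₀ hnv.ne']
  have h1 : A v₀ v₀ ≤ A (‖v‖⁻¹ • v) (‖v‖⁻¹ • v) := hmin hu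
  have h2 : A (‖v‖⁻¹ • v) (‖v‖⁻¹ • v) = ‖v‖⁻¹ * (‖v‖⁻¹ * A v v) := by
    simp [map_smul]
  rw [h2] at h1
  have h3 : A v₀ v₀ * ‖v‖ ^ 2 ≤ ‖v‖⁻¹ * (‖v‖⁻¹ * A v v) * ‖v‖ ^ 2 :=
    mul_le_mul_of_nonneg_right h1 (sq_nonneg _)
  have h4 : ‖v‖⁻¹ * (‖v‖⁻¹ * A v v) * ‖v‖ ^ 2 = A v v := by
    rw [pow_two]
    field_simp
  linarith [h3, h4.symm.le]

theorem stmt4_aux {E : Type*} [NormedAddCommGroup E] [NormedSpace ℝ E]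
    [FiniteDimensional ℝ E] [Nontrivial E]
    (f g : E → ℝ)
    (hfnn : ∀ x, 0 ≤ f x) (hgnn : ∀ x, 0 ≤ g x)
    (hfconv : ConvexOn ℝ Set.univ f) (hgconv : ConvexOn ℝ Set.univ g)
    (hfC2 : ∃ V ∈ 𝓝 (0 : E), ContDiffOn ℝ 2 f V)
    (hgC2 : ∃ V ∈ 𝓝 (0 : E), ContDiffOn ℝ 2 g V)
    (U : Set E) (hU : U ∈ 𝓝 (0 : E))
    (μ : E → E)
    (hμC1 : ContDiffOn ℝ 1 μ U) (hμ0 : μ 0 = 0)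
    (hμmin : ∀ x ∈ U, ∀ y : E, y ≠ μ x →
      f (μ x) + g (x - μ x) < f y + g (x - y))
    (hfpos : ∀ v : E, v ≠ 0 →
      0 < iteratedFDeriv ℝ 2 f 0 ![v, v]) :
    ∃ V ∈ 𝓝 (0 : E),
      (∀ x ∈ V, Function.Bijective
        (⇑(ContinuousLinearMap.id ℝ E - fderiv ℝ μ x))) ∧
      ∀ x ∈ V,
        ((∀ v : E, v ≠ 0 →
            0 < iteratedFDeriv ℝ 2 (infConv f g) x ![v, v]) ↔
          (∀ v : E, v ≠ 0 →
            0 < iteratedFDeriv ℝ 2 g (x - μ x) ![v, v])) ∧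
        ((∀ v : E, v ≠ 0 →
            0 < iteratedFDeriv ℝ 2 (infConv f g) x ![v, v]) ↔
          Function.Bijective (fderiv ℝ μ x)) := by
  classical
  obtain ⟨Vf, hVf, hfC2'⟩ := hfC2
  obtain ⟨Vg, hVg, hgC2'⟩ := hgC2
  set Of := interior Vf with hOfdef
  set Og := interior Vg with hOgdef
  have hOfo : IsOpen Of := isOpen_interior
  have hOgo : IsOpen Og := isOpen_interior
  have h0f : (0:E) ∈ Of := mem_interior_iff_mem_nhds.mpr hVf
  have h0g : (0:E) ∈ Og := mem_interior_iff_mem_nhds.mpr hVg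
  have hfOf : ContDiffOn ℝ 2 f Of := hfC2'.mono interior_subset
  have hgOg : ContDiffOn ℝ 2 g Og := hgC2'.mono interior_subset
  -- the value of the infimal convolution
  have hval : ∀ x ∈ U, infConv f g x = f (μ x) + g (x - μ x) := by
    intro x hx
    apply le_antisymm
    · apply ciInf_le _ (μ x)
      refine ⟨0, ?_⟩
      rintro r ⟨y, rfl⟩
      exact add_nonneg (hfnn y) (hgnn _)
    · apply le_ciInf
      intro y
      rcases eq_or_ne y (μ x) with rfl | hy
      · exact le_rfl
      · exact (hμmin x hx y hy).le
  -- basic differentiability facts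
  have hfat : ∀ y ∈ Of, HasFDerivAt f (fderiv ℝ f y) y := fun y hy =>
    (((hfOf y hy).contDiffAt (hOfo.mem_nhds hy)).differentiableAt (by norm_num)).hasFDerivAt
  have hgat : ∀ y ∈ Og, HasFDerivAt g (fderiv ℝ g y) y := fun y hy =>
    (((hgOg y hy).contDiffAt (hOgo.mem_nhds hy)).differentiableAt (by norm_num)).hasFDerivAt
  have hf2 : ∀ y ∈ Of, HasFDerivAt (fderiv ℝ f) (fderiv ℝ (fderiv ℝ f) y) y := fun y hy =>
    (((((hfOf y hy).contDiffAt (hOfo.mem_nhds hy)).fderiv_right (m := 1)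
      (by norm_num)).differentiableAt (by norm_num))).hasFDerivAt
  have hg2 : ∀ y ∈ Og, HasFDerivAt (fderiv ℝ g) (fderiv ℝ (fderiv ℝ g) y) y := fun y hy =>
    (((((hgOg y hy).contDiffAt (hOgo.mem_nhds hy)).fderiv_right (m := 1)
      (by norm_num)).differentiableAt (by norm_num))).hasFDerivAt
  have hμd : ∀ x ∈ interior U, HasFDerivAt μ (fderiv ℝ μ x) x := fun x hx =>
    (((hμC1 x (interior_subset hx)).contDiffAt
      (mem_interior_iff_mem_nhds.mp hx)).differentiableAt (by norm_num)).hasFDerivAt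
  -- first-order condition
  have heq : ∀ x ∈ U, μ x ∈ Of → x - μ x ∈ Og →
      fderiv ℝ f (μ x) = fderiv ℝ g (x - μ x) := by
    intro x hx hmf hmg
    have hmin : IsLocalMin (fun y => f y + g (x - y)) (μ x) := by
      apply Filter.Eventually.of_forall
      intro y
      rcases eq_or_ne y (μ x) with rfl | hy
      · exact le_rfl
      · exact (hμmin x hx y hy).le
    have h2a : HasFDerivAt (fun y : E => x - y)
        ((0 : E →L[ℝ] E) - ContinuousLinearMap.id ℝ E) (μ x) :=
      (hasFDerivAt_const x (μ x)).sub (hasFDerivAt_id (μ x))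
    have h2 : HasFDerivAt (fun y : E => x - y)
        (-(ContinuousLinearMap.id ℝ E)) (μ x) := by
      simpa using h2a
    have h3 := (hgat _ hmg).comp (μ x) h2
    have h4 := (hfat _ hmf).add h3
    have hd : HasFDerivAt (fun y => f y + g (x - y))
        (fderiv ℝ f (μ x) - fderiv ℝ g (x - μ x)) (μ x) := by
      have hL : fderiv ℝ f (μ x) - fderiv ℝ g (x - μ x) = fderiv ℝ f (μ x) +
          (fderiv ℝ g (x - μ x)).comp (-(ContinuousLinearMap.id ℝ E)) := by
        ext w
        simp [sub_eq_add_neg]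
      rw [hL]; exact h4
    have h0 := hmin.fderiv_eq_zero
    rw [hd.fderiv] at h0
    exact sub_eq_zero.mp h0
  -- first derivative of the infimal convolution
  have hQ : ∀ x, x ∈ interior U → μ x ∈ Of → x - μ x ∈ Og →
      HasFDerivAt (infConv f g) (fderiv ℝ g (x - μ x)) x := by
    intro x hxU hmf hmg
    have hμx := hμd x hxU
    have h1 := (hfat _ hmf).comp x hμx
    have h2 : HasFDerivAt (fun x' => x' - μ x')
        (ContinuousLinearMap.id ℝ E - fderiv ℝ μ x) x :=
      (hasFDerivAt_id x).sub hμx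
    have h3 := (hgat _ hmg).comp x h2
    have h4 := h1.add h3
    have h5 : HasFDerivAt (fun x' => f (μ x') + g (x' - μ x'))
        (fderiv ℝ g (x - μ x)) x := by
      have hL : fderiv ℝ g (x - μ x) = (fderiv ℝ f (μ x)).comp (fderiv ℝ μ x) +
          (fderiv ℝ g (x - μ x)).comp (ContinuousLinearMap.id ℝ E - fderiv ℝ μ x) := by
        ext w
        have he := heq x (interior_subset hxU) hmf hmg
        simp only [ContinuousLinearMap.add_apply, ContinuousLinearMap.comp_apply,
          ContinuousLinearMap.sub_apply, ContinuousLinearMap.id_apply, ContinuousLinearMap.coe_sub',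
          Pi.sub_apply, map_sub, he]
        ring
      rw [hL]; exact h4
    have hev : infConv f g =ᶠ[𝓝 x] fun x' => f (μ x') + g (x' - μ x') := by
      filter_upwards [isOpen_interior.eventually_mem hxU] with x' hx'
      exact hval x' (interior_subset hx')
    exact h5.congr_of_eventuallyEq hev
  -- second derivative of the infimal convolution
  have main : ∀ x, x ∈ interior U → μ x ∈ Of → x - μ x ∈ Og →
      HasFDerivAt (fderiv ℝ (infConv f g))
        ((fderiv ℝ (fderiv ℝ f) (μ x)).comp (fderiv ℝ μ x)) x ∧
      HasFDerivAt (fderiv ℝ (infConv f g))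
        ((fderiv ℝ (fderiv ℝ g) (x - μ x)).comp
          (ContinuousLinearMap.id ℝ E - fderiv ℝ μ x)) x := by
    intro x hxU hmf hmg
    have hμx := hμd x hxU
    have hμcx : ContinuousAt μ x := hμx.differentiableAt.continuousAt
    have hevc : ∀ᶠ x' in 𝓝 x, x' ∈ interior U ∧ μ x' ∈ Of ∧ x' - μ x' ∈ Og := by
      have e1 := isOpen_interior.eventually_mem hxU
      have e2 := hμcx.eventually_mem (hOfo.mem_nhds hmf)
      have e3 : ContinuousAt (fun x' => x' - μ x') x := continuousAt_id.sub hμcx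
      have e4 := e3.eventually_mem (hOgo.mem_nhds hmg)
      filter_upwards [e1, e2, e4] with x' h1 h2 h3
      exact ⟨h1, h2, h3⟩
    have hev1 : fderiv ℝ (infConv f g) =ᶠ[𝓝 x] fun x' => fderiv ℝ g (x' - μ x') := by
      filter_upwards [hevc] with x' hx'
      exact (hQ x' hx'.1 hx'.2.1 hx'.2.2).fderiv
    have hev2 : fderiv ℝ (infConv f g) =ᶠ[𝓝 x] fun x' => fderiv ℝ f (μ x') := by
      filter_upwards [hevc] with x' hx'
      rw [(hQ x' hx'.1 hx'.2.1 hx'.2.2).fderiv, heq x' (interior_subset hx'.1) hx'.2.1 hx'.2.2]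
    constructor
    · have h1 : HasFDerivAt (fun x' => fderiv ℝ f (μ x'))
          ((fderiv ℝ (fderiv ℝ f) (μ x)).comp (fderiv ℝ μ x)) x :=
        (hf2 _ hmf).comp x hμx
      exact h1.congr_of_eventuallyEq hev2
    · have h2 : HasFDerivAt (fun x' => x' - μ x')
          (ContinuousLinearMap.id ℝ E - fderiv ℝ μ x) x := (hasFDerivAt_id x).sub hμx
      have h3 : HasFDerivAt (fun x' => fderiv ℝ g (x' - μ x'))
          ((fderiv ℝ (fderiv ℝ g) (x - μ x)).comp
            (ContinuousLinearMap.id ℝ E - fderiv ℝ μ x)) x :=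
        (hg2 _ hmg).comp x h2
      exact h3.congr_of_eventuallyEq hev1
  -- positive definiteness of Hess f at 0, with a modulus
  have hA0pos : ∀ v : E, v ≠ 0 → 0 < fderiv ℝ (fderiv ℝ f) 0 v v := by
    intro v hv
    have h := hfpos v hv
    rwa [iteratedFDeriv_two_apply, show (![v, v] : Fin 2 → E) 0 = v from rfl,
      show (![v, v] : Fin 2 → E) 1 = v from rfl] at h
  obtain ⟨c, hc, hcbound⟩ := posdef_modulus _ hA0pos
  -- continuity of the second derivative of f at 0
  have hF2c : ContinuousAt (fun y => fderiv ℝ (fderiv ℝ f) y) 0 := by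
    have h1 : ContDiffAt ℝ 1 (fderiv ℝ f) 0 :=
      ((hfOf 0 h0f).contDiffAt (hOfo.mem_nhds h0f)).fderiv_right (by norm_num)
    have h2 : ContDiffAt ℝ 0 (fderiv ℝ (fderiv ℝ f)) 0 := h1.fderiv_right (by norm_num)
    exact h2.continuousAt
  have h0U : (0:E) ∈ interior U := mem_interior_iff_mem_nhds.mpr hU
  have hμc0 : ContinuousAt μ 0 := (hμd 0 h0U).differentiableAt.continuousAt
  -- the neighborhood V
  have hVmem : ∀ᶠ x in 𝓝 (0:E), x ∈ interior U ∧ μ x ∈ Of ∧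
      ‖fderiv ℝ (fderiv ℝ f) (μ x) - fderiv ℝ (fderiv ℝ f) 0‖ < c / 2 ∧ x - μ x ∈ Og := by
    have e1 := isOpen_interior.eventually_mem h0U
    have e2 : ∀ᶠ y in 𝓝 (0:E), y ∈ Of := hOfo.eventually_mem h0f
    have e3 : ∀ᶠ y in 𝓝 (0:E),
        ‖fderiv ℝ (fderiv ℝ f) y - fderiv ℝ (fderiv ℝ f) 0‖ < c / 2 := by
      have := hF2c.eventually_mem (Metric.ball_mem_nhds (fderiv ℝ (fderiv ℝ f) 0)
        (by linarith : (0:ℝ) < c / 2))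
      filter_upwards [this] with y hy
      exact lt_of_eq_of_lt (dist_eq_norm (fderiv ℝ (fderiv ℝ f) y) (fderiv ℝ (fderiv ℝ f) 0)).symm hy
    have hμt : Tendsto μ (𝓝 0) (𝓝 (0:E)) := by
      have := hμc0.tendsto
      rwa [hμ0] at this
    have e2' := hμt.eventually e2
    have e3' := hμt.eventually e3
    have hsubt : Tendsto (fun x => x - μ x) (𝓝 (0:E)) (𝓝 (0:E)) := by
      have h := (continuousAt_id.sub hμc0).tendsto
      have h' : Tendsto (fun x => x - μ x) (𝓝 (0:E)) (𝓝 (0 - μ 0)) := h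
      simpa [hμ0] using h'
    have e4 := hsubt.eventually ((hOgo.eventually_mem h0g))
    filter_upwards [e1, e2', e3', e4] with x h1 h2 h3 h4
    exact ⟨h1, h2, h3, h4⟩
  have final : ∀ x, x ∈ interior U → μ x ∈ Of →
      ‖fderiv ℝ (fderiv ℝ f) (μ x) - fderiv ℝ (fderiv ℝ f) 0‖ < c / 2 → x - μ x ∈ Og →
      (Function.Bijective ⇑(ContinuousLinearMap.id ℝ E - fderiv ℝ μ x)) ∧
      ((∀ v : E, v ≠ 0 → 0 < iteratedFDeriv ℝ 2 (infConv f g) x ![v, v]) ↔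
        (∀ v : E, v ≠ 0 → 0 < iteratedFDeriv ℝ 2 g (x - μ x) ![v, v])) ∧
      ((∀ v : E, v ≠ 0 → 0 < iteratedFDeriv ℝ 2 (infConv f g) x ![v, v]) ↔
        Function.Bijective ⇑(fderiv ℝ μ x)) := by
    intro x h1 h2 h3 h4
    set A := fderiv ℝ (fderiv ℝ f) (μ x) with hAdef
    set A₀ := fderiv ℝ (fderiv ℝ f) 0 with hA0def
    set B := fderiv ℝ (fderiv ℝ g) (x - μ x) with hBdef
    set M := fderiv ℝ μ x with hMdef
    have hApos : ∀ v : E, v ≠ 0 → 0 < A v v := by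
      intro v hv
      have hb := hcbound v
      have hnv : (0:ℝ) < ‖v‖ := norm_pos_iff.mpr hv
      have hd1 : ‖(A - A₀) v‖ ≤ ‖A - A₀‖ * ‖v‖ := ContinuousLinearMap.le_opNorm _ v
      have hd2 : ‖(A - A₀) v v‖ ≤ ‖(A - A₀) v‖ * ‖v‖ := ContinuousLinearMap.le_opNorm _ v
      have happ : (A - A₀) v v = A v v - A₀ v v := by simp
      have habs : |A v v - A₀ v v| ≤ ‖A - A₀‖ * ‖v‖ * ‖v‖ := by
        rw [← happ, ← Real.norm_eq_abs]
        calc ‖(A - A₀) v v‖ ≤ ‖(A - A₀) v‖ * ‖v‖ := hd2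
          _ ≤ ‖A - A₀‖ * ‖v‖ * ‖v‖ :=
            mul_le_mul_of_nonneg_right hd1 (norm_nonneg v)
      have h5 := (abs_le.mp habs).1
      have hpow : ‖v‖ ^ 2 = ‖v‖ * ‖v‖ := sq ‖v‖
      have hprod : ‖A - A₀‖ * ‖v‖ * ‖v‖ < c / 2 * (‖v‖ * ‖v‖) := by
        rw [mul_assoc]
        exact mul_lt_mul_of_pos_right h3 (mul_pos hnv hnv)
      nlinarith [hb, h5, hprod, mul_pos hnv hnv, hpow]
    have hB0 : ∀ v : E, 0 ≤ B v v := fun v => convex_snd_nonneg g hgconv hOgo hgOg h4 v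
    have hBs : ∀ v w : E, B v w = B w v := by
      intro v w
      apply second_derivative_symmetric_of_eventually (f := g) (f' := fderiv ℝ g)
      · filter_upwards [hOgo.eventually_mem h4] with y hy
        exact hgat y hy
      · exact hg2 _ h4
    have hmain := main x h1 h2 h4
    have hABM : A.comp M = B.comp (ContinuousLinearMap.id ℝ E - M) := hmain.1.unique hmain.2
    have key : ∀ v, A (M v) = B (v - M v) := by
      intro v
      have h := ContinuousLinearMap.ext_iff.mp hABM v
      simpa using h
    obtain ⟨hbij, hiff1, hiff2⟩ := endgame A B M hApos hB0 hBs key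
    have hIC : ∀ v : E, iteratedFDeriv ℝ 2 (infConv f g) x ![v, v] = A (M v) v := by
      intro v
      rw [iteratedFDeriv_two_apply, hmain.1.fderiv]
      simp
      rfl
    have hICg : ∀ v : E, iteratedFDeriv ℝ 2 g (x - μ x) ![v, v] = B v v := by
      intro v
      rw [iteratedFDeriv_two_apply]
      simp [hBdef]
    refine ⟨hbij, ?_, ?_⟩
    · simp only [hIC, hICg]
      exact hiff1
    · simp only [hIC]
      exact hiff2
  refine ⟨_, hVmem, ?_, ?_⟩
  · rintro x ⟨h1, h2, h3, h4⟩
    exact (final x h1 h2 h3 h4).1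
  · rintro x ⟨h1, h2, h3, h4⟩
    exact ⟨(final x h1 h2 h3 h4).2.1, (final x h1 h2 h3 h4).2.2⟩

/-- Lemma 2.2 of the paper (first part). If `Hess f` at `0` is positive
definite, then `Id - Dμ x` is invertible near `0` and `Hess h|_x > 0  ⇔
Hess g|_{x - μ x} > 0  ⇔  Dμ x invertible` for all `x` near `0`. -/
theorem stmt4 (n : ℕ) (hn : 1 ≤ n)
    (f g : EuclideanSpace ℝ (Fin n) → ℝ)
    (hfnn : ∀ x, 0 ≤ f x) (hgnn : ∀ x, 0 ≤ g x)
    (hfconv : ConvexOn ℝ Set.univ f) (hgconv : ConvexOn ℝ Set.univ g)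
    (hfC2 : ∃ V ∈ 𝓝 (0 : EuclideanSpace ℝ (Fin n)), ContDiffOn ℝ 2 f V)
    (hgC2 : ∃ V ∈ 𝓝 (0 : EuclideanSpace ℝ (Fin n)), ContDiffOn ℝ 2 g V)
    (hf0 : f 0 = 0) (hg0 : g 0 = 0)
    (U : Set (EuclideanSpace ℝ (Fin n))) (hU : U ∈ 𝓝 (0 : EuclideanSpace ℝ (Fin n)))
    (μ : EuclideanSpace ℝ (Fin n) → EuclideanSpace ℝ (Fin n))
    (hμC1 : ContDiffOn ℝ 1 μ U) (hμ0 : μ 0 = 0)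
    (hμmin : ∀ x ∈ U, ∀ y : EuclideanSpace ℝ (Fin n), y ≠ μ x →
      f (μ x) + g (x - μ x) < f y + g (x - y))
    (hfpos : ∀ v : EuclideanSpace ℝ (Fin n), v ≠ 0 →
      0 < iteratedFDeriv ℝ 2 f 0 ![v, v]) :
    ∃ V ∈ 𝓝 (0 : EuclideanSpace ℝ (Fin n)),
      (∀ x ∈ V, Function.Bijective
        (⇑(ContinuousLinearMap.id ℝ (EuclideanSpace ℝ (Fin n)) - fderiv ℝ μ x))) ∧
      ∀ x ∈ V,
        ((∀ v : EuclideanSpace ℝ (Fin n), v ≠ 0 →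
            0 < iteratedFDeriv ℝ 2 (infConv f g) x ![v, v]) ↔
          (∀ v : EuclideanSpace ℝ (Fin n), v ≠ 0 →
            0 < iteratedFDeriv ℝ 2 g (x - μ x) ![v, v])) ∧
        ((∀ v : EuclideanSpace ℝ (Fin n), v ≠ 0 →
            0 < iteratedFDeriv ℝ 2 (infConv f g) x ![v, v]) ↔
          Function.Bijective (fderiv ℝ μ x)) := by
  haveI : Nontrivial (EuclideanSpace ℝ (Fin n)) := by
    apply Module.nontrivial_of_finrank_pos (R := ℝ)
    rw [finrank_euclideanSpace_fin]
    omega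
  exact stmt4_aux f g hfnn hgnn hfconv hgconv hfC2 hgC2 U hU μ hμC1 hμ0 hμmin hfpos
end
end

section
/- Let n ≥ 1, let k ≥ 2 be an integer and α ∈ [0,1]. Let f, g : ℝⁿ → [0,∞) be convex functions that are C² on a neighborhood of 0 with f(0) = 0 = g(0), and let h = f □ g. If Hess f|_{x=0} is positive definite and both f and h are C^{k,α} near 0, then g is C^{k,α} near 0. -/
set_option linter.unusedSectionVars false
set_option linter.unusedVariables false


open Set Filter Topology

noncomputable section

/-- `f` is `C^{k,α}` near `x₀`: on some open neighborhood of `x₀` it is `C^k` and its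
`k`-th derivative is `α`-Hölder continuous there. -/
def CkAlphaNear {E F : Type*} [NormedAddCommGroup E] [NormedSpace ℝ E]
    [NormedAddCommGroup F] [NormedSpace ℝ F]
    (k : ℕ) (α : ℝ) (f : E → F) (x₀ : E) : Prop :=
  ∃ U : Set E, IsOpen U ∧ x₀ ∈ U ∧ ContDiffOn ℝ k f U ∧
    ∃ C : ℝ, ∀ y ∈ U, ∀ z ∈ U,
      ‖iteratedFDeriv ℝ k f y - iteratedFDeriv ℝ k f z‖ ≤ C * ‖y - z‖ ^ α

namespace Stmt5Aux

/-- `α`-Hölder with constant `C` on a set. -/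
def HoldOn {E F : Type*} [NormedAddCommGroup E] [NormedAddCommGroup F]
    (C α : ℝ) (φ : E → F) (s : Set E) : Prop :=
  ∀ y ∈ s, ∀ z ∈ s, ‖φ y - φ z‖ ≤ C * ‖y - z‖ ^ α

variable {E F G : Type*} [NormedAddCommGroup E] [NormedSpace ℝ E]
  [NormedAddCommGroup F] [NormedSpace ℝ F] [NormedAddCommGroup G] [NormedSpace ℝ G]

lemma HoldOn.mono {C α : ℝ} {φ : E → F} {s t : Set E} (h : HoldOn C α φ s) (hts : t ⊆ s) :
    HoldOn C α φ t := fun y hy z hz => h y (hts hy) z (hts hz)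

lemma HoldOn.nonneg_aux {C α : ℝ} {φ : E → F} {s : Set E} (h : HoldOn C α φ s)
    (hs : s.Nonempty) : ∃ C' ≥ 0, HoldOn C' α φ s := by
  refine ⟨max C 0, le_max_right _ _, fun y hy z hz => (h y hy z hz).trans ?_⟩
  have : (0:ℝ) ≤ ‖y - z‖ ^ α := Real.rpow_nonneg (norm_nonneg _) _
  nlinarith [le_max_left C 0]

/-- `t ≤ d`, `0 ≤ t` implies `t ≤ d ^ (1 - α) * t ^ α` for `α ∈ [0,1]`. -/
lemma le_rpow_mul_rpow {t d α : ℝ} (ht : 0 ≤ t) (htd : t ≤ d) (hα0 : 0 ≤ α) (hα1 : α ≤ 1) :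
    t ≤ d ^ (1 - α) * t ^ α := by
  rcases eq_or_lt_of_le ht with h0 | ht
  · have hd : 0 ≤ d := le_trans (h0.symm ▸ le_rfl : (0:ℝ) ≤ t) htd
    rcases eq_or_lt_of_le hα0 with hα | hα
    · rw [← h0, ← hα]
      simpa using hd
    · rw [← h0, Real.zero_rpow (ne_of_gt hα)]
      simp
  · have hd : 0 < d := lt_of_lt_of_le ht htd
    calc t = t ^ (1 - α) * t ^ α := by
            rw [← Real.rpow_add ht, sub_add_cancel, Real.rpow_one]
      _ ≤ d ^ (1 - α) * t ^ α := by
            have h1 : t ^ (1 - α) ≤ d ^ (1 - α) :=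
              Real.rpow_le_rpow ht.le htd (by linarith)
            have h2 : (0:ℝ) ≤ t ^ α := Real.rpow_nonneg ht.le _
            nlinarith

/-- A Lipschitz bound on a set of diameter `≤ d` gives a Hölder bound. -/
lemma holdOn_of_lip {L d α : ℝ} {φ : E → F} {s : Set E}
    (hL : 0 ≤ L) (hd : 0 ≤ d)
    (hlip : ∀ y ∈ s, ∀ z ∈ s, ‖φ y - φ z‖ ≤ L * ‖y - z‖)
    (hdiam : ∀ y ∈ s, ∀ z ∈ s, ‖y - z‖ ≤ d)
    (hα0 : 0 ≤ α) (hα1 : α ≤ 1) :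
    HoldOn (L * d ^ (1 - α)) α φ s := by
  intro y hy z hz
  calc ‖φ y - φ z‖ ≤ L * ‖y - z‖ := hlip y hy z hz
    _ ≤ L * (d ^ (1 - α) * ‖y - z‖ ^ α) := by
        gcongr
        exact le_rpow_mul_rpow (norm_nonneg _) (hdiam y hy z hz) hα0 hα1
    _ = L * d ^ (1 - α) * ‖y - z‖ ^ α := by ring

/-- Hölder composed with Lipschitz is Hölder. -/
lemma HoldOn.comp_lip {C L α : ℝ} {φ : F → G} {ψ : E → F} {s : Set E} {t : Set F}
    (hC : 0 ≤ C) (hL : 0 ≤ L) (hα : 0 ≤ α)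
    (hφ : HoldOn C α φ t) (hmaps : MapsTo ψ s t)
    (hlip : ∀ y ∈ s, ∀ z ∈ s, ‖ψ y - ψ z‖ ≤ L * ‖y - z‖) :
    HoldOn (C * L ^ α) α (fun x => φ (ψ x)) s := by
  intro y hy z hz
  calc ‖φ (ψ y) - φ (ψ z)‖ ≤ C * ‖ψ y - ψ z‖ ^ α := hφ _ (hmaps hy) _ (hmaps hz)
    _ ≤ C * (L * ‖y - z‖) ^ α := by
        gcongr
        exact hlip y hy z hz
    _ = C * L ^ α * ‖y - z‖ ^ α := by rw [Real.mul_rpow hL (norm_nonneg _)]; ring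

/-- Lipschitz composed with Hölder is Hölder. -/
lemma HoldOn.lip_comp {C L α : ℝ} {φ : F → G} {ψ : E → F} {s : Set E} {t : Set F}
    (hL : 0 ≤ L)
    (hlip : ∀ y ∈ t, ∀ z ∈ t, ‖φ y - φ z‖ ≤ L * ‖y - z‖)
    (hmaps : MapsTo ψ s t)
    (hψ : HoldOn C α ψ s) :
    HoldOn (L * C) α (fun x => φ (ψ x)) s := by
  intro y hy z hz
  calc ‖φ (ψ y) - φ (ψ z)‖ ≤ L * ‖ψ y - ψ z‖ := hlip _ (hmaps hy) _ (hmaps hz)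
    _ ≤ L * (C * ‖y - z‖ ^ α) := by gcongr; exact hψ y hy z hz
    _ = L * C * ‖y - z‖ ^ α := by ring




variable {E F G : Type*} [NormedAddCommGroup E] [NormedSpace ℝ E]
  [NormedAddCommGroup F] [NormedSpace ℝ F] [NormedAddCommGroup G] [NormedSpace ℝ G]
variable {k : ℕ} {α : ℝ}

lemma norm_itfd_sub_zero (φ : E → F) (y z : E) :
    ‖iteratedFDeriv ℝ 0 φ y - iteratedFDeriv ℝ 0 φ z‖ = ‖φ y - φ z‖ := by
  rw [iteratedFDeriv_zero_eq_comp, Function.comp_apply, Function.comp_apply]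
  simp only [← dist_eq_norm, LinearIsometryEquiv.dist_map]

lemma norm_itfd_sub_succ (φ : E → F) (n : ℕ) (y z : E) :
    ‖iteratedFDeriv ℝ (n + 1) φ y - iteratedFDeriv ℝ (n + 1) φ z‖
      = ‖iteratedFDeriv ℝ n (fderiv ℝ φ) y - iteratedFDeriv ℝ n (fderiv ℝ φ) z‖ := by
  rw [iteratedFDeriv_succ_eq_comp_right (n := n) (f := φ) (x := y),
    iteratedFDeriv_succ_eq_comp_right (n := n) (f := φ) (x := z), Function.comp_apply,
    Function.comp_apply]
  simp only [← dist_eq_norm, LinearIsometryEquiv.dist_map]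

lemma norm_fderiv_itfd (φ : E → F) (n : ℕ) (x : E) :
    ‖fderiv ℝ (iteratedFDeriv ℝ n φ) x‖ = ‖iteratedFDeriv ℝ (n + 1) φ x‖ := by
  have h := congrFun (iteratedFDeriv_succ_eq_comp_left (𝕜 := ℝ) (f := φ) (n := n)) x
  rw [h, Function.comp_apply, LinearIsometryEquiv.norm_map]

lemma itfd_congr_on_open {φ ψ : E → F} {U : Set E} (hU : IsOpen U) (h : EqOn φ ψ U) {x : E}
    (hx : x ∈ U) (n : ℕ) : iteratedFDeriv ℝ n φ x = iteratedFDeriv ℝ n ψ x := by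
  rw [← iteratedFDerivWithin_of_isOpen n hU hx, ← iteratedFDerivWithin_of_isOpen (f := ψ) n hU hx,
    iteratedFDerivWithin_congr h hx]

lemma CkAlphaNear.congr {φ ψ : E → F} {x₀ : E} (h : CkAlphaNear k α φ x₀)
    (heq : ψ =ᶠ[𝓝 x₀] φ) : CkAlphaNear k α ψ x₀ := by
  obtain ⟨U, hUo, hxU, hcd, C, hC⟩ := h
  obtain ⟨V, hVsub, hVo, hxV⟩ := mem_nhds_iff.1 heq
  have hEq : EqOn ψ φ (U ∩ V) := fun x hx => hVsub hx.2
  refine ⟨U ∩ V, hUo.inter hVo, ⟨hxU, hxV⟩, (hcd.mono inter_subset_left).congr hEq, C,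
    fun y hy z hz => ?_⟩
  rw [itfd_congr_on_open (hUo.inter hVo) hEq hy, itfd_congr_on_open (hUo.inter hVo) hEq hz]
  exact hC y hy.1 z hz.1

/-- Lipschitz bound for the `j`-th derivative of a `C^m` function, `j < m`, on a closed ball. -/
lemma lip_itfd [FiniteDimensional ℝ E] {φ : E → F} {U : Set E} {x₀ : E} {r : ℝ} {m j : ℕ}
    (hU : IsOpen U) (hφ : ContDiffOn ℝ m φ U) (hj : j < m) (hball : Metric.closedBall x₀ r ⊆ U) :
    ∃ L, 0 ≤ L ∧ ∀ y ∈ Metric.closedBall x₀ r, ∀ z ∈ Metric.closedBall x₀ r,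
      ‖iteratedFDeriv ℝ j φ y - iteratedFDeriv ℝ j φ z‖ ≤ L * ‖y - z‖ := by
  have heq : EqOn (iteratedFDerivWithin ℝ j φ U) (iteratedFDeriv ℝ j φ) U :=
    iteratedFDerivWithin_of_isOpen j hU
  have hdiff : DifferentiableOn ℝ (iteratedFDeriv ℝ j φ) U :=
    (hφ.differentiableOn_iteratedFDerivWithin (by exact_mod_cast hj) hU.uniqueDiffOn).congr
      fun x hx => (heq hx).symm
  have heq' : EqOn (iteratedFDerivWithin ℝ (j + 1) φ U) (iteratedFDeriv ℝ (j + 1) φ) U :=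
    iteratedFDerivWithin_of_isOpen (j + 1) hU
  have hcont : ContinuousOn (iteratedFDeriv ℝ (j + 1) φ) U :=
    (hφ.continuousOn_iteratedFDerivWithin (by exact_mod_cast hj) hU.uniqueDiffOn).congr
      fun x hx => (heq' hx).symm
  obtain ⟨M, hM⟩ := (isCompact_closedBall x₀ r).exists_bound_of_continuousOn (hcont.mono hball)
  refine ⟨max M 0, le_max_right _ _, fun y hy z hz => ?_⟩
  have := Convex.norm_image_sub_le_of_norm_hasFDerivWithin_le
    (f := iteratedFDeriv ℝ j φ) (f' := fun x => fderiv ℝ (iteratedFDeriv ℝ j φ) x)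
    (s := Metric.closedBall x₀ r) (C := max M 0)
    (fun x hx => ((hdiff.differentiableAt (hU.mem_nhds (hball hx))).hasFDerivAt).hasFDerivWithinAt)
    (fun x hx => by rw [norm_fderiv_itfd]; exact (hM x hx).trans (le_max_left _ _))
    (convex_closedBall x₀ r) hz hy
  simpa [norm_sub_rev] using this

lemma bnd_itfd [FiniteDimensional ℝ E] {φ : E → F} {U : Set E} {x₀ : E} {r : ℝ} {m j : ℕ}
    (hU : IsOpen U) (hφ : ContDiffOn ℝ m φ U) (hj : j ≤ m) (hball : Metric.closedBall x₀ r ⊆ U) :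
    ∃ M, ∀ y ∈ Metric.closedBall x₀ r, ‖iteratedFDeriv ℝ j φ y‖ ≤ M := by
  have heq : EqOn (iteratedFDerivWithin ℝ j φ U) (iteratedFDeriv ℝ j φ) U :=
    iteratedFDerivWithin_of_isOpen j hU
  have hcont : ContinuousOn (iteratedFDeriv ℝ j φ) U :=
    (hφ.continuousOn_iteratedFDerivWithin (by exact_mod_cast hj) hU.uniqueDiffOn).congr
      fun x hx => (heq hx).symm
  exact (isCompact_closedBall x₀ r).exists_bound_of_continuousOn (hcont.mono hball)

/-- A function that is `C^{k+1}` near a point is `C^{k,α}` near it. -/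
lemma ckAlphaNear_of_contDiffOn_succ [FiniteDimensional ℝ E] {φ : E → F} {U : Set E} {x₀ : E}
    (hU : IsOpen U) (hx : x₀ ∈ U) (hφ : ContDiffOn ℝ (k + 1) φ U)
    (hα0 : 0 ≤ α) (hα1 : α ≤ 1) : CkAlphaNear k α φ x₀ := by
  obtain ⟨r, hr, hball⟩ := Metric.nhds_basis_closedBall.mem_iff.1 (hU.mem_nhds hx)
  obtain ⟨L, hL0, hL⟩ := lip_itfd (j := k) hU hφ (Nat.lt_succ_self k) hball
  refine ⟨Metric.ball x₀ r, Metric.isOpen_ball, Metric.mem_ball_self hr, ?_,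
    L * (2 * r) ^ (1 - α), fun y hy z hz => ?_⟩
  · exact (hφ.of_le (by exact_mod_cast Nat.le_succ k)).mono
      ((Metric.ball_subset_closedBall).trans hball)
  · have hdiam : ∀ y ∈ Metric.ball x₀ r, ∀ z ∈ Metric.ball x₀ r, ‖y - z‖ ≤ 2 * r := by
      intro y hy z hz
      have h1 : ‖y - x₀‖ < r := by simpa [dist_eq_norm] using hy
      have h2 : ‖x₀ - z‖ < r := by
        rw [norm_sub_rev]; simpa [dist_eq_norm] using hz
      calc ‖y - z‖ = ‖(y - x₀) + (x₀ - z)‖ := by abel_nf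
        _ ≤ ‖y - x₀‖ + ‖x₀ - z‖ := norm_add_le _ _
        _ ≤ 2 * r := by linarith
    exact holdOn_of_lip hL0 (by positivity)
      (fun y hy z hz => hL y (Metric.ball_subset_closedBall hy) z (Metric.ball_subset_closedBall hz))
      hdiam hα0 hα1 y hy z hz

/-- `C^{k+1,α}` implies `C^{k,α}` near a point. -/
lemma CkAlphaNear.of_succ [FiniteDimensional ℝ E] {φ : E → F} {x₀ : E}
    (h : CkAlphaNear (k + 1) α φ x₀) (hα0 : 0 ≤ α) (hα1 : α ≤ 1) : CkAlphaNear k α φ x₀ := by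
  obtain ⟨U, hUo, hx, hcd, _⟩ := h
  exact ckAlphaNear_of_contDiffOn_succ hUo hx hcd hα0 hα1

/-- Passing to the derivative. -/
lemma CkAlphaNear.fderiv_ck {φ : E → F} {x₀ : E} (h : CkAlphaNear (k + 1) α φ x₀) :
    CkAlphaNear k α (fderiv ℝ φ) x₀ := by
  obtain ⟨U, hUo, hx, hcd, C, hC⟩ := h
  have hcd' : ContDiffOn ℝ ((k : WithTop ℕ∞) + 1) φ U := by exact_mod_cast hcd
  refine ⟨U, hUo, hx, ((contDiffOn_succ_iff_fderiv_of_isOpen hUo).1 hcd').2.2, C,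
    fun y hy z hz => ?_⟩
  rw [← norm_itfd_sub_succ]
  exact hC y hy z hz

/-- Reconstructing from the derivative. -/
lemma ckAlphaNear_of_fderiv {φ : E → F} {x₀ : E} {V : Set E} (hVo : IsOpen V) (hxV : x₀ ∈ V)
    (hdiff : DifferentiableOn ℝ φ V) (h : CkAlphaNear k α (fderiv ℝ φ) x₀) :
    CkAlphaNear (k + 1) α φ x₀ := by
  obtain ⟨U, hUo, hx, hcd, C, hC⟩ := h
  have hopen : IsOpen (U ∩ V) := hUo.inter hVo
  have hcd' : ContDiffOn ℝ ((k : WithTop ℕ∞) + 1) φ (U ∩ V) :=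
    (contDiffOn_succ_iff_fderiv_of_isOpen hopen).2
      ⟨hdiff.mono inter_subset_right, fun h => absurd h (by simp), hcd.mono inter_subset_left⟩
  refine ⟨U ∩ V, hopen, ⟨hx, hxV⟩, by exact_mod_cast hcd', C, fun y hy z hz => ?_⟩
  rw [norm_itfd_sub_succ]
  exact hC y hy.1 z hz.1

/-- Subtraction. -/
lemma CkAlphaNear.sub {u v : E → F} {x₀ : E} (hu : CkAlphaNear k α u x₀)
    (hv : CkAlphaNear k α v x₀) : CkAlphaNear k α (fun x => u x - v x) x₀ := by
  obtain ⟨U, hUo, hxU, hcdu, C, hCu⟩ := hu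
  obtain ⟨V, hVo, hxV, hcdv, D, hCv⟩ := hv
  have hopen : IsOpen (U ∩ V) := hUo.inter hVo
  have hcdu' := hcdu.mono (inter_subset_left (t := V))
  have hcdv' := hcdv.mono (inter_subset_right (s := U))
  have key : ∀ x ∈ U ∩ V, iteratedFDeriv ℝ k (fun x => u x - v x) x
      = iteratedFDeriv ℝ k u x - iteratedFDeriv ℝ k v x := by
    intro x hx
    have h1 : iteratedFDerivWithin ℝ k (fun x => u x - v x) (U ∩ V) x
        = iteratedFDerivWithin ℝ k u (U ∩ V) x + iteratedFDerivWithin ℝ k (-v) (U ∩ V) x := by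
      have heq : (fun x => u x - v x) = fun x => u x + (-v) x := by
        funext x; simp [sub_eq_add_neg]
      rw [heq]
      exact iteratedFDerivWithin_add_apply' (hcdu' x hx) (hcdv'.neg x hx) hopen.uniqueDiffOn hx
    rw [iteratedFDerivWithin_neg_apply hopen.uniqueDiffOn hx, ← sub_eq_add_neg] at h1
    rw [← iteratedFDerivWithin_of_isOpen k hopen hx, h1,
      iteratedFDerivWithin_of_isOpen k hopen hx, iteratedFDerivWithin_of_isOpen k hopen hx]
  refine ⟨U ∩ V, hopen, ⟨hxU, hxV⟩, hcdu'.sub hcdv', C + D, fun y hy z hz => ?_⟩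
  rw [key y hy, key z hz]
  calc ‖iteratedFDeriv ℝ k u y - iteratedFDeriv ℝ k v y
        - (iteratedFDeriv ℝ k u z - iteratedFDeriv ℝ k v z)‖
      = ‖(iteratedFDeriv ℝ k u y - iteratedFDeriv ℝ k u z)
        - (iteratedFDeriv ℝ k v y - iteratedFDeriv ℝ k v z)‖ := by abel_nf
    _ ≤ ‖iteratedFDeriv ℝ k u y - iteratedFDeriv ℝ k u z‖
        + ‖iteratedFDeriv ℝ k v y - iteratedFDeriv ℝ k v z‖ := norm_sub_le _ _
    _ ≤ C * ‖y - z‖ ^ α + D * ‖y - z‖ ^ α := add_le_add (hCu y hy.1 z hz.1) (hCv y hy.2 z hz.2)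
    _ = (C + D) * ‖y - z‖ ^ α := by ring


section PartC

variable {E F G : Type*} [NormedAddCommGroup E] [NormedSpace ℝ E]
  [NormedAddCommGroup F] [NormedSpace ℝ F] [NormedAddCommGroup G] [NormedSpace ℝ G]
variable {k : ℕ} {α : ℝ}

lemma norm_compAlong_le {n : ℕ} (c : OrderedFinpartition n)
    (q : ContinuousMultilinearMap ℝ (fun _ : Fin c.length => F) G)
    (v : ∀ i : Fin c.length, ContinuousMultilinearMap ℝ (fun _ : Fin (c.partSize i) => E) F) :
    ‖c.compAlongOrderedFinpartition q v‖ ≤ ‖q‖ * ∏ i, ‖v i‖ := by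
  apply ContinuousMultilinearMap.opNorm_le_bound (by positivity) (fun m => ?_)
  simp only [OrderedFinpartition.compAlongOrderFinpartition_apply]
  apply (q.le_opNorm _).trans
  rw [mul_assoc, ← c.prod_sigma_eq_prod, ← Finset.prod_mul_distrib]
  gcongr with i _
  exact (v i).le_opNorm _

lemma norm_cL_le {n : ℕ} (c : OrderedFinpartition n)
    (q : ContinuousMultilinearMap ℝ (fun _ : Fin c.length => F) G) :
    ‖c.compAlongOrderedFinpartitionL ℝ E F G q‖ ≤ ‖q‖ := by
  apply ContinuousMultilinearMap.opNorm_le_bound (norm_nonneg q) (fun v => ?_)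
  rw [OrderedFinpartition.compAlongOrderedFinpartitionL_apply]
  exact norm_compAlong_le c q v

/-- Difference bound for `compAlongOrderedFinpartition`. -/
lemma compAlong_diff_bound {n : ℕ} (c : OrderedFinpartition n)
    {q q' : ContinuousMultilinearMap ℝ (fun _ : Fin c.length => F) G}
    {v v' : ∀ i : Fin c.length, ContinuousMultilinearMap ℝ (fun _ : Fin (c.partSize i) => E) F}
    {B DT : ℝ} (hB1 : 1 ≤ B) (hDT : 0 ≤ DT)
    (hq : ‖q - q'‖ ≤ DT) (hq' : ‖q'‖ ≤ B)
    (hv : ∀ i, ‖v i‖ ≤ B) (hv' : ∀ i, ‖v' i‖ ≤ B) (hvv : ∀ i, ‖v i - v' i‖ ≤ DT) :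
    ‖c.compAlongOrderedFinpartition q v - c.compAlongOrderedFinpartition q' v'‖
      ≤ (B ^ n + n * (B * B ^ n)) * DT := by
  have hB0 : (0:ℝ) ≤ B := le_trans zero_le_one hB1
  have hlen : c.length ≤ n := c.length_le
  have hsplit : c.compAlongOrderedFinpartition q v - c.compAlongOrderedFinpartition q' v'
      = c.compAlongOrderedFinpartition (q - q') v
        + ((c.compAlongOrderedFinpartitionL ℝ E F G q') v
          - (c.compAlongOrderedFinpartitionL ℝ E F G q') v') := by
    rw [← OrderedFinpartition.compAlongOrderedFinpartitionL_apply,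
      ← OrderedFinpartition.compAlongOrderedFinpartitionL_apply,
      ← OrderedFinpartition.compAlongOrderedFinpartitionL_apply, map_sub,
      ContinuousMultilinearMap.sub_apply]
    abel
  have step1 : ‖c.compAlongOrderedFinpartition (q - q') v‖ ≤ DT * B ^ c.length := by
    refine le_trans (norm_compAlong_le c _ _) ?_
    have hprod : ∏ i, ‖v i‖ ≤ B ^ c.length := by
      calc ∏ i, ‖v i‖ ≤ ∏ _i : Fin c.length, B :=
            Finset.prod_le_prod (fun i _ => norm_nonneg _) (fun i _ => hv i)
        _ = B ^ c.length := by simp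
    exact mul_le_mul hq hprod (by positivity) hDT
  have step2 : ‖(c.compAlongOrderedFinpartitionL ℝ E F G q') v
      - (c.compAlongOrderedFinpartitionL ℝ E F G q') v'‖
      ≤ B * c.length * B ^ (c.length - 1) * DT := by
    refine le_trans (ContinuousMultilinearMap.norm_image_sub_le _ v v') ?_
    have h1 : ‖c.compAlongOrderedFinpartitionL ℝ E F G q'‖ ≤ B :=
      le_trans (norm_cL_le c q') hq'
    have h2 : ‖v‖ ⊔ ‖v'‖ ≤ B :=
      max_le (pi_norm_le_iff_of_nonneg hB0 |>.2 hv) (pi_norm_le_iff_of_nonneg hB0 |>.2 hv')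
    have h3 : ‖v - v'‖ ≤ DT :=
      pi_norm_le_iff_of_nonneg hDT |>.2 (fun i => by simpa using hvv i)
    have h4 : (‖v‖ ⊔ ‖v'‖) ^ (c.length - 1) ≤ B ^ (c.length - 1) :=
      pow_le_pow_left₀ (le_max_of_le_left (norm_nonneg _)) h2 _
    rw [Fintype.card_fin]
    have hm1 : ‖c.compAlongOrderedFinpartitionL ℝ E F G q'‖ * (c.length : ℝ)
        ≤ B * c.length := mul_le_mul_of_nonneg_right h1 (by positivity)
    have hm2 : ‖c.compAlongOrderedFinpartitionL ℝ E F G q'‖ * (c.length : ℝ)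
        * (‖v‖ ⊔ ‖v'‖) ^ (c.length - 1) ≤ B * c.length * B ^ (c.length - 1) :=
      mul_le_mul hm1 h4 (by positivity) (by positivity)
    exact mul_le_mul hm2 h3 (norm_nonneg _) (by positivity)
  rw [hsplit]
  refine le_trans (norm_add_le _ _) ?_
  have hpow1 : B ^ c.length ≤ B ^ n := pow_le_pow_right₀ hB1 hlen
  have hpow2 : B ^ (c.length - 1) ≤ B ^ n := pow_le_pow_right₀ hB1 (le_trans (Nat.sub_le _ _) hlen)
  have hlen' : (c.length : ℝ) ≤ (n : ℝ) := by exact_mod_cast hlen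
  have e1 : ‖c.compAlongOrderedFinpartition (q - q') v‖ ≤ DT * B ^ n :=
    le_trans step1 (mul_le_mul_of_nonneg_left hpow1 hDT)
  have e2 : ‖(c.compAlongOrderedFinpartitionL ℝ E F G q') v
      - (c.compAlongOrderedFinpartitionL ℝ E F G q') v'‖
      ≤ B * n * B ^ n * DT := by
    refine le_trans step2 (mul_le_mul_of_nonneg_right ?_ hDT)
    have : B * (c.length : ℝ) ≤ B * n := mul_le_mul_of_nonneg_left hlen' hB0
    exact mul_le_mul this hpow2 (by positivity) (by positivity)
  calc ‖c.compAlongOrderedFinpartition (q - q') v‖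
      + ‖(c.compAlongOrderedFinpartitionL ℝ E F G q') v
        - (c.compAlongOrderedFinpartitionL ℝ E F G q') v'‖
      ≤ DT * B ^ n + B * n * B ^ n * DT := add_le_add e1 e2
    _ = (B ^ n + n * (B * B ^ n)) * DT := by ring

/-- Hölder bounds for all the derivatives up to `k` of a `C^{k,α}` function, on a
small closed ball. -/
lemma holder_all_derivs [FiniteDimensional ℝ E] {φ : E → F} {U : Set E} {x₀ : E} {r : ℝ}
    (hU : IsOpen U) (hφ : ContDiffOn ℝ k φ U) (hball : Metric.closedBall x₀ r ⊆ U)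
    (hr : 0 ≤ r) {C : ℝ}
    (hC : ∀ y ∈ U, ∀ z ∈ U, ‖iteratedFDeriv ℝ k φ y - iteratedFDeriv ℝ k φ z‖ ≤ C * ‖y - z‖ ^ α)
    (hα0 : 0 ≤ α) (hα1 : α ≤ 1) :
    ∃ D, 0 ≤ D ∧ ∀ j ≤ k, HoldOn D α (iteratedFDeriv ℝ j φ) (Metric.closedBall x₀ r) := by
  have key : ∀ j : Fin (k + 1), ∃ D, 0 ≤ D ∧
      HoldOn D α (iteratedFDeriv ℝ (j : ℕ) φ) (Metric.closedBall x₀ r) := by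
    intro j
    rcases Nat.lt_or_ge (j : ℕ) k with hj | hj
    · obtain ⟨L, hL0, hL⟩ := lip_itfd hU hφ hj hball
      refine ⟨L * (2 * r) ^ (1 - α), by positivity, ?_⟩
      exact holdOn_of_lip hL0 (by positivity) hL
        (fun y hy z hz => by
          have h1 : ‖y - x₀‖ ≤ r := by simpa [dist_eq_norm] using hy
          have h2 : ‖x₀ - z‖ ≤ r := by rw [norm_sub_rev]; simpa [dist_eq_norm] using hz
          calc ‖y - z‖ = ‖(y - x₀) + (x₀ - z)‖ := by abel_nf
            _ ≤ ‖y - x₀‖ + ‖x₀ - z‖ := norm_add_le _ _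
            _ ≤ 2 * r := by linarith) hα0 hα1
    · have hjk : (j : ℕ) = k := le_antisymm (Nat.lt_succ_iff.1 j.2) hj
      obtain ⟨D, hD0, hD⟩ := HoldOn.nonneg_aux (α := α)
        (fun y hy z hz => hC y (hball hy) z (hball hz))
        ⟨x₀, Metric.mem_closedBall_self hr⟩
      exact ⟨D, hD0, by rw [hjk]; exact hD⟩
  choose Dj hDj0 hDj using key
  refine ⟨Finset.univ.sup' Finset.univ_nonempty Dj, ?_, ?_⟩
  · exact le_trans (hDj0 0) (Finset.le_sup' Dj (Finset.mem_univ 0))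
  · intro j hj
    have := hDj ⟨j, Nat.lt_succ_of_le hj⟩
    intro y hy z hz
    refine le_trans (this y hy z hz) ?_
    have h1 : (0:ℝ) ≤ ‖y - z‖ ^ α := Real.rpow_nonneg (norm_nonneg _) _
    have h2 := Finset.le_sup' Dj (Finset.mem_univ (⟨j, Nat.lt_succ_of_le hj⟩ : Fin (k+1)))
    exact mul_le_mul_of_nonneg_right h2 h1

/-- Uniform bounds for all the derivatives up to `k` on a closed ball. -/
lemma bound_all_derivs [FiniteDimensional ℝ E] {φ : E → F} {U : Set E} {x₀ : E} {r : ℝ}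
    (hU : IsOpen U) (hφ : ContDiffOn ℝ k φ U) (hball : Metric.closedBall x₀ r ⊆ U) :
    ∃ B, 1 ≤ B ∧ ∀ j ≤ k, ∀ y ∈ Metric.closedBall x₀ r, ‖iteratedFDeriv ℝ j φ y‖ ≤ B := by
  have key : ∀ j : Fin (k + 1), ∃ M, ∀ y ∈ Metric.closedBall x₀ r,
      ‖iteratedFDeriv ℝ (j : ℕ) φ y‖ ≤ M :=
    fun j => bnd_itfd hU hφ (Nat.lt_succ_iff.1 j.2) hball
  choose Mj hMj using key
  refine ⟨max 1 (Finset.univ.sup' Finset.univ_nonempty Mj), le_max_left _ _, ?_⟩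
  intro j hj y hy
  refine le_trans (hMj ⟨j, Nat.lt_succ_of_le hj⟩ y hy) (le_trans ?_ (le_max_right _ _))
  exact Finset.le_sup' Mj (Finset.mem_univ _)

/-- Composition of `C^{k,α}` functions, `k ≥ 1`. -/
theorem CkAlphaNear.comp [FiniteDimensional ℝ E] [FiniteDimensional ℝ F]
    {Φ : F → G} {Ψ : E → F} {x₀ : E} (hk : 1 ≤ k) (hα0 : 0 ≤ α) (hα1 : α ≤ 1)
    (hΦ : CkAlphaNear k α Φ (Ψ x₀)) (hΨ : CkAlphaNear k α Ψ x₀) :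
    CkAlphaNear k α (Φ ∘ Ψ) x₀ := by
  classical
  obtain ⟨t, hto, hyt, hΦk, CF, hCF⟩ := hΦ
  obtain ⟨s, hso, hxs, hΨk, CG, hCG⟩ := hΨ
  obtain ⟨ρ, hρ, hρball⟩ := Metric.nhds_basis_closedBall.mem_iff.1 (hto.mem_nhds hyt)
  have hcontΨ : ContinuousAt Ψ x₀ := hΨk.continuousOn.continuousAt (hso.mem_nhds hxs)
  have hpre : s ∩ Ψ ⁻¹' Metric.ball (Ψ x₀) ρ ∈ 𝓝 x₀ :=
    Filter.inter_mem (hso.mem_nhds hxs)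
      (hcontΨ.preimage_mem_nhds (Metric.ball_mem_nhds _ hρ))
  obtain ⟨r, hr, hrball⟩ := Metric.nhds_basis_closedBall.mem_iff.1 hpre
  have hKs : Metric.closedBall x₀ r ⊆ s := fun x hx => (hrball hx).1
  have hKim : ∀ x ∈ Metric.closedBall x₀ r, Ψ x ∈ Metric.ball (Ψ x₀) ρ :=
    fun x hx => (hrball hx).2
  have hKim' : MapsTo Ψ (Metric.closedBall x₀ r) (Metric.closedBall (Ψ x₀) ρ) :=
    fun x hx => Metric.ball_subset_closedBall (hKim x hx)
  -- Lipschitz bound for Ψ on the closed ball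
  obtain ⟨L, hL0, hLlip₀⟩ := lip_itfd (j := 0) hso hΨk hk hKs
  have hLlip : ∀ y ∈ Metric.closedBall x₀ r, ∀ z ∈ Metric.closedBall x₀ r,
      ‖Ψ y - Ψ z‖ ≤ L * ‖y - z‖ := by
    intro y hy z hz
    rw [← norm_itfd_sub_zero]
    exact hLlip₀ y hy z hz
  -- Hölder constants for all derivatives
  obtain ⟨DF, hDF0, hDF⟩ := holder_all_derivs hto hΦk hρball hρ.le hCF hα0 hα1
  obtain ⟨DG, hDG0, hDG⟩ := holder_all_derivs hso hΨk hKs hr.le hCG hα0 hα1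
  -- Hölder for derivatives of Φ composed with Ψ
  have hDFG : ∀ j ≤ k, HoldOn (DF * L ^ α) α
      (fun x => iteratedFDeriv ℝ j Φ (Ψ x)) (Metric.closedBall x₀ r) :=
    fun j hj => HoldOn.comp_lip hDF0 hL0 hα0 (hDF j hj) hKim' hLlip
  -- common constant
  set D := max (DF * L ^ α) DG with hD
  have hD0 : 0 ≤ D := le_trans hDG0 (le_max_right _ _)
  have hDF' : ∀ j ≤ k, HoldOn D α (fun x => iteratedFDeriv ℝ j Φ (Ψ x))
      (Metric.closedBall x₀ r) := by
    intro j hj y hy z hz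
    refine le_trans (hDFG j hj y hy z hz) (mul_le_mul_of_nonneg_right (le_max_left _ _) ?_)
    exact Real.rpow_nonneg (norm_nonneg _) _
  have hDG' : ∀ j ≤ k, HoldOn D α (iteratedFDeriv ℝ j Ψ) (Metric.closedBall x₀ r) := by
    intro j hj y hy z hz
    refine le_trans (hDG j hj y hy z hz) (mul_le_mul_of_nonneg_right (le_max_right _ _) ?_)
    exact Real.rpow_nonneg (norm_nonneg _) _
  -- bounds
  obtain ⟨BF, hBF1, hBF⟩ := bound_all_derivs hto hΦk hρball
  obtain ⟨BG, hBG1, hBG⟩ := bound_all_derivs hso hΨk hKs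
  set B := max BF BG with hB
  have hB1 : 1 ≤ B := le_trans hBF1 (le_max_left _ _)
  have hB0 : 0 ≤ B := le_trans zero_le_one hB1
  have hBF' : ∀ j ≤ k, ∀ x ∈ Metric.closedBall x₀ r, ‖iteratedFDeriv ℝ j Φ (Ψ x)‖ ≤ B :=
    fun j hj x hx => le_trans (hBF j hj _ (hKim' hx)) (le_max_left _ _)
  have hBG' : ∀ j ≤ k, ∀ x ∈ Metric.closedBall x₀ r, ‖iteratedFDeriv ℝ j Ψ x‖ ≤ B :=
    fun j hj x hx => le_trans (hBG j hj x hx) (le_max_right _ _)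
  -- the Faà di Bruno identity on the open ball
  have hball_sub : Metric.ball x₀ r ⊆ Metric.closedBall x₀ r := Metric.ball_subset_closedBall
  have hudss : UniqueDiffOn ℝ (Metric.ball x₀ r) := Metric.isOpen_ball.uniqueDiffOn
  have hudst : UniqueDiffOn ℝ (Metric.ball (Ψ x₀) ρ) := Metric.isOpen_ball.uniqueDiffOn
  have hqT : HasFTaylorSeriesUpToOn k Φ (ftaylorSeriesWithin ℝ Φ (Metric.ball (Ψ x₀) ρ))
      (Metric.ball (Ψ x₀) ρ) :=
    (hΦk.mono (Metric.ball_subset_closedBall.trans hρball)).ftaylorSeriesWithin hudst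
  have hpT : HasFTaylorSeriesUpToOn k Ψ (ftaylorSeriesWithin ℝ Ψ (Metric.ball x₀ r))
      (Metric.ball x₀ r) :=
    (hΨk.mono (hball_sub.trans hKs)).ftaylorSeriesWithin hudss
  have hmaps : MapsTo Ψ (Metric.ball x₀ r) (Metric.ball (Ψ x₀) ρ) :=
    fun x hx => hKim x (hball_sub hx)
  have hcomp := hqT.comp hpT hmaps
  have hkey : ∀ x ∈ Metric.ball x₀ r, iteratedFDeriv ℝ k (Φ ∘ Ψ) x
      = ∑ c : OrderedFinpartition k, c.compAlongOrderedFinpartition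
          (iteratedFDeriv ℝ c.length Φ (Ψ x))
          (fun i => iteratedFDeriv ℝ (c.partSize i) Ψ x) := by
    intro x hx
    have h1 := hcomp.eq_iteratedFDerivWithin_of_uniqueDiffOn le_rfl hudss hx
    rw [← iteratedFDerivWithin_of_isOpen k Metric.isOpen_ball hx, ← h1]
    show ∑ c : OrderedFinpartition k, c.compAlongOrderedFinpartition
        (iteratedFDerivWithin ℝ c.length Φ (Metric.ball (Ψ x₀) ρ) (Ψ x))
        (fun i => iteratedFDerivWithin ℝ (c.partSize i) Ψ (Metric.ball x₀ r) x) = _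
    refine Finset.sum_congr rfl (fun c _ => ?_)
    rw [iteratedFDerivWithin_of_isOpen c.length Metric.isOpen_ball (hmaps hx)]
    congr 1
    funext i
    rw [iteratedFDerivWithin_of_isOpen (c.partSize i) Metric.isOpen_ball hx]
  -- C^k of the composition
  have hcd : ContDiffOn ℝ k (Φ ∘ Ψ) (Metric.ball x₀ r) :=
    ContDiffOn.comp (hΦk.mono (Metric.ball_subset_closedBall.trans hρball))
      (hΨk.mono (hball_sub.trans hKs)) (fun x hx => hmaps hx)
  -- final Hölder estimate
  refine ⟨Metric.ball x₀ r, Metric.isOpen_ball, Metric.mem_ball_self hr, hcd,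
    (Fintype.card (OrderedFinpartition k)) * ((B ^ k + k * (B * B ^ k)) * D),
    fun y hy z hz => ?_⟩
  rw [hkey y hy, hkey z hz, ← Finset.sum_sub_distrib]
  refine le_trans (norm_sum_le _ _) ?_
  have hyK : y ∈ Metric.closedBall x₀ r := hball_sub hy
  have hzK : z ∈ Metric.closedBall x₀ r := hball_sub hz
  have hT0 : 0 ≤ D * ‖y - z‖ ^ α := by
    have := Real.rpow_nonneg (norm_nonneg (y - z)) α
    positivity
  have hbound : ∀ c : OrderedFinpartition k,
      ‖c.compAlongOrderedFinpartition (iteratedFDeriv ℝ c.length Φ (Ψ y))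
          (fun i => iteratedFDeriv ℝ (c.partSize i) Ψ y)
        - c.compAlongOrderedFinpartition (iteratedFDeriv ℝ c.length Φ (Ψ z))
          (fun i => iteratedFDeriv ℝ (c.partSize i) Ψ z)‖
      ≤ (B ^ k + k * (B * B ^ k)) * (D * ‖y - z‖ ^ α) := by
    intro c
    have hlen : c.length ≤ k := c.length_le
    have hsize : ∀ i, c.partSize i ≤ k := fun i => c.partSize_le i
    exact compAlong_diff_bound c hB1 hT0
      (hDF' c.length hlen y hyK z hzK)
      (hBF' c.length hlen z hzK)
      (fun i => hBG' _ (hsize i) y hyK)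
      (fun i => hBG' _ (hsize i) z hzK)
      (fun i => hDG' _ (hsize i) y hyK z hzK)
  refine le_trans (Finset.sum_le_sum (fun c (_ : c ∈ Finset.univ) => hbound c)) ?_
  rw [Finset.sum_const, Finset.card_univ, nsmul_eq_mul]
  ring_nf
  exact le_of_eq (by ring)

end PartC

section PartD

variable {E F G : Type*} [NormedAddCommGroup E] [NormedSpace ℝ E]
  [NormedAddCommGroup F] [NormedSpace ℝ F] [NormedAddCommGroup G] [NormedSpace ℝ G]
variable {k : ℕ} {α : ℝ}

lemma CkAlphaNear.contDiffAt {φ : E → F} {x₀ : E} (h : CkAlphaNear k α φ x₀) :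
    ContDiffAt ℝ k φ x₀ := by
  obtain ⟨U, hUo, hxU, hcd, _⟩ := h
  exact hcd.contDiffAt (hUo.mem_nhds hxU)

lemma contDiffAt_nbhd {f : E → F} {x : E} {m : ℕ} (h : ContDiffAt ℝ m f x) :
    ∃ U, IsOpen U ∧ x ∈ U ∧ ContDiffOn ℝ m f U := by
  obtain ⟨u, hu, hcd⟩ := h.contDiffOn le_rfl (by simp)
  obtain ⟨U, hUsub, hUo, hxU⟩ := mem_nhds_iff.1 hu
  exact ⟨U, hUo, hxU, hcd.mono hUsub⟩

lemma diff_eventually {f : E → F} {x : E} {m : ℕ} (hm : 1 ≤ m) (h : ContDiffAt ℝ m f x) :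
    ∀ᶠ y in 𝓝 x, DifferentiableAt ℝ f y := by
  obtain ⟨U, hUo, hxU, hcd⟩ := contDiffAt_nbhd h
  filter_upwards [hUo.mem_nhds hxU] with y hy
  exact (hcd.contDiffAt (hUo.mem_nhds hy)).differentiableAt (by exact_mod_cast (show m ≠ 0 by omega))

lemma lip_nbhd {f : E → F} {x : E} (h : ContDiffAt ℝ 1 f x) :
    ∃ U, IsOpen U ∧ x ∈ U ∧ ∃ L, 0 ≤ L ∧
      ∀ y ∈ U, ∀ z ∈ U, ‖f y - f z‖ ≤ L * ‖y - z‖ := by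
  obtain ⟨K, t, ht, hK⟩ := h.exists_lipschitzOnWith
  obtain ⟨U, hUsub, hUo, hxU⟩ := mem_nhds_iff.1 ht
  refine ⟨U, hUo, hxU, K, K.coe_nonneg, fun y hy z hz => ?_⟩
  have := hK.dist_le_mul y (hUsub hy) z (hUsub hz)
  simpa [dist_eq_norm] using this

/-- Composition at Hölder level 0: Hölder outer, Lipschitz inner. -/
lemma ckAlphaNear_zero_comp_lip {φ : F → G} {ψ : E → F} {x₀ : E} (hα0 : 0 ≤ α)
    (hφ : CkAlphaNear 0 α φ (ψ x₀)) {s : Set E} (hso : IsOpen s) (hxs : x₀ ∈ s)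
    (hψc : ContinuousOn ψ s) {L : ℝ} (hL : 0 ≤ L)
    (hlip : ∀ y ∈ s, ∀ z ∈ s, ‖ψ y - ψ z‖ ≤ L * ‖y - z‖) :
    CkAlphaNear 0 α (fun x => φ (ψ x)) x₀ := by
  obtain ⟨t, hto, hyt, hφc, C, hC⟩ := hφ
  obtain ⟨C', hC'0, hC'⟩ : ∃ C', 0 ≤ C' ∧ HoldOn C' α φ t := by
    have h0 : HoldOn C α φ t := fun y hy z hz => by
      rw [← norm_itfd_sub_zero]; exact hC y hy z hz
    obtain ⟨C', h1, h2⟩ := h0.nonneg_aux ⟨_, hyt⟩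
    exact ⟨C', h1, h2⟩
  have hs'o : IsOpen (s ∩ ψ ⁻¹' t) := hψc.isOpen_inter_preimage hso hto
  refine ⟨s ∩ ψ ⁻¹' t, hs'o, ⟨hxs, hyt⟩, ?_, C' * L ^ α, fun y hy z hz => ?_⟩
  · have hφc' : ContinuousOn φ t := contDiffOn_zero.1 (by exact_mod_cast hφc)
    exact_mod_cast contDiffOn_zero.2 (ContinuousOn.comp hφc' (hψc.mono inter_subset_left)
      (fun x hx => hx.2))
  · rw [norm_itfd_sub_zero]
    exact HoldOn.comp_lip hC'0 hL hα0 hC' (fun x hx => hx.2)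
      (fun y hy z hz => hlip y hy.1 z hz.1) y hy z hz

/-- Composition at Hölder level 0: Lipschitz outer, Hölder inner. -/
lemma ckAlphaNear_zero_lip_comp {φ : F → G} {ψ : E → F} {x₀ : E}
    {t : Set F} (hto : IsOpen t) (hyt : ψ x₀ ∈ t) (hφc : ContinuousOn φ t) {L : ℝ} (hL : 0 ≤ L)
    (hlip : ∀ y ∈ t, ∀ z ∈ t, ‖φ y - φ z‖ ≤ L * ‖y - z‖)
    (hψ : CkAlphaNear 0 α ψ x₀) : CkAlphaNear 0 α (fun x => φ (ψ x)) x₀ := by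
  obtain ⟨s, hso, hxs, hψc', C, hC⟩ := hψ
  have hψc : ContinuousOn ψ s := contDiffOn_zero.1 (by exact_mod_cast hψc')
  have hC' : HoldOn C α ψ s := fun y hy z hz => by
    rw [← norm_itfd_sub_zero]; exact hC y hy z hz
  have hs'o : IsOpen (s ∩ ψ ⁻¹' t) := hψc.isOpen_inter_preimage hso hto
  refine ⟨s ∩ ψ ⁻¹' t, hs'o, ⟨hxs, hyt⟩, ?_, L * C, fun y hy z hz => ?_⟩
  · exact_mod_cast contDiffOn_zero.2
      (ContinuousOn.comp hφc (hψc.mono inter_subset_left) (fun x hx => hx.2))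
  · rw [norm_itfd_sub_zero]
    exact HoldOn.lip_comp hL hlip (fun x (hx : x ∈ s ∩ ψ ⁻¹' t) => hx.2)
      (hC'.mono inter_subset_left) y hy z hz

/-- The local inverse of a `C^m` map with invertible derivative, `m ≥ 1`. -/
lemma mk_localInverse [CompleteSpace E] {Z : E → F} {x₀ : E} {A : E ≃L[ℝ] F} {m : ℕ}
    (hm : 1 ≤ m) (hZc : ContDiffAt ℝ m Z x₀) (hdZ : HasFDerivAt Z (A : E →L[ℝ] F) x₀) :
    ∃ W : F → E, W (Z x₀) = x₀ ∧ ContinuousAt W (Z x₀) ∧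
      (∀ᶠ x in 𝓝 x₀, W (Z x) = x) ∧ (∀ᶠ y in 𝓝 (Z x₀), Z (W y) = y) ∧
      ContDiffAt ℝ m W (Z x₀) := by
  have hm' : ((m : ℕ) : WithTop ℕ∞) ≠ 0 := by exact_mod_cast (show m ≠ 0 by omega)
  have hs : HasStrictFDerivAt Z (A : E →L[ℝ] F) x₀ := hZc.hasStrictFDerivAt' hdZ hm'
  exact ⟨hZc.localInverse hdZ hm', hZc.localInverse_apply_image hdZ hm',
    hs.localInverse_continuousAt, hs.eventually_left_inverse, hs.eventually_right_inverse,
    hZc.to_localInverse hdZ hm'⟩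

/-- Local inverses agree eventually. -/
lemma local_inverse_unique_ev {Z : E → F} {W W' : F → E} {x₀ : E}
    (hleft : ∀ᶠ x in 𝓝 x₀, W (Z x) = x)
    (hW'c : ContinuousAt W' (Z x₀)) (hW'0 : W' (Z x₀) = x₀)
    (hright' : ∀ᶠ y in 𝓝 (Z x₀), Z (W' y) = y) :
    ∀ᶠ y in 𝓝 (Z x₀), W y = W' y := by
  have htd : Tendsto W' (𝓝 (Z x₀)) (𝓝 x₀) := by
    have := hW'c.tendsto
    rwa [hW'0] at this
  filter_upwards [htd.eventually hleft, hright'] with y h1 h2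
  rw [← h1, h2]

/-- The derivative of a local inverse is the `Ring.inverse` of the derivative. -/
lemma fderiv_localInverse_eventually {Z W : E → E} {x₀ : E}
    (hZd : ∀ᶠ x in 𝓝 x₀, DifferentiableAt ℝ Z x)
    (hWc : ContinuousAt W (Z x₀)) (hW0 : W (Z x₀) = x₀)
    (hWd : ∀ᶠ y in 𝓝 (Z x₀), DifferentiableAt ℝ W y)
    (hleft : ∀ᶠ x in 𝓝 x₀, W (Z x) = x) (hright : ∀ᶠ y in 𝓝 (Z x₀), Z (W y) = y) :
    ∀ᶠ y in 𝓝 (Z x₀), fderiv ℝ W y = Ring.inverse (fderiv ℝ Z (W y)) := by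
  have htd : Tendsto W (𝓝 (Z x₀)) (𝓝 x₀) := by
    have := hWc.tendsto
    rwa [hW0] at this
  filter_upwards [hWd, hright, hright.eventually_nhds, htd.eventually hZd,
    htd.eventually hleft.eventually_nhds] with y h1 h2 h2' h3 h4
  have hc1 : fderiv ℝ (Z ∘ W) y = (fderiv ℝ Z (W y)).comp (fderiv ℝ W y) :=
    fderiv_comp y h3 h1
  have hZW : (Z ∘ W) =ᶠ[𝓝 y] id := h2'.mono (fun y' hy' => hy')
  have hid1 : (fderiv ℝ Z (W y)).comp (fderiv ℝ W y) = ContinuousLinearMap.id ℝ E := by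
    rw [← hc1, hZW.fderiv_eq, fderiv_id]
  have h1' : DifferentiableAt ℝ W (Z (W y)) := by rw [h2]; exact h1
  have hc2 : fderiv ℝ (W ∘ Z) (W y) = (fderiv ℝ W (Z (W y))).comp (fderiv ℝ Z (W y)) :=
    fderiv_comp (W y) h1' h3
  have hWZ : (W ∘ Z) =ᶠ[𝓝 (W y)] id := h4.mono (fun x hx => hx)
  have hid2 : (fderiv ℝ W y).comp (fderiv ℝ Z (W y)) = ContinuousLinearMap.id ℝ E := by
    have := hc2
    rw [h2] at this
    rw [← this, hWZ.fderiv_eq, fderiv_id]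
  have hu1 : fderiv ℝ Z (W y) * fderiv ℝ W y = 1 := by
    rw [ContinuousLinearMap.mul_def, hid1, ContinuousLinearMap.one_def]
  have hu2 : fderiv ℝ W y * fderiv ℝ Z (W y) = 1 := by
    rw [ContinuousLinearMap.mul_def, hid2, ContinuousLinearMap.one_def]
  have := Ring.inverse_unit (⟨fderiv ℝ Z (W y), fderiv ℝ W y, hu1, hu2⟩ : (E →L[ℝ] E)ˣ)
  rw [show ((⟨fderiv ℝ Z (W y), fderiv ℝ W y, hu1, hu2⟩ : (E →L[ℝ] E)ˣ) : E →L[ℝ] E)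
    = fderiv ℝ Z (W y) from rfl] at this
  rw [this]
  rfl

/-- Local inverses of `C^{k,α}` self-maps are `C^{k,α}`, `k ≥ 1`. -/
theorem inv_core [FiniteDimensional ℝ E] (hα0 : 0 ≤ α) (hα1 : α ≤ 1) :
    ∀ k, 1 ≤ k → ∀ Z : E → E, ∀ x₀ : E, ∀ A : E ≃L[ℝ] E,
      CkAlphaNear k α Z x₀ → HasFDerivAt Z (A : E →L[ℝ] E) x₀ →
      ∃ W : E → E, W (Z x₀) = x₀ ∧ ContinuousAt W (Z x₀) ∧
        (∀ᶠ x in 𝓝 x₀, W (Z x) = x) ∧ (∀ᶠ y in 𝓝 (Z x₀), Z (W y) = y) ∧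
        CkAlphaNear k α W (Z x₀) := by
  refine Nat.le_induction ?_ ?_
  · -- base case k = 1
    intro Z x₀ A hZ hdZ
    have hZat : ContDiffAt ℝ 1 Z x₀ := CkAlphaNear.contDiffAt hZ
    obtain ⟨W, hW0, hWc, hleft, hright, hWat⟩ := mk_localInverse le_rfl hZat hdZ
    have hev := fderiv_localInverse_eventually (diff_eventually le_rfl hZat) hWc hW0
      (diff_eventually le_rfl hWat) hleft hright
    -- fderiv Z is C^{0,α} near x₀
    have hfz : CkAlphaNear 0 α (fderiv ℝ Z) x₀ := CkAlphaNear.fderiv_ck hZ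
    -- W is Lipschitz and continuous near Z x₀
    obtain ⟨U₁, hU₁o, hxU₁, L₁, hL₁0, hlip₁⟩ := lip_nbhd hWat
    obtain ⟨U₂, hU₂o, hxU₂, hcdW⟩ := contDiffAt_nbhd hWat
    have hinner : CkAlphaNear 0 α (fun y => fderiv ℝ Z (W y)) (Z x₀) := by
      refine ckAlphaNear_zero_comp_lip hα0 (by rwa [hW0] : CkAlphaNear 0 α (fderiv ℝ Z) (W (Z x₀)))
        (hU₁o.inter hU₂o) ⟨hxU₁, hxU₂⟩
        ((hcdW.continuousOn).mono inter_subset_right) hL₁0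
        (fun y hy z hz => hlip₁ y hy.1 z hz.1)
    -- Ring.inverse is Lipschitz near fderiv Z x₀ = A
    have hpt : fderiv ℝ Z (W (Z x₀)) = ((A.toUnit : (E →L[ℝ] E)ˣ) : E →L[ℝ] E) := by
      rw [hW0, hdZ.fderiv]; rfl
    have hinv_cd : ContDiffAt ℝ 1 (Ring.inverse : (E →L[ℝ] E) → (E →L[ℝ] E))
        ((A.toUnit : (E →L[ℝ] E)ˣ) : E →L[ℝ] E) := contDiffAt_ringInverse ℝ A.toUnit
    obtain ⟨T₁, hT₁o, hAT₁, L₂, hL₂0, hlip₂⟩ := lip_nbhd hinv_cd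
    obtain ⟨T₂, hT₂o, hAT₂, hcdInv⟩ := contDiffAt_nbhd hinv_cd
    have houter : CkAlphaNear 0 α (fun y => Ring.inverse (fderiv ℝ Z (W y))) (Z x₀) := by
      refine ckAlphaNear_zero_lip_comp (hT₁o.inter hT₂o) ?_
        ((hcdInv.continuousOn).mono inter_subset_right) hL₂0
        (fun y hy z hz => hlip₂ y hy.1 z hz.1) hinner
      show fderiv ℝ Z (W (Z x₀)) ∈ T₁ ∩ T₂
      rw [hpt]; exact ⟨hAT₁, hAT₂⟩
    have hfw : CkAlphaNear 0 α (fderiv ℝ W) (Z x₀) := CkAlphaNear.congr houter hev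
    obtain ⟨V, hVo, hxV, hcdW'⟩ := contDiffAt_nbhd hWat
    refine ⟨W, hW0, hWc, hleft, hright, ?_⟩
    exact ckAlphaNear_of_fderiv hVo hxV
      (hcdW'.differentiableOn (by simp)) hfw
  · -- inductive step
    intro k hk1 IH Z x₀ A hZ hdZ
    have hZat : ContDiffAt ℝ (k + 1) Z x₀ := CkAlphaNear.contDiffAt hZ
    have h1k : (1 : ℕ) ≤ k + 1 := le_trans hk1 (Nat.le_succ k)
    obtain ⟨W, hW0, hWc, hleft, hright, hWat⟩ := mk_localInverse h1k hZat hdZ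
    have hZk : CkAlphaNear k α Z x₀ := CkAlphaNear.of_succ hZ hα0 hα1
    obtain ⟨W', hW'0, hW'c, hleft', hright', hW'k⟩ := IH Z x₀ A hZk hdZ
    have hWW' : ∀ᶠ y in 𝓝 (Z x₀), W y = W' y :=
      local_inverse_unique_ev hleft hW'c hW'0 hright'
    have hWk : CkAlphaNear k α W (Z x₀) := CkAlphaNear.congr hW'k hWW'
    have hev := fderiv_localInverse_eventually
      (diff_eventually h1k hZat) hWc hW0 (diff_eventually h1k hWat) hleft hright
    -- inner composition
    have hinner : CkAlphaNear k α ((fderiv ℝ Z) ∘ W) (Z x₀) := by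
      refine CkAlphaNear.comp hk1 hα0 hα1 ?_ hWk
      rw [hW0]
      exact CkAlphaNear.fderiv_ck hZ
    -- outer Ring.inverse
    have hinv_cd : ContDiffAt ℝ (k + 1) (Ring.inverse : (E →L[ℝ] E) → (E →L[ℝ] E))
        ((A.toUnit : (E →L[ℝ] E)ˣ) : E →L[ℝ] E) := contDiffAt_ringInverse ℝ A.toUnit
    obtain ⟨T, hTo, hAT, hcdInv⟩ := contDiffAt_nbhd hinv_cd
    have houter0 : CkAlphaNear k α (Ring.inverse : (E →L[ℝ] E) → (E →L[ℝ] E))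
        ((A.toUnit : (E →L[ℝ] E)ˣ) : E →L[ℝ] E) :=
      ckAlphaNear_of_contDiffOn_succ hTo hAT hcdInv hα0 hα1
    have hpt : ((fderiv ℝ Z) ∘ W) (Z x₀) = ((A.toUnit : (E →L[ℝ] E)ˣ) : E →L[ℝ] E) := by
      show fderiv ℝ Z (W (Z x₀)) = _
      rw [hW0, hdZ.fderiv]; rfl
    have houter : CkAlphaNear k α (Ring.inverse : (E →L[ℝ] E) → (E →L[ℝ] E))
        (((fderiv ℝ Z) ∘ W) (Z x₀)) := by rwa [hpt]
    have hcomp : CkAlphaNear k α ((Ring.inverse : (E →L[ℝ] E) → (E →L[ℝ] E))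
        ∘ ((fderiv ℝ Z) ∘ W)) (Z x₀) := CkAlphaNear.comp hk1 hα0 hα1 houter hinner
    have hfw : CkAlphaNear k α (fderiv ℝ W) (Z x₀) :=
      CkAlphaNear.congr hcomp (hev.mono (fun y hy => hy))
    obtain ⟨V, hVo, hxV, hcdW'⟩ := contDiffAt_nbhd hWat
    refine ⟨W, hW0, hWc, hleft, hright, ?_⟩
    refine ckAlphaNear_of_fderiv hVo hxV (hcdW'.differentiableOn ?_) hfw
    simp

end PartD

section PartE1

variable {E F G : Type*} [NormedAddCommGroup E] [NormedSpace ℝ E]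
  [NormedAddCommGroup F] [NormedSpace ℝ F] [NormedAddCommGroup G] [NormedSpace ℝ G]
variable {k : ℕ} {α : ℝ}

/-- CLE maps are `C^{k,α}` everywhere. -/
lemma cle_ckAlphaNear [FiniteDimensional ℝ E] (hα0 : 0 ≤ α) (hα1 : α ≤ 1)
    (A : E ≃L[ℝ] F) (p : E) : CkAlphaNear k α (⇑A) p :=
  ckAlphaNear_of_contDiffOn_succ isOpen_univ (mem_univ p)
    ((A.contDiff (n := (k:ℕ) + 1)).contDiffOn) hα0 hα1

/-- Local inverses of `C^{k,α}` maps between different spaces. -/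
theorem inv_general [FiniteDimensional ℝ E] [FiniteDimensional ℝ F] (hk : 1 ≤ k)
    (hα0 : 0 ≤ α) (hα1 : α ≤ 1) {Z : E → F} {x₀ : E} (A : E ≃L[ℝ] F)
    (hZ : CkAlphaNear k α Z x₀) (hdZ : HasFDerivAt Z (A : E →L[ℝ] F) x₀) :
    ∃ W : F → E, W (Z x₀) = x₀ ∧ ContinuousAt W (Z x₀) ∧
      (∀ᶠ x in 𝓝 x₀, W (Z x) = x) ∧ (∀ᶠ y in 𝓝 (Z x₀), Z (W y) = y) ∧
      CkAlphaNear k α W (Z x₀) := by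
  have hZ' : CkAlphaNear k α (⇑A.symm ∘ Z) x₀ :=
    CkAlphaNear.comp hk hα0 hα1 (cle_ckAlphaNear hα0 hα1 A.symm (Z x₀)) hZ
  have hd0 : HasFDerivAt (⇑A.symm ∘ Z)
      ((A.symm : F →L[ℝ] E).comp (A : E →L[ℝ] F)) x₀ :=
    (A.symm.hasFDerivAt (x := Z x₀)).comp x₀ hdZ
  have hcoe : ((A.trans A.symm : E ≃L[ℝ] E) : E →L[ℝ] E)
      = (A.symm : F →L[ℝ] E).comp (A : E →L[ℝ] F) := by
    ext v; simp
  have hd : HasFDerivAt (⇑A.symm ∘ Z) ((A.trans A.symm : E ≃L[ℝ] E) : E →L[ℝ] E) x₀ := by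
    rw [hcoe]; exact hd0
  obtain ⟨W', hW'0, hW'c, hleft', hright', hW'k⟩ :=
    inv_core hα0 hα1 k hk (⇑A.symm ∘ Z) x₀ (A.trans A.symm) hZ' hd
  refine ⟨W' ∘ ⇑A.symm, hW'0, ?_, hleft'.mono (fun x hx => hx), ?_, ?_⟩
  · have hW'c' : ContinuousAt W' (A.symm (Z x₀)) := hW'c
    exact hW'c'.comp A.symm.continuous.continuousAt
  · have ht : Tendsto (⇑A.symm) (𝓝 (Z x₀)) (𝓝 (A.symm (Z x₀))) :=
      A.symm.continuous.continuousAt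
    have hev : ∀ᶠ y in 𝓝 (Z x₀), (⇑A.symm ∘ Z) (W' (A.symm y)) = A.symm y :=
      ht.eventually hright'
    exact hev.mono (fun y hy => A.symm.injective hy)
  · exact CkAlphaNear.comp hk hα0 hα1 hW'k (cle_ckAlphaNear hα0 hα1 A.symm (Z x₀))

/-- The affine map `y ↦ c - y`. -/
def constSubAff (c : E) : E →ᵃ[ℝ] E where
  toFun := fun y => c - y
  linear := -LinearMap.id
  map_vadd' := by
    intro p v
    show c - (v + p) = -v + (c - p)
    abel

/-- An interior critical point of a convex function on `ℝⁿ` is a global minimum. -/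
lemma convexOn_isMin {F₀ : E → ℝ} (hconv : ConvexOn ℝ Set.univ F₀) {y₀ : E}
    (hd : HasFDerivAt F₀ (0 : E →L[ℝ] ℝ) y₀) : ∀ y, F₀ y₀ ≤ F₀ y := by
  intro y
  set φ : ℝ → ℝ := fun t => F₀ (t • (y - y₀) + y₀) with hφ
  have hφconv : ConvexOn ℝ Set.univ φ := by
    have h1 := hconv.comp_affineMap (AffineMap.lineMap y₀ y : ℝ →ᵃ[ℝ] E)
    rw [Set.preimage_univ] at h1
    have h2 : (F₀ ∘ ⇑(AffineMap.lineMap y₀ y : ℝ →ᵃ[ℝ] E)) = φ := by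
      funext t
      rw [Function.comp_apply, AffineMap.lineMap_apply_module]
      show F₀ _ = F₀ _
      congr 1
      module
    rwa [h2] at h1
  have hline : HasDerivAt (fun t : ℝ => t • (y - y₀) + y₀) (y - y₀) 0 := by
    simpa using ((hasDerivAt_id (0:ℝ)).smul_const (y - y₀)).add_const y₀
  have h00 : (0:ℝ) • (y - y₀) + y₀ = y₀ := by simp
  have hd' : HasFDerivAt F₀ (0 : E →L[ℝ] ℝ) ((0:ℝ) • (y - y₀) + y₀) := h00.symm ▸ hd
  have hder : HasDerivAt φ 0 0 := by
    have := hd'.comp_hasDerivAt 0 hline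
    simp at this; exact this
  have hsl := hφconv.le_slope_of_hasDerivAt (mem_univ (0:ℝ)) (mem_univ (1:ℝ)) zero_lt_one hder
  have hφ0 : φ 0 = F₀ y₀ := by rw [hφ]; simp
  have hφ1 : φ 1 = F₀ y := by rw [hφ]; simp
  have : slope φ 0 1 = φ 1 - φ 0 := by
    rw [slope_def_field]; simp
  rw [this, hφ0, hφ1] at hsl
  linarith

end PartE1

end Stmt5Aux

set_option maxHeartbeats 2000000 in
open Stmt5Aux in
/-- Lemma 2.2 of the paper (last part). If `Hess f|₀ > 0` and both `f` and
`h = f □ g` are `C^{k,α}` near `0`, then so is `g`. -/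
theorem stmt5 (n : ℕ) (hn : 1 ≤ n) (k : ℕ) (hk : 2 ≤ k) (α : ℝ) (hα : α ∈ Icc (0:ℝ) 1)
    (f g : EuclideanSpace ℝ (Fin n) → ℝ)
    (hfnn : ∀ x, 0 ≤ f x) (hgnn : ∀ x, 0 ≤ g x)
    (hfconv : ConvexOn ℝ Set.univ f) (hgconv : ConvexOn ℝ Set.univ g)
    (hfC2 : ∃ V ∈ 𝓝 (0 : EuclideanSpace ℝ (Fin n)), ContDiffOn ℝ 2 f V)
    (hgC2 : ∃ V ∈ 𝓝 (0 : EuclideanSpace ℝ (Fin n)), ContDiffOn ℝ 2 g V)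
    (hf0 : f 0 = 0) (hg0 : g 0 = 0)
    (hfpos : ∀ v : EuclideanSpace ℝ (Fin n), v ≠ 0 →
      0 < iteratedFDeriv ℝ 2 f 0 ![v, v])
    (hfkα : CkAlphaNear k α f 0) (hhkα : CkAlphaNear k α (infConv f g) 0) :
    CkAlphaNear k α g 0 := by
  classical
  obtain ⟨m, rfl⟩ : ∃ m, k = m + 1 := ⟨k - 1, by omega⟩
  have hm1 : 1 ≤ m := by omega
  have hα0 : 0 ≤ α := hα.1
  have hα1 : α ≤ 1 := hα.2
  set h : EuclideanSpace ℝ (Fin n) → ℝ := infConv f g with hhdef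
  -- basic infConv facts
  have hbdd : ∀ x : (EuclideanSpace ℝ (Fin n)), BddBelow (Set.range fun y => f y + g (x - y)) := fun x =>
    ⟨0, by rintro u ⟨y, rfl⟩; exact add_nonneg (hfnn y) (hgnn _)⟩
  have hh_le : ∀ x w : (EuclideanSpace ℝ (Fin n)), h x ≤ f (x - w) + g w := by
    intro x w
    have h1 := ciInf_le (hbdd x) (x - w)
    rwa [sub_sub_cancel] at h1
  have hhnn : ∀ x : (EuclideanSpace ℝ (Fin n)), 0 ≤ h x := fun x => le_ciInf (fun y => add_nonneg (hfnn y) (hgnn _))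
  have hh0 : h 0 = 0 := by
    refine le_antisymm ?_ (hhnn 0)
    have := hh_le 0 0
    simpa [hf0, hg0] using this
  -- C² neighborhoods
  obtain ⟨Vf, hVf, hfC2'⟩ := hfC2
  obtain ⟨Uf, hUfsub, hUfo, h0Uf⟩ := mem_nhds_iff.1 hVf
  have hfC2o : ContDiffOn ℝ 2 f Uf := hfC2'.mono hUfsub
  obtain ⟨Vg, hVg, hgC2'⟩ := hgC2
  obtain ⟨Ug, hUgsub, hUgo, h0Ug⟩ := mem_nhds_iff.1 hVg
  have hgC2o : ContDiffOn ℝ 2 g Ug := hgC2'.mono hUgsub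
  obtain ⟨Uh, hUho, h0Uh, hhCk, _⟩ := id hhkα
  have h21 : (2 : WithTop ℕ∞) = 1 + 1 := by norm_num
  have hfd1 : ContDiffOn ℝ 1 (fderiv ℝ f) Uf :=
    ((contDiffOn_succ_iff_fderiv_of_isOpen hUfo (n := 1)).1 (h21 ▸ hfC2o)).2.2
  have hgd1 : ContDiffOn ℝ 1 (fderiv ℝ g) Ug :=
    ((contDiffOn_succ_iff_fderiv_of_isOpen hUgo (n := 1)).1 (h21 ▸ hgC2o)).2.2
  have hfdiff : ∀ x ∈ Uf, DifferentiableAt ℝ f x := fun x hx =>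
    (hfC2o.contDiffAt (hUfo.mem_nhds hx)).differentiableAt (by norm_num)
  have hgdiff : ∀ x ∈ Ug, DifferentiableAt ℝ g x := fun x hx =>
    (hgC2o.contDiffAt (hUgo.mem_nhds hx)).differentiableAt (by norm_num)
  have hhdiff : ∀ x ∈ Uh, DifferentiableAt ℝ h x := fun x hx =>
    (hhCk.contDiffAt (hUho.mem_nhds hx)).differentiableAt
      (by simp)
  -- gradients vanish at 0
  have hminf : IsLocalMin f 0 := Filter.Eventually.of_forall (fun x => by rw [hf0]; exact hfnn x)
  have hdf0 : fderiv ℝ f 0 = 0 := hminf.fderiv_eq_zero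
  have hming : IsLocalMin g 0 := Filter.Eventually.of_forall (fun x => by rw [hg0]; exact hgnn x)
  have hdg0 : fderiv ℝ g 0 = 0 := hming.fderiv_eq_zero
  have hminh : IsLocalMin h 0 := Filter.Eventually.of_forall (fun x => by rw [hh0]; exact hhnn x)
  have hdh0 : fderiv ℝ h 0 = 0 := hminh.fderiv_eq_zero
  have hgdc : ContinuousAt (fderiv ℝ g) 0 := hgd1.continuousOn.continuousAt (hUgo.mem_nhds h0Ug)
  -- positive-definite Hessian gives a continuous linear equivalence
  set A' : (EuclideanSpace ℝ (Fin n)) →L[ℝ] ((EuclideanSpace ℝ (Fin n)) →L[ℝ] ℝ) := fderiv ℝ (fderiv ℝ f) 0 with hA'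
  have hker : ∀ v : (EuclideanSpace ℝ (Fin n)), A' v = 0 → v = 0 := by
    intro v hv
    by_contra hne
    have hpos := hfpos v hne
    have : iteratedFDeriv ℝ 2 f 0 ![v, v] = A' v v := by
      rw [iteratedFDeriv_two_apply]
      simp [hA']
    rw [this, hv] at hpos
    simp at hpos
  have hinj : Function.Injective ⇑A' := by
    intro a b hab
    have : A' (a - b) = 0 := by rw [map_sub, hab, sub_self]
    have := hker _ this
    exact sub_eq_zero.1 this
  have hfin : Module.finrank ℝ (EuclideanSpace ℝ (Fin n)) = Module.finrank ℝ ((EuclideanSpace ℝ (Fin n)) →L[ℝ] ℝ) := by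
    rw [← (LinearMap.toContinuousLinearMap (𝕜 := ℝ) (E := EuclideanSpace ℝ (Fin n)) (F' := ℝ)).finrank_eq,
      Module.finrank_linearMap, Module.finrank_self, mul_one]
  set X : (EuclideanSpace ℝ (Fin n)) ≃L[ℝ] ((EuclideanSpace ℝ (Fin n)) →L[ℝ] ℝ) :=
    LinearEquiv.toContinuousLinearEquiv
      (LinearMap.linearEquivOfInjective (A' : (EuclideanSpace ℝ (Fin n)) →ₗ[ℝ] ((EuclideanSpace ℝ (Fin n)) →L[ℝ] ℝ)) hinj hfin) with hXdef
  have hX : (X : (EuclideanSpace ℝ (Fin n)) →L[ℝ] ((EuclideanSpace ℝ (Fin n)) →L[ℝ] ℝ)) = A' := by ext v; rfl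
  have hfd_diff : DifferentiableAt ℝ (fderiv ℝ f) 0 :=
    (hfd1.contDiffAt (hUfo.mem_nhds h0Uf)).differentiableAt (by norm_num)
  have hdZf : HasFDerivAt (fderiv ℝ f) (X : (EuclideanSpace ℝ (Fin n)) →L[ℝ] ((EuclideanSpace ℝ (Fin n)) →L[ℝ] ℝ)) 0 := by
    have h0 : HasFDerivAt (fderiv ℝ f) A' 0 := hfd_diff.hasFDerivAt
    rwa [← hX] at h0
  have hfk' : CkAlphaNear m α (fderiv ℝ f) 0 := CkAlphaNear.fderiv_ck hfkα
  obtain ⟨N, hN0, hNc, hNleft, hNright, hNk⟩ := inv_general hm1 hα0 hα1 X hfk' hdZf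
  rw [hdf0] at hN0 hNc hNright hNk
  -- fderiv of h
  have hdh_k : CkAlphaNear m α (fderiv ℝ h) 0 := CkAlphaNear.fderiv_ck hhkα
  -- z
  set z : (EuclideanSpace ℝ (Fin n)) → (EuclideanSpace ℝ (Fin n)) := fun x => x - N (fderiv ℝ h x) with hzdef
  have hNk' : CkAlphaNear m α N (fderiv ℝ h 0) := by rwa [hdh0]
  have hNh : CkAlphaNear m α (N ∘ fderiv ℝ h) 0 := CkAlphaNear.comp hm1 hα0 hα1 hNk' hdh_k
  have hidk : CkAlphaNear m α (fun x : (EuclideanSpace ℝ (Fin n)) => x) 0 :=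
    ckAlphaNear_of_contDiffOn_succ isOpen_univ (mem_univ 0) contDiff_id.contDiffOn hα0 hα1
  have hzk : CkAlphaNear m α z 0 := CkAlphaNear.sub hidk hNh
  -- T
  set T : (EuclideanSpace ℝ (Fin n)) → (EuclideanSpace ℝ (Fin n)) := fun w => w + N (fderiv ℝ g w) with hTdef
  have hNc0 : ContinuousAt N (fderiv ℝ g 0) := by rwa [hdg0]
  have hTc : ContinuousAt T 0 := continuousAt_id.add (hNc0.comp hgdc)
  have hT0 : T 0 = 0 := by rw [hTdef]; simp [hdg0, hN0]
  have hTtd : Tendsto T (𝓝 0) (𝓝 0) := by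
    have := hTc.tendsto; rwa [hT0] at this
  have hNgc : ContinuousAt (fun w : (EuclideanSpace ℝ (Fin n)) => N (fderiv ℝ g w)) 0 := hNc0.comp hgdc
  have hytd : Tendsto (fun w : (EuclideanSpace ℝ (Fin n)) => N (fderiv ℝ g w)) (𝓝 0) (𝓝 0) := by
    have h1 := hNgc.tendsto
    rwa [show N (fderiv ℝ g 0) = 0 by rw [hdg0, hN0]] at h1
  have hgdtd : Tendsto (fderiv ℝ g) (𝓝 (0:(EuclideanSpace ℝ (Fin n)))) (𝓝 0) := by
    have := hgdc.tendsto; rwa [hdg0] at this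
  have ev1 : ∀ᶠ w in 𝓝 (0:(EuclideanSpace ℝ (Fin n))), fderiv ℝ f (N (fderiv ℝ g w)) = fderiv ℝ g w :=
    hgdtd.eventually hNright
  have ev2 : ∀ᶠ w in 𝓝 (0:(EuclideanSpace ℝ (Fin n))), N (fderiv ℝ g w) ∈ Uf :=
    hytd.eventually (hUfo.eventually_mem h0Uf)
  have ev3 : ∀ᶠ w in 𝓝 (0:(EuclideanSpace ℝ (Fin n))), w ∈ Ug := hUgo.eventually_mem h0Ug
  have ev4 : ∀ᶠ w in 𝓝 (0:(EuclideanSpace ℝ (Fin n))), T w ∈ Uh := hTtd.eventually (hUho.eventually_mem h0Uh)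
  -- the infimum is attained at N (fderiv g w)
  have evMin : ∀ᶠ w in 𝓝 (0:(EuclideanSpace ℝ (Fin n))), h (T w) = f (N (fderiv ℝ g w)) + g w := by
    filter_upwards [ev1, ev2, ev3] with w h1 h2 h3
    have hTsub : T w - N (fderiv ℝ g w) = w := by
      rw [hTdef]; exact add_sub_cancel_right w _
    have hTw : T w - w = N (fderiv ℝ g w) := by
      rw [hTdef]; exact add_sub_cancel_left w _
    refine le_antisymm ?_ ?_
    · have := hh_le (T w) w
      rwa [hTw] at this
    · refine le_ciInf (fun y => ?_)
      have hconvF : ConvexOn ℝ Set.univ (fun y : (EuclideanSpace ℝ (Fin n)) => f y + g (T w - y)) := by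
        refine hfconv.add ?_
        have hc := hgconv.comp_affineMap (constSubAff (T w))
        rw [Set.preimage_univ] at hc
        exact hc
      have hι : HasFDerivAt (fun y : (EuclideanSpace ℝ (Fin n)) => T w - y) (-(ContinuousLinearMap.id ℝ (EuclideanSpace ℝ (Fin n))))
          (N (fderiv ℝ g w)) := (hasFDerivAt_id _).const_sub (T w)
      have hgd' : HasFDerivAt g (fderiv ℝ g w) (T w - N (fderiv ℝ g w)) := by
        rw [hTsub]; exact (hgdiff w h3).hasFDerivAt
      have hgcomp : HasFDerivAt (fun y : (EuclideanSpace ℝ (Fin n)) => g (T w - y))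
          ((fderiv ℝ g w).comp (-(ContinuousLinearMap.id ℝ (EuclideanSpace ℝ (Fin n))))) (N (fderiv ℝ g w)) :=
        hgd'.comp _ hι
      have hfd : HasFDerivAt f (fderiv ℝ f (N (fderiv ℝ g w))) (N (fderiv ℝ g w)) :=
        (hfdiff _ h2).hasFDerivAt
      have hsum := hfd.add hgcomp
      have hzero : fderiv ℝ f (N (fderiv ℝ g w))
          + (fderiv ℝ g w).comp (-(ContinuousLinearMap.id ℝ (EuclideanSpace ℝ (Fin n)))) = 0 := by
        ext v
        simp [h1]
      rw [hzero] at hsum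
      have hmin := convexOn_isMin hconvF hsum y
      rwa [hTsub] at hmin
  -- gradient identity
  have evGrad : ∀ᶠ w in 𝓝 (0:(EuclideanSpace ℝ (Fin n))), fderiv ℝ h (T w) = fderiv ℝ g w := by
    filter_upwards [evMin, ev1, ev2, ev4] with w hmin h1 h2 h4
    have hTw : T w - w = N (fderiv ℝ g w) := by
      rw [hTdef]; exact add_sub_cancel_left w _
    set φ : (EuclideanSpace ℝ (Fin n)) → ℝ := fun x => f (x - w) + g w - h x with hφdef
    have hφ0 : φ (T w) = 0 := by
      rw [hφdef]; simp only [hTw, hmin]; ring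
    have hφnn : ∀ x, 0 ≤ φ x := fun x => by
      rw [hφdef]; simp only; linarith [hh_le x w]
    have hminφ : IsLocalMin φ (T w) :=
      Filter.Eventually.of_forall (fun x => by rw [hφ0]; exact hφnn x)
    have hι : HasFDerivAt (fun x : (EuclideanSpace ℝ (Fin n)) => x - w) (ContinuousLinearMap.id ℝ (EuclideanSpace ℝ (Fin n))) (T w) :=
      (hasFDerivAt_id (T w)).sub_const w
    have hfd : HasFDerivAt f (fderiv ℝ f (N (fderiv ℝ g w))) (T w - w) := by
      rw [hTw]; exact (hfdiff _ h2).hasFDerivAt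
    have hfcomp : HasFDerivAt (fun x : (EuclideanSpace ℝ (Fin n)) => f (x - w))
        ((fderiv ℝ f (N (fderiv ℝ g w))).comp (ContinuousLinearMap.id ℝ (EuclideanSpace ℝ (Fin n)))) (T w) :=
      hfd.comp (T w) hι
    have hhd : HasFDerivAt h (fderiv ℝ h (T w)) (T w) := (hhdiff (T w) h4).hasFDerivAt
    have hφd : HasFDerivAt φ
        ((fderiv ℝ f (N (fderiv ℝ g w))).comp (ContinuousLinearMap.id ℝ (EuclideanSpace ℝ (Fin n)))
          - fderiv ℝ h (T w)) (T w) := (hfcomp.add_const (g w)).sub hhd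
    have hz := hminφ.hasFDerivAt_eq_zero hφd
    have h5 : fderiv ℝ h (T w) = fderiv ℝ f (N (fderiv ℝ g w)) := by
      have h6 := sub_eq_zero.1 hz
      rw [ContinuousLinearMap.comp_id] at h6
      exact h6.symm
    rw [h5, h1]
  -- z ∘ T = id eventually
  have evZT : ∀ᶠ w in 𝓝 (0:(EuclideanSpace ℝ (Fin n))), z (T w) = w := by
    filter_upwards [evGrad] with w h1
    rw [hzdef]
    simp only
    rw [h1, hTdef]
    exact add_sub_cancel_right w _
  have hz0 : z 0 = 0 := by rw [hzdef]; simp [hdh0, hN0]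
  -- invertibility of the derivative of z at 0
  have hNdiff : DifferentiableAt ℝ N 0 :=
    (CkAlphaNear.contDiffAt hNk).differentiableAt (by exact_mod_cast (show m ≠ 0 by omega))
  have hgd_diff : DifferentiableAt ℝ (fderiv ℝ g) 0 :=
    (hgd1.contDiffAt (hUgo.mem_nhds h0Ug)).differentiableAt (by norm_num)
  have hNdiff' : DifferentiableAt ℝ N (fderiv ℝ g 0) := by rwa [hdg0]
  have hNg_diff : DifferentiableAt ℝ (fun w : (EuclideanSpace ℝ (Fin n)) => N (fderiv ℝ g w)) 0 :=
    hNdiff'.comp 0 hgd_diff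
  have hTdiff : DifferentiableAt ℝ T 0 := differentiableAt_id.add hNg_diff
  have hzdiff : DifferentiableAt ℝ z 0 :=
    (CkAlphaNear.contDiffAt hzk).differentiableAt (by exact_mod_cast (show m ≠ 0 by omega))
  have hzdiff' : DifferentiableAt ℝ z (T 0) := by rwa [hT0]
  have hzT_f : fderiv ℝ (z ∘ T) 0 = ContinuousLinearMap.id ℝ (EuclideanSpace ℝ (Fin n)) := by
    have hevid : (z ∘ T) =ᶠ[𝓝 (0:(EuclideanSpace ℝ (Fin n)))] id := evZT.mono (fun w hw => hw)
    rw [hevid.fderiv_eq, fderiv_id]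
  have hchain : (fderiv ℝ z 0).comp (fderiv ℝ T 0) = ContinuousLinearMap.id ℝ (EuclideanSpace ℝ (Fin n)) := by
    rw [← hzT_f]
    have := fderiv_comp 0 hzdiff' hTdiff
    rw [hT0] at this
    exact this.symm
  have hsurj : Function.Surjective ⇑(fderiv ℝ z 0) := fun u => ⟨fderiv ℝ T 0 u, by
    have := ContinuousLinearMap.ext_iff.1 hchain u
    simpa using this⟩
  have hbij : Function.Bijective ⇑((fderiv ℝ z 0 : (EuclideanSpace ℝ (Fin n)) →L[ℝ] (EuclideanSpace ℝ (Fin n))) : (EuclideanSpace ℝ (Fin n)) →ₗ[ℝ] (EuclideanSpace ℝ (Fin n))) :=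
    ⟨LinearMap.injective_iff_surjective.2 hsurj, hsurj⟩
  set Y : (EuclideanSpace ℝ (Fin n)) ≃L[ℝ] (EuclideanSpace ℝ (Fin n)) := LinearEquiv.toContinuousLinearEquiv
    (LinearEquiv.ofBijective ((fderiv ℝ z 0 : (EuclideanSpace ℝ (Fin n)) →L[ℝ] (EuclideanSpace ℝ (Fin n))) : (EuclideanSpace ℝ (Fin n)) →ₗ[ℝ] (EuclideanSpace ℝ (Fin n))) hbij) with hYdef
  have hY : (Y : (EuclideanSpace ℝ (Fin n)) →L[ℝ] (EuclideanSpace ℝ (Fin n))) = fderiv ℝ z 0 := by ext v; rfl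
  have hdz : HasFDerivAt z (Y : (EuclideanSpace ℝ (Fin n)) →L[ℝ] (EuclideanSpace ℝ (Fin n))) 0 := by
    have := hzdiff.hasFDerivAt
    rwa [← hY] at this
  obtain ⟨S, hS0, hSc, hSleft, hSright, hSk⟩ := inv_core hα0 hα1 m hm1 z 0 Y hzk hdz
  rw [hz0] at hS0 hSc hSright hSk
  have evST : ∀ᶠ w in 𝓝 (0:(EuclideanSpace ℝ (Fin n))), S w = T w := by
    filter_upwards [hTtd.eventually hSleft, evZT] with w h1 h2
    conv_lhs => rw [← h2]
    exact h1
  have evg : (fderiv ℝ g) =ᶠ[𝓝 (0:(EuclideanSpace ℝ (Fin n)))] ((fderiv ℝ h) ∘ S) := by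
    filter_upwards [evGrad, evST] with w h1 h2
    show fderiv ℝ g w = fderiv ℝ h (S w)
    rw [h2, h1]
  have hdh_k' : CkAlphaNear m α (fderiv ℝ h) (S 0) := by rwa [hS0]
  have hhS : CkAlphaNear m α ((fderiv ℝ h) ∘ S) 0 :=
    CkAlphaNear.comp hm1 hα0 hα1 hdh_k' hSk
  have hfg : CkAlphaNear m α (fderiv ℝ g) 0 := CkAlphaNear.congr hhS evg
  exact ckAlphaNear_of_fderiv hUgo h0Ug (hgC2o.differentiableOn (by norm_num)) hfg
end
end
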